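/- arXiv:2007.06893 — 5 statements merged into one kernel-verified Lean document; each statement's English description precedes it below -/
import Mathlib

section
/- Let Γ ⊆ Pⁿ be a finite set of d points in linearly general position and let m ≥ 2 be an integer with d ≤ mn. Then the homogeneous ideal I(Γ) is generated by its homogeneous elements of degree at most m. -/
open MvPolynomial

noncomputable section

/-- A set `Γ` in projective `n`-space over `k` is in linearly general position if any
`n+1` or fewer of its points have linearly independent representative vectors. -/
def LinGenPos (k : Type*) [Field k] (n : ℕ)
    (Γ : Set (Projectivization k (Fin (n + 1) → k))) : Prop :=
  ∀ s : Finset (Projectivization k (Fin (n + 1) → k)), ↑s ⊆ Γ → s.card ≤ n + 1 →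
    LinearIndependent k
      (fun p : s => Projectivization.rep (p : Projectivization k (Fin (n + 1) → k)))

/-- The subspace of polynomials vanishing at (fixed representatives of) all points of `Γ`. -/
def evalVanishing (k : Type*) [Field k] (n : ℕ)
    (Γ : Set (Projectivization k (Fin (n + 1) → k))) :
    Submodule k (MvPolynomial (Fin (n + 1)) k) where
  carrier := {F | ∀ P ∈ Γ, eval (Projectivization.rep P) F = 0}
  add_mem' := fun ha hb P hP => by simp [ha P hP, hb P hP]
  zero_mem' := fun P hP => by simp
  smul_mem' := fun c F hF P hP => by simp [smul_eval, hF P hP]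

/-- `I(Γ)_ℓ` : degree-`ℓ` homogeneous polynomials vanishing on `Γ`, as a `k`-subspace. -/
def gradedVanishing (k : Type*) [Field k] (n : ℕ)
    (Γ : Set (Projectivization k (Fin (n + 1) → k))) (ℓ : ℕ) :
    Submodule k (MvPolynomial (Fin (n + 1)) k) :=
  homogeneousSubmodule (Fin (n + 1)) k ℓ ⊓ evalVanishing k n Γ

/-- `I(Γ)` : the (homogeneous) vanishing ideal of `Γ`, i.e. polynomials vanishing
at every vector of every line belonging to `Γ`. -/
def vanishingIdeal (k : Type*) [Field k] (n : ℕ)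
    (Γ : Set (Projectivization k (Fin (n + 1) → k))) :
    Ideal (MvPolynomial (Fin (n + 1)) k) where
  carrier := {F | ∀ P ∈ Γ, ∀ c : k, eval (c • Projectivization.rep P) F = 0}
  add_mem' := fun ha hb P hP c => by simp [ha P hP c, hb P hP c]
  zero_mem' := fun P hP c => by simp
  smul_mem' := fun a F hF P hP c => by simp [smul_eq_mul, hF P hP c]

/-- `Φ(Γ)_ℓ` : completely decomposable degree-`ℓ` elements of `I(Γ)`. -/
def Phi (k : Type*) [Field k] (n : ℕ)
    (Γ : Set (Projectivization k (Fin (n + 1) → k))) (ℓ : ℕ) :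
    Set (MvPolynomial (Fin (n + 1)) k) :=
  {F | F ∈ gradedVanishing k n Γ ℓ ∧
    ∃ h : Fin ℓ → MvPolynomial (Fin (n + 1)) k,
      (∀ i, h i ≠ 0 ∧ (h i).IsHomogeneous 1) ∧ F = ∏ i, h i}

/-- `S₁Φ(Γ)_m` : products of a nonzero linear form with an element of `Φ(Γ)_m`. -/
def S1Phi (k : Type*) [Field k] (n : ℕ)
    (Γ : Set (Projectivization k (Fin (n + 1) → k))) (m : ℕ) :
    Set (MvPolynomial (Fin (n + 1)) k) :=
  {G | ∃ h F, h ≠ 0 ∧ MvPolynomial.IsHomogeneous h 1 ∧ F ∈ Phi k n Γ m ∧ G = h * F}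

/-- `λ_Γ(G)` : the number of points of `Γ` at which `G` vanishes. -/
def lambdaGamma (k : Type*) [Field k] (n : ℕ)
    (Γ : Set (Projectivization k (Fin (n + 1) → k)))
    (G : MvPolynomial (Fin (n + 1)) k) : ℕ :=
  Set.ncard {P ∈ Γ | eval (Projectivization.rep P) G = 0}

namespace LGPProof

variable {k : Type*} [Field k] {n : ℕ}

/-- Evaluation at a point, as a linear map. -/
def evalLin (v : Fin (n + 1) → k) : MvPolynomial (Fin (n + 1)) k →ₗ[k] k where
  toFun F := eval v F
  map_add' := by simp
  map_smul' := by simp [smul_eval]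

@[simp] lemma evalLin_apply (v : Fin (n + 1) → k) (F : MvPolynomial (Fin (n + 1)) k) :
    evalLin v F = eval v F := rfl

lemma degree_add (a b : Fin (n + 1) →₀ ℕ) : (a + b).degree = a.degree + b.degree := by
  simp [Finsupp.degree_eq_weight_one, map_add]

lemma degree_single (i : Fin (n + 1)) : (Finsupp.single i 1).degree = 1 := by
  exact Finsupp.degree_single i 1

/-- A Finsupp of degree 1 is a single. -/
lemma degree_one_single (β : Fin (n + 1) →₀ ℕ) (h : β.degree = 1) :
    ∃ i, β = Finsupp.single i 1 := by
  have hne : β ≠ 0 := by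
    intro h0
    rw [h0, map_zero] at h
    omega
  obtain ⟨i, hi⟩ := Finsupp.ne_iff.mp hne
  simp only [Finsupp.coe_zero, Pi.zero_apply] at hi
  have his : i ∈ β.support := Finsupp.mem_support_iff.mpr hi
  refine ⟨i, ?_⟩
  have hsum : ∑ j ∈ β.support, β j = 1 := h
  have h1 : β i = 1 := by
    have h2 : β i ≤ 1 := by
      calc β i ≤ ∑ j ∈ β.support, β j := Finset.single_le_sum (by intros; omega) his
      _ = 1 := hsum
    omega
  ext j
  rw [Finsupp.single_apply]
  by_cases hji : i = j
  · subst hji; simp [h1]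
  · rw [if_neg hji]
    by_contra hj0
    have hjs : j ∈ β.support := Finsupp.mem_support_iff.mpr hj0
    have hle : β i + β j ≤ ∑ l ∈ β.support, β l := by
      have hsub : ({i, j} : Finset (Fin (n+1))) ⊆ β.support := by
        intro x hx
        simp only [Finset.mem_insert, Finset.mem_singleton] at hx
        rcases hx with rfl | rfl <;> assumption
      calc β i + β j = ∑ l ∈ ({i, j} : Finset (Fin (n+1))), β l := by
            rw [Finset.sum_pair hji]
        _ ≤ _ := Finset.sum_le_sum_of_subset hsub
    omega

/-- eval of a homogeneous polynomial at a scaled point. -/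
lemma eval_smul_of_isHomogeneous {F : MvPolynomial (Fin (n + 1)) k} {e : ℕ}
    (h : F.IsHomogeneous e) (c : k) (v : Fin (n + 1) → k) :
    eval (c • v) F = c ^ e * eval v F := by
  conv_lhs => rw [F.as_sum]
  conv_rhs => rw [F.as_sum]
  rw [map_sum, map_sum, Finset.mul_sum]
  apply Finset.sum_congr rfl
  intro α hα
  have hdeg : α.degree = e := by
    by_contra hd
    exact (mem_support_iff.mp hα) (h.coeff_eq_zero hd)
  rw [eval_monomial, eval_monomial]
  have : (α.prod fun i l => (c • v) i ^ l) = c ^ e * α.prod fun i l => v i ^ l := by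
    rw [Finsupp.prod, Finsupp.prod]
    simp only [Pi.smul_apply, smul_eq_mul, mul_pow]
    rw [Finset.prod_mul_distrib, Finset.prod_pow_eq_pow_sum]
    rw [← hdeg]; rfl
  rw [this]; ring




/-- The linear polynomial associated to a linear functional. -/
def linOfFun (f : (Fin (n + 1) → k) →ₗ[k] k) : MvPolynomial (Fin (n + 1)) k :=
  ∑ i, C (f (Pi.single i 1)) * X i

lemma linOfFun_isHomogeneous (f : (Fin (n + 1) → k) →ₗ[k] k) :
    (linOfFun f).IsHomogeneous 1 :=
  IsHomogeneous.sum _ _ _ fun i _ => isHomogeneous_C_mul_X _ i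

lemma eval_linOfFun (f : (Fin (n + 1) → k) →ₗ[k] k) (v : Fin (n + 1) → k) :
    eval v (linOfFun f) = f v := by
  rw [linOfFun, map_sum]
  have hv : v = ∑ i, Pi.single i (v i) := by
    rw [Finset.univ_sum_single]
  conv_rhs => rw [hv]
  rw [map_sum]
  apply Finset.sum_congr rfl
  intro i _
  have hsingle : (Pi.single i (v i) : Fin (n + 1) → k)
      = (v i) • (Pi.single i (1 : k) : Fin (n + 1) → k) := by
    rw [← Pi.single_smul, smul_eq_mul, mul_one]
  rw [hsingle, map_smul]
  simp [smul_eq_mul, mul_comm]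

lemma linOfFun_add (f g : (Fin (n + 1) → k) →ₗ[k] k) :
    linOfFun (f + g) = linOfFun f + linOfFun g := by
  rw [linOfFun, linOfFun, linOfFun, ← Finset.sum_add_distrib]
  apply Finset.sum_congr rfl
  intro i _
  simp [add_mul]

lemma linOfFun_smul (c : k) (f : (Fin (n + 1) → k) →ₗ[k] k) :
    linOfFun (c • f) = c • linOfFun f := by
  rw [linOfFun, linOfFun, Finset.smul_sum]
  apply Finset.sum_congr rfl
  intro i _
  simp [smul_eq_C_mul, mul_assoc]

/-- Structure of homogeneous degree-1 polynomials. -/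
lemma homog1_structure {x : MvPolynomial (Fin (n + 1)) k} (hx : x.IsHomogeneous 1) :
    x = ∑ i, (monomial (Finsupp.single i 1)) (coeff (Finsupp.single i 1) x) := by
  apply MvPolynomial.ext
  intro β
  rw [MvPolynomial.coeff_sum]
  by_cases hβ : ∃ i, β = Finsupp.single i 1
  · obtain ⟨i, rfl⟩ := hβ
    rw [Finset.sum_eq_single_of_mem i (Finset.mem_univ i)]
    · rw [coeff_monomial, if_pos rfl]
    · intro j _ hji
      rw [coeff_monomial, if_neg]
      intro hc
      exact hji (by
        have := (Finsupp.single_left_inj (one_ne_zero (α := ℕ))).mp hc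
        exact this)
  · push_neg at hβ
    have h0 : coeff β x = 0 := by
      apply hx.coeff_eq_zero
      intro hd
      obtain ⟨i, hi⟩ := degree_one_single β hd
      exact hβ i hi
    rw [h0]
    symm
    apply Finset.sum_eq_zero
    intro j _
    rw [coeff_monomial, if_neg]
    intro hc
    exact hβ j hc.symm

lemma eval_homog1 {x : MvPolynomial (Fin (n + 1)) k} (hx : x.IsHomogeneous 1)
    (v : Fin (n + 1) → k) :
    eval v x = ∑ i, coeff (Finsupp.single i 1) x * v i := by
  conv_lhs => rw [homog1_structure hx]
  rw [map_sum]
  apply Finset.sum_congr rfl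
  intro i _
  rw [eval_monomial]
  rw [Finsupp.prod_single_index]
  · rw [pow_one]
  · rw [pow_zero]

/-- The functional associated to a homogeneous degree 1 polynomial. -/
def funOfLin (x : MvPolynomial (Fin (n + 1)) k) : (Fin (n + 1) → k) →ₗ[k] k :=
  ∑ i, coeff (Finsupp.single i 1) x • LinearMap.proj i

lemma funOfLin_apply (x : MvPolynomial (Fin (n + 1)) k) (v : Fin (n + 1) → k) :
    funOfLin x v = ∑ i, coeff (Finsupp.single i 1) x * v i := by
  rw [funOfLin]
  simp [LinearMap.proj]

lemma funOfLin_eval {x : MvPolynomial (Fin (n + 1)) k} (hx : x.IsHomogeneous 1)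
    (v : Fin (n + 1) → k) : funOfLin x v = eval v x := by
  rw [funOfLin_apply, eval_homog1 hx]

lemma linOfFun_funOfLin {x : MvPolynomial (Fin (n + 1)) k} (hx : x.IsHomogeneous 1) :
    linOfFun (funOfLin x) = x := by
  rw [linOfFun]
  conv_rhs => rw [homog1_structure hx]
  apply Finset.sum_congr rfl
  intro i _
  rw [funOfLin_apply]
  rw [Finset.sum_eq_single_of_mem i (Finset.mem_univ i)]
  · simp only [Pi.single_eq_same, mul_one]
    rw [C_mul_X_eq_monomial]
  · intro j _ hji
    rw [Pi.single_eq_of_ne hji, mul_zero]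

/-- From a linearly independent finite family, a functional that is 1 at one vector
and 0 at the others. -/
lemma exists_sep_functional (s : Finset (Projectivization k (Fin (n + 1) → k)))
    (hli : LinearIndependent k
      (fun p : s => Projectivization.rep (p : Projectivization k (Fin (n + 1) → k))))
    (P : Projectivization k (Fin (n + 1) → k)) (hP : P ∈ s) :
    ∃ f : (Fin (n + 1) → k) →ₗ[k] k, f P.rep = 1 ∧ ∀ Q ∈ s, Q ≠ P → f Q.rep = 0 := by
  classical
  set v : s → (Fin (n + 1) → k) :=
    fun p => Projectivization.rep (p : Projectivization k (Fin (n + 1) → k)) with hv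
  let b : Module.Basis s k (Submodule.span k (Set.range v)) := Module.Basis.span hli
  obtain ⟨g, hg⟩ := LinearMap.exists_extend (b.coord ⟨P, hP⟩)
  refine ⟨g, ?_, ?_⟩
  · have hmem : P.rep ∈ Submodule.span k (Set.range v) :=
      Submodule.subset_span ⟨⟨P, hP⟩, rfl⟩
    have : (⟨P.rep, hmem⟩ : Submodule.span k (Set.range v)) = b ⟨P, hP⟩ := by
      apply Subtype.ext
      rw [Module.Basis.span_apply]
    have hgP : g P.rep = b.coord ⟨P, hP⟩ ⟨P.rep, hmem⟩ := by
      conv_lhs => rw [show P.rep = (Submodule.span k (Set.range v)).subtype ⟨P.rep, hmem⟩ from rfl]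
      rw [← LinearMap.comp_apply, hg]
    rw [hgP, this, Module.Basis.coord_apply, Module.Basis.repr_self]
    simp
  · intro Q hQ hQP
    have hmem : Q.rep ∈ Submodule.span k (Set.range v) :=
      Submodule.subset_span ⟨⟨Q, hQ⟩, rfl⟩
    have heq : (⟨Q.rep, hmem⟩ : Submodule.span k (Set.range v)) = b ⟨Q, hQ⟩ := by
      apply Subtype.ext
      rw [Module.Basis.span_apply]
    have hgQ : g Q.rep = b.coord ⟨P, hP⟩ ⟨Q.rep, hmem⟩ := by
      conv_lhs => rw [show Q.rep = (Submodule.span k (Set.range v)).subtype ⟨Q.rep, hmem⟩ from rfl]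
      rw [← LinearMap.comp_apply, hg]
    rw [hgQ, heq, Module.Basis.coord_apply, Module.Basis.repr_self]
    rw [Finsupp.single_apply, if_neg]
    intro hc
    exact hQP (congrArg Subtype.val hc)

variable {Γ : Set (Projectivization k (Fin (n + 1) → k))}

/-- A linear form vanishing on at most `n` points of `Γ` and taking value 1 at `P`. -/
lemma exists_sep_linear (hlgp : LinGenPos k n Γ)
    (s : Finset (Projectivization k (Fin (n + 1) → k))) (hs : ↑s ⊆ Γ) (hcard : s.card ≤ n)
    (P : Projectivization k (Fin (n + 1) → k)) (hPΓ : P ∈ Γ) (hPs : P ∉ s) :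
    ∃ x : MvPolynomial (Fin (n + 1)) k, x.IsHomogeneous 1 ∧
      (∀ Q ∈ s, eval Q.rep x = 0) ∧ eval P.rep x = 1 := by
  classical
  have hsub : ↑(insert P s) ⊆ Γ := by
    intro Q hQ
    simp only [Finset.coe_insert, Set.mem_insert_iff] at hQ
    rcases hQ with rfl | hQ
    · exact hPΓ
    · exact hs hQ
  have hcard' : (insert P s).card ≤ n + 1 := by
    calc (insert P s).card ≤ s.card + 1 := Finset.card_insert_le _ _
      _ ≤ n + 1 := by omega
  have hli := hlgp (insert P s) hsub hcard'
  obtain ⟨f, hf1, hf0⟩ := exists_sep_functional (insert P s) hli P (Finset.mem_insert_self P s)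
  refine ⟨linOfFun f, linOfFun_isHomogeneous f, ?_, ?_⟩
  · intro Q hQ
    rw [eval_linOfFun]
    exact hf0 Q (Finset.mem_insert_of_mem hQ) (fun h => hPs (h ▸ hQ))
  · rw [eval_linOfFun]; exact hf1

/-- Separating form of degree `e` : vanishing on `s` (of size at most `e * n`), value 1 at `P`. -/
lemma exists_sep (hlgp : LinGenPos k n Γ) (e : ℕ) :
    ∀ s : Finset (Projectivization k (Fin (n + 1) → k)), ↑s ⊆ Γ → s.card ≤ e * n →
    ∀ P, P ∈ Γ → P ∉ s →
    ∃ w : MvPolynomial (Fin (n + 1)) k, w.IsHomogeneous e ∧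
      (∀ Q ∈ s, eval Q.rep w = 0) ∧ eval P.rep w = 1 := by
  classical
  induction e with
  | zero =>
    intro s hs hcard P hPΓ hPs
    have : s = ∅ := Finset.card_eq_zero.mp (by omega)
    subst this
    exact ⟨1, isHomogeneous_one _ _, by simp, by simp⟩
  | succ e ih =>
    intro s hs hcard P hPΓ hPs
    by_cases hsmall : s.card ≤ n
    · obtain ⟨x, hx1, hx0, hxP⟩ := exists_sep_linear hlgp s hs hsmall P hPΓ hPs
      obtain ⟨w, hw1, _, hwP⟩ := ih ∅ (by simp) (by simp) P hPΓ (by simp)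
      refine ⟨x * w, ?_, ?_, ?_⟩
      · have h1e := hx1.mul hw1
        have h2 : 1 + e = e + 1 := Nat.add_comm 1 e
        exact h2 ▸ h1e
      · intro Q hQ
        rw [map_mul, hx0 Q hQ, zero_mul]
      · rw [map_mul, hxP, hwP, mul_one]
    · obtain ⟨s₁, hs₁sub, hs₁card⟩ := Finset.exists_subset_card_eq (s := s) (n := n) (by omega)
      obtain ⟨x, hx1, hx0, hxP⟩ := exists_sep_linear hlgp s₁
        (fun Q hQ => hs (hs₁sub hQ)) (le_of_eq hs₁card) P hPΓ (fun h => hPs (hs₁sub h))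
      obtain ⟨w, hw1, hw0, hwP⟩ := ih (s \ s₁)
        (fun Q hQ => hs (Finset.mem_coe.mpr (Finset.sdiff_subset (Finset.mem_coe.mp hQ))))
        (by
          rw [Finset.card_sdiff_of_subset hs₁sub, hs₁card]
          have hexp : (e + 1) * n = e * n + n := by ring
          omega)
        P hPΓ (fun h => hPs (Finset.sdiff_subset h))
      refine ⟨x * w, ?_, ?_, ?_⟩
      · have h1e := hx1.mul hw1
        have h2 : 1 + e = e + 1 := Nat.add_comm 1 e
        exact h2 ▸ h1e
      · intro Q hQ
        by_cases hQ1 : Q ∈ s₁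
        · rw [map_mul, hx0 Q hQ1, zero_mul]
        · rw [map_mul, hw0 Q (Finset.mem_sdiff.mpr ⟨hQ, hQ1⟩), mul_zero]
      · rw [map_mul, hxP, hwP, mul_one]

/-- Vanishing of a small-support linear relation among point evaluations in degree `e`. -/
lemma relation_eq_zero (hlgp : LinGenPos k n Γ)
    (Γfin : Finset (Projectivization k (Fin (n + 1) → k))) (hΓ : ↑Γfin ⊆ Γ) (e : ℕ)
    (a : Projectivization k (Fin (n + 1) → k) → k)
    (t : Finset (Projectivization k (Fin (n + 1) → k))) (ht : t ⊆ Γfin)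
    (htc : t.card ≤ e * n + 1)
    (hta : ∀ P ∈ Γfin, P ∉ t → a P = 0)
    (hrel : ∀ G : MvPolynomial (Fin (n + 1)) k, G.IsHomogeneous e →
      ∑ P ∈ Γfin, a P * eval P.rep G = 0) :
    ∀ P ∈ Γfin, a P = 0 := by
  classical
  intro P hP
  by_contra haP
  have hPt : P ∈ t := by
    by_contra h
    exact haP (hta P hP h)
  obtain ⟨w, hw1, hw0, hwP⟩ := exists_sep hlgp e (t.erase P)
    (fun Q hQ => hΓ (ht (Finset.erase_subset _ _ (Finset.mem_coe.mp hQ))))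
    (by
      have := Finset.card_erase_of_mem hPt
      omega)
    P (hΓ hP) (Finset.notMem_erase P t)
  have := hrel w hw1
  rw [Finset.sum_eq_single_of_mem P hP] at this
  · rw [hwP, mul_one] at this
    exact haP this
  · intro Q hQ hQP
    by_cases hQt : Q ∈ t
    · rw [hw0 Q (Finset.mem_erase.mpr ⟨hQP, hQt⟩), mul_zero]
    · rw [hta Q hQ hQt, zero_mul]

lemma pi_expand {ι : Type*} [Fintype ι] [DecidableEq ι] (w : ι → k) :
    w = ∑ P, w P • (Pi.single P (1 : k) : ι → k) := by
  have h : ∀ P : ι, w P • (Pi.single P (1 : k) : ι → k) = Pi.single P (w P) := by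
    intro P
    rw [← Pi.single_smul, smul_eq_mul, mul_one]
  calc w = ∑ P, Pi.single P (w P) := (Finset.univ_sum_single w).symm
    _ = ∑ P, w P • (Pi.single P (1 : k) : ι → k) := by
        apply Finset.sum_congr rfl
        intro P _
        rw [h]

section Main

variable {Γ : Set (Projectivization k (Fin (n + 1) → k))}
  {Γfin : Finset (Projectivization k (Fin (n + 1) → k))}
  {m ℓ : ℕ}
  {φ : MvPolynomial (Fin (n + 1)) k →ₗ[k] k}

/-- Existence of the coefficient vector `γ` for the functional `G ↦ φ(x·G)` on degree-`ℓ`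
homogeneous polynomials. -/
lemma gamma_exists (hlgp : LinGenPos k n Γ) (hΓsub : ↑Γfin ⊆ Γ)
    (hΓeq : ∀ P, P ∈ Γ ↔ P ∈ Γfin)
    (hmℓ : m ≤ ℓ) (hd : Γfin.card ≤ m * n)
    (hφ : ∀ x G, x.IsHomogeneous 1 → G ∈ gradedVanishing k n Γ ℓ → φ (x * G) = 0)
    (x : MvPolynomial (Fin (n + 1)) k) (hx : x.IsHomogeneous 1) :
    ∃ γ : Projectivization k (Fin (n + 1) → k) → k,
      ∀ G, G.IsHomogeneous ℓ → φ (x * G) = ∑ P ∈ Γfin, γ P * eval P.rep G := by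
  classical
  set H := homogeneousSubmodule (Fin (n + 1)) k ℓ with hH
  set E : H →ₗ[k] ({P // P ∈ Γfin} → k) :=
    LinearMap.pi (fun P => evalLin ((P : { P // P ∈ Γfin}) : Projectivization k (Fin (n+1) → k)).rep ∘ₗ H.subtype) with hE
  have hmℓn : m * n ≤ ℓ * n := Nat.mul_le_mul_right n hmℓ
  have hsep : ∀ P : {P // P ∈ Γfin}, ∃ w : H, E w = Pi.single P 1 := by
    intro P
    obtain ⟨w, hw1, hw0, hwP⟩ := exists_sep hlgp ℓ (Γfin.erase ↑P)
      (fun Q hQ => hΓsub (Finset.erase_subset _ _ (Finset.mem_coe.mp hQ)))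
      (by
        have h1 := Finset.card_erase_of_mem P.2
        omega)
      ↑P (hΓsub P.2) (Finset.notMem_erase _ _)
    refine ⟨⟨w, (mem_homogeneousSubmodule ℓ w).mpr hw1⟩, ?_⟩
    funext Q
    by_cases hQP : Q = P
    · subst hQP
      simp only [hE, LinearMap.pi_apply, LinearMap.comp_apply, Submodule.coe_subtype,
        evalLin_apply, Pi.single_eq_same]
      exact hwP
    · simp only [hE, LinearMap.pi_apply, LinearMap.comp_apply, Submodule.coe_subtype,
        evalLin_apply, Pi.single_eq_of_ne hQP]
      exact hw0 ↑Q (Finset.mem_erase.mpr ⟨fun h => hQP (Subtype.ext h), Q.2⟩)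
  have hsurj : LinearMap.range E = ⊤ := by
    rw [← top_le_iff]
    intro w _
    rw [pi_expand w]
    apply Submodule.sum_mem
    intro P _
    apply Submodule.smul_mem
    obtain ⟨wP, hwP⟩ := hsep P
    exact ⟨wP, hwP⟩
  obtain ⟨g, hg⟩ := E.exists_rightInverse_of_surjective hsurj
  set ψ : H →ₗ[k] k := φ ∘ₗ (LinearMap.mulLeft k x) ∘ₗ H.subtype with hψ
  have hker : ∀ G : H, E G = 0 → ψ G = 0 := by
    intro G hG
    apply hφ x G.1 hx
    refine Submodule.mem_inf.mpr ⟨G.2, ?_⟩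
    intro P hPΓ
    have hPfin : P ∈ Γfin := (hΓeq P).mp hPΓ
    have := congrFun hG ⟨P, hPfin⟩
    simpa [hE] using this
  have hψE : ∀ G : H, ψ G = ψ (g (E G)) := by
    intro G
    have h0 : E (G - g (E G)) = 0 := by
      rw [map_sub]
      have : E (g (E G)) = E G := by
        rw [← LinearMap.comp_apply, hg, LinearMap.id_apply]
      rw [this, sub_self]
    have := hker _ h0
    rw [map_sub, sub_eq_zero] at this
    exact this
  refine ⟨fun P => if h : P ∈ Γfin then ψ (g (Pi.single ⟨P, h⟩ 1)) else 0, ?_⟩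
  intro G hG
  have hGH : G ∈ H := (mem_homogeneousSubmodule ℓ G).mpr hG
  have hφψ : φ (x * G) = ψ ⟨G, hGH⟩ := rfl
  rw [hφψ, hψE ⟨G, hGH⟩]
  conv_lhs => rw [pi_expand (E ⟨G, hGH⟩)]
  rw [map_sum, map_sum, ← Finset.sum_coe_sort Γfin]
  apply Finset.sum_congr rfl
  intro P _
  rw [map_smul, map_smul]
  have hbeta : (fun Q => if h : Q ∈ Γfin then ψ (g (Pi.single ⟨Q, h⟩ 1)) else 0)
      (↑P : Projectivization k (Fin (n + 1) → k)) = ψ (g (Pi.single P 1)) := by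
    simp only [dif_pos P.2, Subtype.coe_eta]
  rw [hbeta]
  have hEP : (E ⟨G, hGH⟩) P
      = eval ((P : Projectivization k (Fin (n+1) → k)).rep) G := by
    simp [hE]
  rw [hEP, smul_eq_mul, mul_comm]

/-- Uniqueness of the coefficient vector. -/
lemma gamma_unique (hlgp : LinGenPos k n Γ) (hΓsub : ↑Γfin ⊆ Γ)
    (hmℓ : m ≤ ℓ) (hd : Γfin.card ≤ m * n)
    (γ₁ γ₂ : Projectivization k (Fin (n + 1) → k) → k)
    (h12 : ∀ G : MvPolynomial (Fin (n + 1)) k, G.IsHomogeneous ℓ →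
      ∑ P ∈ Γfin, γ₁ P * eval P.rep G = ∑ P ∈ Γfin, γ₂ P * eval P.rep G) :
    ∀ P ∈ Γfin, γ₁ P = γ₂ P := by
  have hmℓn : m * n ≤ ℓ * n := Nat.mul_le_mul_right n hmℓ
  have h := relation_eq_zero hlgp Γfin hΓsub ℓ (fun P => γ₁ P - γ₂ P) Γfin le_rfl
    (by omega) (fun P hP h => absurd hP h)
    (by
      intro G hG
      have := h12 G hG
      simp only [sub_mul]
      rw [Finset.sum_sub_distrib, this, sub_self])
  intro P hP
  have h0 := h P hP
  exact sub_eq_zero.mp h0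

/-- `linOfFun` as a linear map. -/
def linOfFunL : ((Fin (n + 1) → k) →ₗ[k] k) →ₗ[k] MvPolynomial (Fin (n + 1)) k where
  toFun := linOfFun
  map_add' := linOfFun_add
  map_smul' := fun c f => by simpa using linOfFun_smul c f

/-- The exchange relation vanishes whenever both linear forms vanish on a large subset `T`. -/
lemma beta_vanish (hlgp : LinGenPos k n Γ) (hΓsub : ↑Γfin ⊆ Γ)
    (hm : 2 ≤ m) (hmℓ : m ≤ ℓ)
    (x y : MvPolynomial (Fin (n + 1)) k)
    (γx γy : Projectivization k (Fin (n + 1) → k) → k)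
    (hγx : ∀ G, G.IsHomogeneous ℓ → φ (x * G) = ∑ P ∈ Γfin, γx P * eval P.rep G)
    (hγy : ∀ G, G.IsHomogeneous ℓ → φ (y * G) = ∑ P ∈ Γfin, γy P * eval P.rep G)
    (hx : x.IsHomogeneous 1) (hy : y.IsHomogeneous 1)
    (T : Finset (Projectivization k (Fin (n + 1) → k))) (hT : T ⊆ Γfin)
    (hTc : Γfin.card ≤ T.card + ((ℓ - 1) * n + 1))
    (hvx : ∀ P ∈ T, eval P.rep x = 0) (hvy : ∀ P ∈ T, eval P.rep y = 0) :
    ∀ P ∈ Γfin, γx P * eval P.rep y = γy P * eval P.rep x := by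
  classical
  have hℓ1 : ℓ = 1 + (ℓ - 1) := by omega
  have hrel : ∀ G : MvPolynomial (Fin (n + 1)) k, G.IsHomogeneous (ℓ - 1) →
      ∑ P ∈ Γfin, (γx P * eval P.rep y - γy P * eval P.rep x) * eval P.rep G = 0 := by
    intro G hG
    have hyG : (y * G).IsHomogeneous ℓ := hℓ1 ▸ hy.mul hG
    have hxG : (x * G).IsHomogeneous ℓ := hℓ1 ▸ hx.mul hG
    have e1 := hγx _ hyG
    have e2 := hγy _ hxG
    have e3 : x * (y * G) = y * (x * G) := by ring
    rw [e3, e2] at e1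
    simp only [map_mul] at e1
    simp only [sub_mul]
    rw [Finset.sum_sub_distrib, sub_eq_zero]
    simp only [mul_assoc]
    exact e1.symm
  have hzero := relation_eq_zero hlgp Γfin hΓsub (ℓ - 1)
    (fun P => γx P * eval P.rep y - γy P * eval P.rep x)
    (Γfin \ T) (Finset.sdiff_subset)
    (by
      rw [Finset.card_sdiff_of_subset hT]
      have := Finset.card_le_card hT
      omega)
    (by
      intro P hP hPnot
      have hPT : P ∈ T := by
        by_contra h
        exact hPnot (Finset.mem_sdiff.mpr ⟨hP, h⟩)
      simp only [hvx P hPT, hvy P hPT, mul_zero, sub_zero])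
    hrel
  intro P hP
  have h0 := hzero P hP
  exact sub_eq_zero.mp h0

/-- The key exchange identity `γ_x(P)·y(P) = γ_y(P)·x(P)`. -/
lemma gamma_key (hlgp : LinGenPos k n Γ) (hΓsub : ↑Γfin ⊆ Γ)
    (hΓeq : ∀ P, P ∈ Γ ↔ P ∈ Γfin)
    (hn : 1 ≤ n) (hm : 2 ≤ m) (hmℓ : m ≤ ℓ) (hd : Γfin.card ≤ m * n)
    (hφ : ∀ x G, x.IsHomogeneous 1 → G ∈ gradedVanishing k n Γ ℓ → φ (x * G) = 0)
    (x y : MvPolynomial (Fin (n + 1)) k)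
    (γx γy : Projectivization k (Fin (n + 1) → k) → k)
    (hx : x.IsHomogeneous 1) (hy : y.IsHomogeneous 1)
    (hγx : ∀ G, G.IsHomogeneous ℓ → φ (x * G) = ∑ P ∈ Γfin, γx P * eval P.rep G)
    (hγy : ∀ G, G.IsHomogeneous ℓ → φ (y * G) = ∑ P ∈ Γfin, γy P * eval P.rep G) :
    ∀ P ∈ Γfin, γx P * eval P.rep y = γy P * eval P.rep x := by
  classical
  have hmn : m * n ≤ ℓ * n := Nat.mul_le_mul_right n hmℓ
  by_cases hsmall : Γfin.card ≤ (ℓ - 1) * n + 1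
  · exact beta_vanish hlgp hΓsub hm hmℓ x y γx γy hγx hγy hx hy ∅ (Finset.empty_subset _)
      (by simpa using hsmall) (by simp) (by simp)
  · push_neg at hsmall
    have hsub1 : (ℓ - 1) * n = ℓ * n - n := Nat.sub_one_mul ℓ n
    have hnle : n ≤ ℓ * n := Nat.le_mul_of_pos_left n (by omega)
    have hcard2 : n + 1 ≤ Γfin.card := by
      have h2 : n ≤ (ℓ - 1) * n := Nat.le_mul_of_pos_left n (by omega)
      omega
    obtain ⟨S, hSsub, hScard⟩ := Finset.exists_subset_card_eq hcard2
    have hSli := hlgp S (fun Q hQ => hΓsub (hSsub (Finset.mem_coe.mp hQ))) (le_of_eq hScard)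
    haveI : Nonempty {P // P ∈ S} := Finset.nonempty_coe_sort.mpr
      (Finset.card_pos.mp (by omega))
    have hcardeq : Fintype.card {P // P ∈ S} = Module.finrank k (Fin (n + 1) → k) := by
      rw [Fintype.card_coe, hScard, Module.finrank_fintype_fun_eq_card, Fintype.card_fin]
    set b : Module.Basis {P // P ∈ S} k (Fin (n + 1) → k) :=
      basisOfLinearIndependentOfCardEqFinrank hSli hcardeq with hbdef
    have hb : ∀ Q : {P // P ∈ S},
        b Q = ((Q : Projectivization k (Fin (n + 1) → k))).rep := by
      intro Q
      rw [hbdef, coe_basisOfLinearIndependentOfCardEqFinrank]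
    set u : {P // P ∈ S} → MvPolynomial (Fin (n + 1)) k :=
      fun Q => linOfFunL (b.coord Q) with hudef
    have hcoe : ∀ f, (linOfFunL f : MvPolynomial (Fin (n + 1)) k) = linOfFun f := fun _ => rfl
    have hu1 : ∀ Q, (u Q).IsHomogeneous 1 := fun Q => linOfFun_isHomogeneous _
    have huval : ∀ (Q R : {P // P ∈ S}),
        eval ((R : Projectivization k (Fin (n + 1) → k))).rep (u Q)
          = if R = Q then 1 else 0 := by
      intro Q R
      simp only [hudef]
      rw [hcoe, eval_linOfFun, ← hb R, Module.Basis.coord_apply, Module.Basis.repr_self,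
        Finsupp.single_apply]
    have hγuex : ∀ Q : {P // P ∈ S},
        ∃ γ : Projectivization k (Fin (n + 1) → k) → k, ∀ G, G.IsHomogeneous ℓ →
        φ (u Q * G) = ∑ P ∈ Γfin, γ P * eval P.rep G :=
      fun Q => gamma_exists hlgp hΓsub hΓeq hmℓ hd hφ (u Q) (hu1 Q)
    choose γu hγu using hγuex
    have step1 : ∀ (Q R : {P // P ∈ S}), ∀ P ∈ Γfin,
        γu Q P * eval P.rep (u R) = γu R P * eval P.rep (u Q) := by
      intro Q R
      by_cases hQR : Q = R
      · subst hQR; intro P hP; rfl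
      · have hRQ : (R : Projectivization k (Fin (n + 1) → k)) ≠ ↑Q :=
          fun h => hQR (Subtype.ext h.symm)
        have hRmem : (R : Projectivization k (Fin (n + 1) → k)) ∈ S.erase ↑Q :=
          Finset.mem_erase.mpr ⟨hRQ, R.2⟩
        have hT1 : (S.erase ↑Q).card = n := by
          rw [Finset.card_erase_of_mem Q.2, hScard]
          omega
        have hTcard : ((S.erase ↑Q).erase ↑R).card = n - 1 := by
          rw [Finset.card_erase_of_mem hRmem, hT1]
        apply beta_vanish hlgp hΓsub hm hmℓ (u Q) (u R) (γu Q) (γu R)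
          (hγu Q) (hγu R) (hu1 Q) (hu1 R) ((S.erase ↑Q).erase ↑R)
          (fun P hP => hSsub (Finset.erase_subset _ _ (Finset.erase_subset _ _ hP)))
          (by rw [hTcard]; omega)
        · intro P hP
          have hPS : P ∈ S := Finset.erase_subset _ _ (Finset.erase_subset _ _ hP)
          have hPQ : P ≠ ↑Q := (Finset.mem_erase.mp (Finset.erase_subset _ _ hP)).1
          have := huval Q ⟨P, hPS⟩
          rw [this, if_neg (fun h => hPQ (congrArg Subtype.val h))]
        · intro P hP
          have hPS : P ∈ S := Finset.erase_subset _ _ (Finset.erase_subset _ _ hP)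
          have hPR : P ≠ ↑R := (Finset.mem_erase.mp hP).1
          have := huval R ⟨P, hPS⟩
          rw [this, if_neg (fun h => hPR (congrArg Subtype.val h))]
    have hexp : ∀ z : MvPolynomial (Fin (n + 1)) k, z.IsHomogeneous 1 →
        z = ∑ Q : {P // P ∈ S},
          eval ((Q : Projectivization k (Fin (n + 1) → k))).rep z • u Q := by
      intro z hz
      have hfz : funOfLin z = ∑ Q : {P // P ∈ S},
          eval ((Q : Projectivization k (Fin (n + 1) → k))).rep z • b.coord Q := by
        apply b.ext
        intro R
        rw [LinearMap.sum_apply]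
        rw [Finset.sum_eq_single_of_mem R (Finset.mem_univ R) ?hother]
        case hother =>
          intro Q _ hQR
          rw [LinearMap.smul_apply, Module.Basis.coord_apply, Module.Basis.repr_self,
            Finsupp.single_apply, if_neg (fun h => hQR h.symm), smul_zero]
        rw [LinearMap.smul_apply, Module.Basis.coord_apply, Module.Basis.repr_self,
          Finsupp.single_apply, if_pos rfl, smul_eq_mul, mul_one, hb R, funOfLin_eval hz]
      calc z = linOfFun (funOfLin z) := (linOfFun_funOfLin hz).symm
        _ = linOfFunL (funOfLin z) := (hcoe _).symm
        _ = ∑ Q : {P // P ∈ S},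
              eval ((Q : Projectivization k (Fin (n + 1) → k))).rep z • u Q := by
            rw [hfz, map_sum]
            apply Finset.sum_congr rfl
            intro Q _
            rw [map_smul]
    have hcomb : ∀ (z : MvPolynomial (Fin (n + 1)) k)
        (γz : Projectivization k (Fin (n + 1) → k) → k), z.IsHomogeneous 1 →
        (∀ G, G.IsHomogeneous ℓ → φ (z * G) = ∑ P ∈ Γfin, γz P * eval P.rep G) →
        ∀ P ∈ Γfin, γz P = ∑ Q : {P // P ∈ S},
          eval ((Q : Projectivization k (Fin (n + 1) → k))).rep z * γu Q P := by
      intro z γz hz hγz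
      apply gamma_unique hlgp hΓsub hmℓ hd
      intro G hG
      rw [← hγz G hG]
      conv_lhs => rw [hexp z hz]
      rw [Finset.sum_mul, map_sum]
      have hterm : ∀ Q : {P // P ∈ S},
          φ ((eval ((Q : Projectivization k (Fin (n + 1) → k))).rep z • u Q) * G)
          = ∑ P ∈ Γfin,
            (eval ((Q : Projectivization k (Fin (n + 1) → k))).rep z * γu Q P)
              * eval P.rep G := by
        intro Q
        rw [smul_mul_assoc, map_smul, smul_eq_mul, hγu Q G hG, Finset.mul_sum]
        apply Finset.sum_congr rfl
        intro P _
        ring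
      rw [Finset.sum_congr rfl (fun Q _ => hterm Q)]
      rw [Finset.sum_comm]
      apply Finset.sum_congr rfl
      intro P _
      rw [Finset.sum_mul]
    intro P hP
    have hevx : eval P.rep x = ∑ Q : {P // P ∈ S},
        eval ((Q : Projectivization k (Fin (n + 1) → k))).rep x * eval P.rep (u Q) := by
      conv_lhs => rw [hexp x hx]
      rw [map_sum]
      apply Finset.sum_congr rfl
      intro Q _
      rw [smul_eval]
    have hevy : eval P.rep y = ∑ Q : {P // P ∈ S},
        eval ((Q : Projectivization k (Fin (n + 1) → k))).rep y * eval P.rep (u Q) := by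
      conv_lhs => rw [hexp y hy]
      rw [map_sum]
      apply Finset.sum_congr rfl
      intro Q _
      rw [smul_eval]
    rw [hcomb x γx hx hγx P hP, hcomb y γy hy hγy P hP, hevx, hevy]
    rw [Finset.sum_mul_sum, Finset.sum_mul_sum]
    rw [Finset.sum_comm
      (s := (Finset.univ : Finset {P // P ∈ S}))
      (t := (Finset.univ : Finset {P // P ∈ S}))]
    apply Finset.sum_congr rfl
    intro Q _
    apply Finset.sum_congr rfl
    intro R _
    have h1 := step1 R Q P hP
    calc eval ((R : Projectivization k (Fin (n + 1) → k))).rep x * γu R P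
          * (eval ((Q : Projectivization k (Fin (n + 1) → k))).rep y * eval P.rep (u Q))
        = (eval ((R : Projectivization k (Fin (n + 1) → k))).rep x
            * eval ((Q : Projectivization k (Fin (n + 1) → k))).rep y)
          * (γu R P * eval P.rep (u Q)) := by ring
      _ = (eval ((R : Projectivization k (Fin (n + 1) → k))).rep x
            * eval ((Q : Projectivization k (Fin (n + 1) → k))).rep y)
          * (γu Q P * eval P.rep (u R)) := by rw [h1]
      _ = eval ((Q : Projectivization k (Fin (n + 1) → k))).rep y * γu Q P
          * (eval ((R : Projectivization k (Fin (n + 1) → k))).rep x * eval P.rep (u R)) := by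
          ring

/-- Main step: `I(Γ)_{ℓ+1} ⊆ S_1 · I(Γ)_ℓ`. -/
theorem graded_le (hlgp : LinGenPos k n Γ) (hΓsub : ↑Γfin ⊆ Γ)
    (hΓeq : ∀ P, P ∈ Γ ↔ P ∈ Γfin)
    (hn : 1 ≤ n) (hm : 2 ≤ m) (hmℓ : m ≤ ℓ) (hd : Γfin.card ≤ m * n) :
    gradedVanishing k n Γ (ℓ + 1) ≤ Submodule.span k
      {F : MvPolynomial (Fin (n + 1)) k |
        ∃ x G, x.IsHomogeneous 1 ∧ G ∈ gradedVanishing k n Γ ℓ ∧ F = x * G} := by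
  classical
  intro F hF
  set M := Submodule.span k
    {F : MvPolynomial (Fin (n + 1)) k |
      ∃ x G, x.IsHomogeneous 1 ∧ G ∈ gradedVanishing k n Γ ℓ ∧ F = x * G} with hM
  by_contra hFM
  have hFq : (Submodule.Quotient.mk F : MvPolynomial (Fin (n + 1)) k ⧸ M) ≠ 0 := by
    intro h
    exact hFM ((Submodule.Quotient.mk_eq_zero M).mp h)
  haveI hfree : Module.Free k (MvPolynomial (Fin (n + 1)) k ⧸ M) :=
    Module.Free.of_divisionRing k _
  haveI hproj : Module.Projective k (MvPolynomial (Fin (n + 1)) k ⧸ M) :=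
    Module.Projective.of_free
  have hex : ∃ χ : Module.Dual k (MvPolynomial (Fin (n + 1)) k ⧸ M),
      χ (Submodule.Quotient.mk F) ≠ 0 := by
    by_contra h
    push_neg at h
    exact hFq ((Module.forall_dual_apply_eq_zero_iff k _).mp h)
  obtain ⟨χ, hχ⟩ := hex
  set φ₀ : MvPolynomial (Fin (n + 1)) k →ₗ[k] k :=
    (χ (Submodule.Quotient.mk F))⁻¹ • (χ ∘ₗ M.mkQ) with hφdef
  have hφ0 : ∀ x G, x.IsHomogeneous 1 → G ∈ gradedVanishing k n Γ ℓ → φ₀ (x * G) = 0 := by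
    intro x G hx hG
    have hmem : x * G ∈ M := Submodule.subset_span ⟨x, G, hx, hG, rfl⟩
    have hmk : M.mkQ (x * G) = 0 := by
      rw [Submodule.mkQ_apply, Submodule.Quotient.mk_eq_zero]
      exact hmem
    rw [hφdef]
    simp only [LinearMap.smul_apply, LinearMap.comp_apply, hmk, map_zero, smul_eq_mul, mul_zero]
  have hφF : φ₀ F = 1 := by
    rw [hφdef]
    simp only [LinearMap.smul_apply, LinearMap.comp_apply, Submodule.mkQ_apply, smul_eq_mul]
    exact inv_mul_cancel₀ hχ
  have hyex : ∀ P : Projectivization k (Fin (n + 1) → k),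
      ∃ y : MvPolynomial (Fin (n + 1)) k, y.IsHomogeneous 1 ∧ eval P.rep y = 1 := by
    intro P
    have hrep := Projectivization.rep_nonzero P
    obtain ⟨i, hi⟩ := Function.ne_iff.mp hrep
    simp only [Pi.zero_apply] at hi
    refine ⟨linOfFun ((P.rep i)⁻¹ • LinearMap.proj i), linOfFun_isHomogeneous _, ?_⟩
    rw [eval_linOfFun]
    simp only [LinearMap.smul_apply, LinearMap.proj_apply, smul_eq_mul]
    exact inv_mul_cancel₀ hi
  choose yP hyP1 hyPval using hyex
  have hγyex : ∀ P : Projectivization k (Fin (n + 1) → k),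
      ∃ γ : Projectivization k (Fin (n + 1) → k) → k, ∀ G, G.IsHomogeneous ℓ →
        φ₀ (yP P * G) = ∑ Q ∈ Γfin, γ Q * eval Q.rep G :=
    fun P => gamma_exists (φ := φ₀) hlgp hΓsub hΓeq hmℓ hd hφ0 (yP P) (hyP1 P)
  choose γy hγy using hγyex
  set γfin : Projectivization k (Fin (n + 1) → k) → k := fun P => γy P P with hγfindef
  have key2 : ∀ (x : MvPolynomial (Fin (n + 1)) k)
      (γx : Projectivization k (Fin (n + 1) → k) → k), x.IsHomogeneous 1 →
      (∀ G, G.IsHomogeneous ℓ → φ₀ (x * G) = ∑ Q ∈ Γfin, γx Q * eval Q.rep G) →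
      ∀ P ∈ Γfin, γx P = γfin P * eval P.rep x := by
    intro x γx hx hγx P hP
    have h := gamma_key (φ := φ₀) hlgp hΓsub hΓeq hn hm hmℓ hd hφ0 x (yP P) γx (γy P)
      hx (hyP1 P) hγx (hγy P) P hP
    rw [hyPval P, mul_one] at h
    exact h
  have hmono : ∀ (α : Fin (n + 1) →₀ ℕ) (c : k), α.degree = ℓ + 1 →
      φ₀ ((monomial α) c) = ∑ P ∈ Γfin, γfin P * eval P.rep ((monomial α) c) := by
    intro α c hα
    have hα0 : α ≠ 0 := by
      intro h0
      rw [h0, map_zero] at hα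
      omega
    obtain ⟨i, hi⟩ := Finsupp.ne_iff.mp hα0
    simp only [Finsupp.coe_zero, Pi.zero_apply] at hi
    have hile : Finsupp.single i 1 ≤ α := by
      rw [Finsupp.single_le_iff]
      omega
    set β := α - Finsupp.single i 1 with hβ
    have hadd : β + Finsupp.single i 1 = α := tsub_add_cancel_of_le hile
    have hβdeg : β.degree = ℓ := by
      have hda := degree_add β (Finsupp.single i 1)
      rw [hadd, degree_single, hα] at hda
      omega
    have hXdef : (X i : MvPolynomial (Fin (n + 1)) k) = monomial (Finsupp.single i 1) 1 := rfl
    have hmon : (monomial α) c = X i * (monomial β) c := by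
      have hadd' : Finsupp.single i 1 + β = α :=
        (add_comm (Finsupp.single i 1) β).trans hadd
      rw [hXdef, monomial_mul, one_mul, hadd']
    have hβhom : ((monomial β) c : MvPolynomial (Fin (n + 1)) k).IsHomogeneous ℓ :=
      isHomogeneous_monomial c hβdeg
    have hXhom : (X i : MvPolynomial (Fin (n + 1)) k).IsHomogeneous 1 := isHomogeneous_X k i
    obtain ⟨γX, hγX⟩ := gamma_exists (φ := φ₀) hlgp hΓsub hΓeq hmℓ hd hφ0 (X i) hXhom
    rw [hmon, hγX _ hβhom]
    apply Finset.sum_congr rfl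
    intro P hP
    rw [key2 (X i) γX hXhom hγX P hP, map_mul]
    ring
  have hFhom : F.IsHomogeneous (ℓ + 1) := by
    have := (Submodule.mem_inf.mp hF).1
    exact (mem_homogeneousSubmodule _ _).mp this
  have hφF2 : φ₀ F = ∑ P ∈ Γfin, γfin P * eval P.rep F := by
    conv_lhs => rw [F.as_sum]
    conv_rhs => rw [F.as_sum]
    rw [map_sum]
    calc ∑ α ∈ F.support, φ₀ ((monomial α) (coeff α F))
        = ∑ α ∈ F.support, ∑ P ∈ Γfin, γfin P * eval P.rep ((monomial α) (coeff α F)) := by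
          apply Finset.sum_congr rfl
          intro α hα
          apply hmono
          by_contra hne
          exact (mem_support_iff.mp hα) (hFhom.coeff_eq_zero hne)
      _ = ∑ P ∈ Γfin, γfin P * eval P.rep (∑ α ∈ F.support, (monomial α) (coeff α F)) := by
          rw [Finset.sum_comm]
          apply Finset.sum_congr rfl
          intro P _
          rw [map_sum, Finset.mul_sum]
  have hvan : ∀ P ∈ Γfin, eval P.rep F = 0 := by
    intro P hP
    exact (Submodule.mem_inf.mp hF).2 P ((hΓeq P).mpr hP)
  have hcontra : (1 : k) = 0 := by
    rw [← hφF, hφF2]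
    apply Finset.sum_eq_zero
    intro P hP
    rw [hvan P hP, mul_zero]
  exact one_ne_zero hcontra

end Main

/-- Homogeneous polynomials vanishing at representatives lie in the vanishing ideal. -/
lemma mem_vanishingIdeal_of_homogeneous {Γ : Set (Projectivization k (Fin (n + 1) → k))}
    {G : MvPolynomial (Fin (n + 1)) k} {j : ℕ}
    (hG : G.IsHomogeneous j) (hvan : ∀ P ∈ Γ, eval P.rep G = 0) :
    G ∈ vanishingIdeal k n Γ := by
  intro P hP c
  rw [eval_smul_of_isHomogeneous hG, hvan P hP, mul_zero]

/-- Homogeneous components of elements of the vanishing ideal vanish at representatives. -/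
lemma comp_vanish [Infinite k] {Γ : Set (Projectivization k (Fin (n + 1) → k))}
    {F : MvPolynomial (Fin (n + 1)) k} (hF : F ∈ vanishingIdeal k n Γ)
    (P : Projectivization k (Fin (n + 1) → k)) (hP : P ∈ Γ) (j : ℕ) :
    eval P.rep (homogeneousComponent j F) = 0 := by
  classical
  by_cases hj : j ≤ F.totalDegree
  · set p : Polynomial k := ∑ jj ∈ Finset.range (F.totalDegree + 1),
      Polynomial.C (eval P.rep (homogeneousComponent jj F)) * Polynomial.X ^ jj with hp
    have hpc : ∀ c : k, p.eval c = 0 := by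
      intro c
      have h1 : eval (c • P.rep) F = 0 := hF P hP c
      have h2 : eval (c • P.rep) F = ∑ jj ∈ Finset.range (F.totalDegree + 1),
          c ^ jj * eval P.rep (homogeneousComponent jj F) := by
        conv_lhs => rw [← sum_homogeneousComponent F]
        rw [map_sum]
        apply Finset.sum_congr rfl
        intro jj _
        rw [eval_smul_of_isHomogeneous (homogeneousComponent_isHomogeneous jj F)]
      rw [hp, Polynomial.eval_finset_sum]
      simp only [Polynomial.eval_mul, Polynomial.eval_C, Polynomial.eval_pow, Polynomial.eval_X]
      rw [← h1, h2]
      apply Finset.sum_congr rfl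
      intro jj _
      ring
    have hp0 : p = 0 := Polynomial.funext (fun c => by rw [hpc c, Polynomial.eval_zero])
    have hcoeff : p.coeff j = eval P.rep (homogeneousComponent j F) := by
      rw [hp, Polynomial.finset_sum_coeff]
      have hterm : ∀ jj ∈ Finset.range (F.totalDegree + 1),
          (Polynomial.C (eval P.rep (homogeneousComponent jj F)) * Polynomial.X ^ jj).coeff j
          = if j = jj then eval P.rep (homogeneousComponent jj F) else 0 := by
        intro jj _
        rw [Polynomial.coeff_C_mul, Polynomial.coeff_X_pow]
        by_cases hjj : j = jj
        · rw [if_pos hjj, if_pos hjj, mul_one]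
        · rw [if_neg hjj, if_neg hjj, mul_zero]
      rw [Finset.sum_congr rfl hterm, Finset.sum_ite_eq]
      rw [if_pos (Finset.mem_range.mpr (by omega))]
    rw [← hcoeff, hp0, Polynomial.coeff_zero]
  · push_neg at hj
    rw [homogeneousComponent_eq_zero _ F hj, map_zero]

end LGPProof

/-- If `Γ ⊆ ℙⁿ` is a finite set of `d` points in linearly general position and `d ≤ mn`
with `m ≥ 2`, then `I(Γ)` is generated by its homogeneous elements of degree at most `m`. -/
theorem generated_in_degree_le_m (k : Type*) [Field k] [IsAlgClosed k] (n d m : ℕ)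
    (hn : 1 ≤ n) (hm : 2 ≤ m) (Γ : Set (Projectivization k (Fin (n + 1) → k)))
    (hfin : Γ.Finite) (hcard : Γ.ncard = d) (hlgp : LinGenPos k n Γ) (hd : d ≤ m * n) :
    vanishingIdeal k n Γ =
      Ideal.span {F | F ∈ vanishingIdeal k n Γ ∧ ∃ j ≤ m, F.IsHomogeneous j} := by
  classical
  refine le_antisymm ?_ ?_
  swap
  · rw [Ideal.span_le]
    intro F hF
    exact hF.1
  intro F hF
  set Γfin := hfin.toFinset with hΓfin
  have hΓsub : ↑Γfin ⊆ Γ := by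
    intro P hP
    rwa [hΓfin, Set.Finite.coe_toFinset] at hP
  have hΓeq : ∀ P, P ∈ Γ ↔ P ∈ Γfin := fun P => (Set.Finite.mem_toFinset hfin).symm
  have hdfin : Γfin.card ≤ m * n := by
    rw [hΓfin, ← Set.ncard_eq_toFinset_card _ hfin, hcard]
    exact hd
  have hclaim : ∀ j : ℕ, ∀ G : MvPolynomial (Fin (n + 1)) k, G.IsHomogeneous j →
      (∀ P ∈ Γ, eval P.rep G = 0) →
      G ∈ Ideal.span {F | F ∈ vanishingIdeal k n Γ ∧ ∃ j ≤ m, F.IsHomogeneous j} := by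
    intro j
    induction j using Nat.strong_induction_on with
    | _ j ih =>
      intro G hG hvan
      by_cases hjm : j ≤ m
      · apply Ideal.subset_span
        exact ⟨LGPProof.mem_vanishingIdeal_of_homogeneous hG hvan, j, hjm, hG⟩
      · push_neg at hjm
        have hj1 : j = (j - 1) + 1 := by omega
        have hmℓ : m ≤ j - 1 := by omega
        have hGmem : G ∈ gradedVanishing k n Γ ((j - 1) + 1) := by
          refine Submodule.mem_inf.mpr ⟨?_, ?_⟩
          · rw [mem_homogeneousSubmodule]
            exact hj1 ▸ hG
          · exact hvan
        have hGspan := LGPProof.graded_le (Γfin := Γfin) hlgp hΓsub hΓeq hn hm hmℓ hdfin hGmem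
        refine Submodule.span_induction ?_ ?_ ?_ ?_ hGspan
        · rintro F' ⟨x, G', hx, hG', rfl⟩
          have hG'hom : G'.IsHomogeneous (j - 1) :=
            (mem_homogeneousSubmodule _ _).mp (Submodule.mem_inf.mp hG').1
          have hG'van : ∀ P ∈ Γ, eval P.rep G' = 0 := (Submodule.mem_inf.mp hG').2
          have hmem := ih (j - 1) (by omega) G' hG'hom hG'van
          exact Ideal.mul_mem_left _ x hmem
        · exact Ideal.zero_mem _
        · intro a b _ _ ha hb
          exact Ideal.add_mem _ ha hb
        · intro c F' _ hF'
          rw [smul_eq_C_mul]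
          exact Ideal.mul_mem_left _ _ hF'
  have hFsum : F = ∑ j ∈ Finset.range (F.totalDegree + 1), homogeneousComponent j F :=
    (sum_homogeneousComponent F).symm
  rw [hFsum]
  apply Ideal.sum_mem
  intro j _
  exact hclaim j _ (homogeneousComponent_isHomogeneous j F)
    (fun P hP => LGPProof.comp_vanish hF P hP j)
end
end

section
/- Let Γ ⊆ Pⁿ be a finite set of exactly d = mn points in linearly general position, for some integer m ≥ 2. Then Φ(Γ)_m generates I(Γ)_m as a k-vector space; that is, every degree-m homogeneous polynomial vanishing on Γ is a k-linear combination of completely decomposable degree-m forms vanishing on Γ. -/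
open MvPolynomial

noncomputable section

section Aux

variable {k : Type*} [Field k] {n : ℕ}
variable {Γ : Set (Projectivization k (Fin (n + 1) → k))}

/-- dot product of a coefficient vector with a point -/
def dotp (c w : Fin (n + 1) → k) : k := ∑ i, c i * w i

/-- the linear form with coefficient vector `c`, as a polynomial -/
def lf (c : Fin (n + 1) → k) : MvPolynomial (Fin (n + 1)) k := ∑ i, C (c i) * X i

lemma eval_lf (c w : Fin (n + 1) → k) : eval w (lf c) = dotp c w := by
  simp [lf, dotp]

lemma lf_isHomogeneous (c : Fin (n + 1) → k) : (lf c).IsHomogeneous 1 :=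
  IsHomogeneous.sum _ _ _ (fun i _ => isHomogeneous_C_mul_X (c i) i)

lemma coeff_lf (c : Fin (n + 1) → k) (i : Fin (n + 1)) :
    coeff (Finsupp.single i 1) (lf c) = c i := by
  simp only [lf, coeff_sum, coeff_C_mul, coeff_X', Finsupp.single_left_inj]
  rw [Finset.sum_eq_single i] <;> simp +contextual [Finsupp.single_left_injective,
    (Finsupp.single_left_injective one_ne_zero).ne_iff]

lemma lf_ne_zero {c : Fin (n + 1) → k} (hc : c ≠ 0) : lf c ≠ 0 := by
  intro h
  apply hc
  funext i
  have := coeff_lf c i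
  rw [h] at this
  simpa using this.symm

lemma lf_smul (a : k) (c : Fin (n + 1) → k) : lf (a • c) = a • lf c := by
  simp [lf, Finset.smul_sum, smul_eq_C_mul, mul_assoc, C_mul]

lemma lf_sum {ι : Type*} (s : Finset ι) (c : ι → Fin (n + 1) → k) :
    lf (∑ j ∈ s, c j) = ∑ j ∈ s, lf (c j) := by
  classical
  induction s using Finset.induction with
  | empty => simp [lf]
  | insert _ _ h ih =>
    simp only [Finset.sum_insert h, ih]
    rw [← ih]
    simp only [lf]
    rw [← Finset.sum_add_distrib]
    exact Finset.sum_congr rfl (fun i _ => by simp [add_mul, C_add])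

lemma dotp_single (u : Fin (n + 1) → k) (i : Fin (n + 1)) :
    dotp u (Pi.single i 1) = u i := by
  simp only [dotp, Pi.single_apply]
  rw [Finset.sum_eq_single i] <;> simp +contextual



lemma dotp_zero (w : Fin (n + 1) → k) : dotp (0 : Fin (n + 1) → k) w = 0 := by simp [dotp]

/-- the dot-product linear functional -/
def dlin (c : Fin (n + 1) → k) : (Fin (n + 1) → k) →ₗ[k] k :=
  ∑ i, c i • LinearMap.proj i

lemma dlin_apply (c w : Fin (n + 1) → k) : dlin c w = dotp c w := by
  simp [dlin, dotp, LinearMap.sum_apply, smul_eq_mul]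

lemma range_eq_image (B : Finset (Projectivization k (Fin (n + 1) → k))) :
    Set.range (fun p : B => Projectivization.rep (p : Projectivization k (Fin (n + 1) → k)))
      = Projectivization.rep '' (B : Set (Projectivization k (Fin (n + 1) → k))) := by
  ext y
  constructor
  · rintro ⟨p, rfl⟩; exact ⟨↑p, p.2, rfl⟩
  · rintro ⟨q, hq, rfl⟩; exact ⟨⟨q, hq⟩, rfl⟩

lemma rep_notMem_span (hlgp : LinGenPos k n Γ)
    {s : Finset (Projectivization k (Fin (n + 1) → k))} (hs : ↑s ⊆ Γ) (hcard : s.card ≤ n)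
    {w : Projectivization k (Fin (n + 1) → k)} (hw : w ∈ Γ) (hws : w ∉ s) :
    Projectivization.rep w ∉ Submodule.span k (Projectivization.rep '' (s : Set (Projectivization k (Fin (n + 1) → k)))) := by
  classical
  set t := insert w s with ht
  have hts : ↑t ⊆ Γ := by
    intro x hx
    simp only [ht, Finset.coe_insert, Set.mem_insert_iff] at hx
    rcases hx with rfl | hx
    · exact hw
    · exact hs hx
  have hli := hlgp t hts (by
    rw [ht, Finset.card_insert_of_notMem hws]
    omega)
  have hx : (⟨w, by simp [ht]⟩ : t) ∉ {p : t | (p : Projectivization k (Fin (n + 1) → k)) ∈ s} := by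
    simp [hws]
  have himg : (fun p : t => Projectivization.rep (p : Projectivization k (Fin (n + 1) → k))) ''
      {p : t | (p : Projectivization k (Fin (n + 1) → k)) ∈ s}
      = Projectivization.rep '' (s : Set (Projectivization k (Fin (n + 1) → k))) := by
    ext y
    constructor
    · rintro ⟨p, hp, rfl⟩
      exact ⟨↑p, hp, rfl⟩
    · rintro ⟨q, hq, rfl⟩
      exact ⟨⟨q, by simp only [ht, Finset.mem_insert]; exact Or.inr hq⟩, hq, rfl⟩
  have := hli.notMem_span_image hx
  rw [himg] at this
  exact this

lemma exists_perp {U : Submodule k (Fin (n + 1) → k)} {w : Fin (n + 1) → k} (hw : w ∉ U) :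
    ∃ c : Fin (n + 1) → k, (∀ u ∈ U, dotp c u = 0) ∧ dotp c w ≠ 0 := by
  obtain ⟨f, hfw, hmap⟩ := U.exists_dual_map_eq_bot_of_notMem hw inferInstance
  refine ⟨fun i => f (Pi.single i 1), ?_, ?_⟩
  · intro u hu
    have h0 : f u = 0 := by
      have : f u ∈ U.map f := ⟨u, hu, rfl⟩
      rw [hmap] at this
      exact this
    rw [← h0, LinearMap.pi_apply_eq_sum_univ f u, dotp]
    refine Finset.sum_congr rfl (fun i _ => ?_)
    rw [smul_eq_mul, mul_comm]
    congr 2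
    funext j
    simp [Pi.single_apply, eq_comm]
  · have : dotp (fun i => f (Pi.single i 1)) w = f w := by
      rw [LinearMap.pi_apply_eq_sum_univ f w, dotp]
      refine Finset.sum_congr rfl (fun i _ => ?_)
      rw [smul_eq_mul, mul_comm]
      congr 2
      funext j
      simp [Pi.single_apply, eq_comm]
    rw [this]
    exact hfw

lemma exists_block_form (hlgp : LinGenPos k n Γ)
    {B : Finset (Projectivization k (Fin (n + 1) → k))} (hB : ↑B ⊆ Γ) (hcard : B.card = n) :
    ∃ c : Fin (n + 1) → k, c ≠ 0 ∧
      ∀ y, dotp c y = 0 ↔ y ∈ Submodule.span k (Projectivization.rep '' (B : Set (Projectivization k (Fin (n + 1) → k)))) := by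
  classical
  set U := Submodule.span k (Projectivization.rep '' (B : Set (Projectivization k (Fin (n + 1) → k)))) with hU
  have hli := hlgp B hB (by omega)
  have hfr : Module.finrank k U = n := by
    rw [hU, ← range_eq_image, finrank_span_eq_card hli, Fintype.card_coe, hcard]
  have hUtop : U ≠ ⊤ := by
    intro h
    rw [h, finrank_top, Module.finrank_fin_fun] at hfr
    omega
  obtain ⟨x, -, hx⟩ := SetLike.exists_of_lt (lt_top_iff_ne_top.mpr hUtop : U < ⊤)
  obtain ⟨c, hc1, hc2⟩ := exists_perp hx
  have hcne : c ≠ 0 := fun h => hc2 (h ▸ dotp_zero x)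
  have hUle : U ≤ LinearMap.ker (dlin c) := by
    intro u hu
    rw [LinearMap.mem_ker, dlin_apply]
    exact hc1 u hu
  have hrange : LinearMap.range (dlin c) = ⊤ := by
    rw [LinearMap.range_eq_top]
    intro z
    refine ⟨(z * (dotp c x)⁻¹) • x, ?_⟩
    rw [map_smul, dlin_apply, smul_eq_mul]
    field_simp
  have hkfr : Module.finrank k (LinearMap.ker (dlin c)) = n := by
    have := LinearMap.finrank_range_add_finrank_ker (dlin c)
    rw [hrange, finrank_top, Module.finrank_self, Module.finrank_fin_fun] at this
    omega
  have : U = LinearMap.ker (dlin c) :=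
    Submodule.eq_of_le_of_finrank_eq hUle (by rw [hfr, hkfr])
  refine ⟨c, hcne, fun y => ?_⟩
  rw [this, LinearMap.mem_ker, dlin_apply]


lemma exists_separator (hlgp : LinGenPos k n Γ) (ℓ : ℕ) :
    ∀ Δ : Finset (Projectivization k (Fin (n + 1) → k)), ↑Δ ⊆ Γ → Δ.card ≤ ℓ * n + 1 →
    ∀ w ∈ Δ,
    ∃ F : MvPolynomial (Fin (n + 1)) k, F.IsHomogeneous ℓ ∧
      (∀ u ∈ Δ, u ≠ w → eval (Projectivization.rep u) F = 0) ∧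
      eval (Projectivization.rep w) F ≠ 0 := by
  classical
  induction ℓ with
  | zero =>
    intro Δ hΔ hcard w hw
    refine ⟨1, isHomogeneous_one _ _, fun u hu hne => absurd ?_ hne, by simp⟩
    exact Finset.card_le_one.mp (by omega) u hu w hw
  | succ ℓ ih =>
    intro Δ hΔ hcard w hw
    set E := Δ.erase w with hE
    obtain ⟨T, hTE, hTcard⟩ := Finset.exists_subset_card_eq (min_le_right n E.card)
    have hTΔ : T ⊆ Δ := hTE.trans (Finset.erase_subset _ _)
    have hwT : w ∉ T := fun h => Finset.notMem_erase w Δ (hTE h)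
    have hspan : Projectivization.rep w ∉
        Submodule.span k (Projectivization.rep ''
          (T : Set (Projectivization k (Fin (n + 1) → k)))) :=
      rep_notMem_span hlgp (fun x hx => hΔ (hTΔ hx)) (hTcard.le.trans (min_le_left _ _))
        (hΔ hw) hwT
    obtain ⟨c, hc1, hc2⟩ := exists_perp hspan
    set Δ' := Δ \ T with hΔ'
    have hwΔ' : w ∈ Δ' := Finset.mem_sdiff.mpr ⟨hw, hwT⟩
    have hcard' : Δ'.card ≤ ℓ * n + 1 := by
      have h1 : Δ'.card = Δ.card - T.card := by rw [hΔ', Finset.card_sdiff_of_subset hTΔ]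
      have h2 : E.card = Δ.card - 1 := Finset.card_erase_of_mem hw
      have h3 : Δ.card ≤ (ℓ + 1) * n + 1 := hcard
      rcases le_total n E.card with h | h
      · have : T.card = n := by omega
        have : ℓ * n + n = (ℓ + 1) * n := by ring
        omega
      · have : T.card = E.card := by omega
        omega
    obtain ⟨F', hF'h, hF'v, hF'w⟩ := ih Δ' (fun x hx => hΔ (Finset.sdiff_subset hx)) hcard' w hwΔ'
    refine ⟨lf c * F', ?_, ?_, ?_⟩
    · have := (lf_isHomogeneous c).mul hF'h
      rwa [add_comm 1 ℓ] at this
    · intro u hu hne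
      by_cases huT : u ∈ T
      · rw [map_mul, eval_lf, hc1 (Projectivization.rep u)
          (Submodule.subset_span ⟨u, huT, rfl⟩), zero_mul]
      · rw [map_mul, hF'v u (Finset.mem_sdiff.mpr ⟨hu, huT⟩) hne, mul_zero]
    · rw [map_mul, eval_lf]
      exact mul_ne_zero hc2 hF'w

lemma dotp_single_left (i : Fin (n + 1)) (y : Fin (n + 1) → k) :
    dotp (Pi.single i 1) y = y i := by
  simp only [dotp, Pi.single_apply]
  rw [Finset.sum_eq_single i] <;> simp +contextual

lemma dotp_sub (a b y : Fin (n + 1) → k) : dotp (a - b) y = dotp a y - dotp b y := by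
  simp [dotp, sub_mul, Finset.sum_sub_distrib]

lemma dotp_add_right (c a b : Fin (n + 1) → k) : dotp c (a + b) = dotp c a + dotp c b := by
  simp [dotp, mul_add, Finset.sum_add_distrib]

lemma dotp_smul_right (c : Fin (n + 1) → k) (t : k) (a : Fin (n + 1) → k) :
    dotp c (t • a) = t * dotp c a := by
  simp only [dotp, Pi.smul_apply, smul_eq_mul, Finset.mul_sum]
  exact Finset.sum_congr rfl fun i _ => by ring

lemma dotp_zero_right (c : Fin (n + 1) → k) : dotp c (0 : Fin (n + 1) → k) = 0 := by
  simp [dotp]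

lemma dotp_finsum {ι : Type*} (s : Finset ι) (c : ι → Fin (n + 1) → k) (y : Fin (n + 1) → k) :
    dotp (∑ j ∈ s, c j) y = ∑ j ∈ s, dotp (c j) y := by
  simp [dotp, Finset.sum_mul]
  exact Finset.sum_comm

lemma dotp_smul_left (t : k) (c y : Fin (n + 1) → k) : dotp (t • c) y = t * dotp c y := by
  simp only [dotp, Pi.smul_apply, smul_eq_mul, Finset.mul_sum, mul_assoc]

lemma lf_single (i : Fin (n + 1)) : lf (Pi.single i 1 : Fin (n + 1) → k) = X i := by
  simp only [lf, Pi.single_apply]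
  rw [Finset.sum_eq_single i] <;> simp +contextual

lemma degree_fintype (d : Fin (n + 1) →₀ ℕ) : d.degree = ∑ i, d i :=
  Finset.sum_subset (Finset.subset_univ _)
    (by simp +contextual [Finsupp.notMem_support_iff])

/-- multiplying a block form with a decomposable form of the residual set -/
lemma mul_mem_Phi {Γ : Set (Projectivization k (Fin (n + 1) → k))} {m : ℕ}
    {B : Finset (Projectivization k (Fin (n + 1) → k))} (hBΓ : ↑B ⊆ Γ)
    {c : Fin (n + 1) → k} (hc : c ≠ 0)
    (hcv : ∀ P ∈ B, dotp c (Projectivization.rep P) = 0)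
    {D : MvPolynomial (Fin (n + 1)) k} (hD : D ∈ Phi k n (Γ \ ↑B) m) :
    lf c * D ∈ Phi k n Γ (m + 1) := by
  obtain ⟨⟨hDh, hDv⟩, hd, hdp, hdeq⟩ := hD
  replace hDh : D.IsHomogeneous m := hDh
  refine ⟨⟨?_, ?_⟩, Fin.cons (lf c) hd, ?_, ?_⟩
  · show lf c * D ∈ homogeneousSubmodule (Fin (n + 1)) k (m + 1)
    rw [mem_homogeneousSubmodule]
    have := (lf_isHomogeneous c).mul hDh
    rwa [add_comm 1 m] at this
  · intro P hP
    by_cases hPB : P ∈ B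
    · rw [map_mul, eval_lf, hcv P hPB, zero_mul]
    · rw [map_mul, hDv P ⟨hP, by simpa using hPB⟩, mul_zero]
  · intro i
    refine Fin.cases ?_ ?_ i
    · exact ⟨lf_ne_zero hc, lf_isHomogeneous c⟩
    · intro j
      simpa using hdp j
  · rw [Fin.prod_cons, hdeq]


lemma key_step {Γ : Set (Projectivization k (Fin (n + 1) → k))} {m : ℕ} (hn : 1 ≤ n) (hm : 1 ≤ m)
    (IH : ∀ Γ' : Set (Projectivization k (Fin (n + 1) → k)), Γ'.Finite → Γ'.ncard = m * n →
      LinGenPos k n Γ' → Submodule.span k (Phi k n Γ' m) = gradedVanishing k n Γ' m)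
    (hfin : Γ.Finite) (hcard : Γ.ncard = (m + 1) * n) (hlgp : LinGenPos k n Γ)
    (f : MvPolynomial (Fin (n + 1)) k →ₗ[k] k) (hf : ∀ G ∈ Phi k n Γ (m + 1), f G = 0) :
    ∀ F ∈ gradedVanishing k n Γ (m + 1), f F = 0 := by
  classical
  set pts := hfin.toFinset with hptsdef
  have hmemΓ : ∀ P, P ∈ pts ↔ P ∈ Γ := fun P => hfin.mem_toFinset
  have hptsΓ : ↑pts = Γ := hfin.coe_toFinset
  have hptscard : pts.card = (m + 1) * n := by
    rw [← Set.ncard_coe_finset pts, hptsΓ, hcard]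
  have hmul1 : (m + 1) * n = m * n + n := Nat.succ_mul m n
  have hmn : n ≤ m * n := Nat.le_mul_of_pos_left n (by omega)
  -- choice of block linear forms
  have hblockE : ∀ B : Finset (Projectivization k (Fin (n + 1) → k)),
      ∃ c : Fin (n + 1) → k, (↑B ⊆ Γ ∧ B.card = n) →
        (c ≠ 0 ∧ ∀ y, (dotp c y = 0 ↔
          y ∈ Submodule.span k (Projectivization.rep ''
            (B : Set (Projectivization k (Fin (n + 1) → k)))))) := by
    intro B
    by_cases h : ↑B ⊆ Γ ∧ B.card = n
    · obtain ⟨c, hc1, hc2⟩ := exists_block_form hlgp h.1 h.2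
      exact ⟨c, fun _ => ⟨hc1, hc2⟩⟩
    · exact ⟨0, fun hh => absurd hh h⟩
  choose cB hcB using hblockE
  have hdot0 : ∀ B : Finset (Projectivization k (Fin (n + 1) → k)), ↑B ⊆ Γ → B.card = n →
      ∀ P ∈ B, dotp (cB B) (Projectivization.rep P) = 0 :=
    fun B h1 h2 P hP => ((hcB B ⟨h1, h2⟩).2 _).mpr (Submodule.subset_span ⟨P, hP, rfl⟩)
  have hdotne : ∀ B : Finset (Projectivization k (Fin (n + 1) → k)), ↑B ⊆ Γ → B.card = n →
      ∀ P ∈ Γ, P ∉ B → dotp (cB B) (Projectivization.rep P) ≠ 0 := by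
    intro B h1 h2 P hPΓ hPB hdz
    exact rep_notMem_span hlgp h1 h2.le hPΓ hPB (((hcB B ⟨h1, h2⟩).2 _).mp hdz)
  -- choice of separators
  have hsepE : ∀ (ℓ : ℕ) (Δ : Finset (Projectivization k (Fin (n + 1) → k)))
      (w : Projectivization k (Fin (n + 1) → k)),
      ∃ F : MvPolynomial (Fin (n + 1)) k, (↑Δ ⊆ Γ ∧ Δ.card ≤ ℓ * n + 1 ∧ w ∈ Δ) →
        (F.IsHomogeneous ℓ ∧ (∀ u ∈ Δ, u ≠ w → eval (Projectivization.rep u) F = 0) ∧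
          eval (Projectivization.rep w) F ≠ 0) := by
    intro ℓ Δ w
    by_cases h : ↑Δ ⊆ Γ ∧ Δ.card ≤ ℓ * n + 1 ∧ w ∈ Δ
    · obtain ⟨F, h1, h2, h3⟩ := exists_separator hlgp ℓ Δ h.1 h.2.1 w h.2.2
      exact ⟨F, fun _ => ⟨h1, h2, h3⟩⟩
    · exact ⟨1, fun hh => absurd hh h⟩
  choose sep hsep using hsepE
  set cc : Finset (Projectivization k (Fin (n + 1) → k)) →
      Projectivization k (Fin (n + 1) → k) → k := fun B w =>
    f (lf (cB B) * sep m (pts \ B) w) / eval (Projectivization.rep w) (sep m (pts \ B) w)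
    with hccdef
  -- λ_B kills the vanishing ideal of the complementary points
  have hkill : ∀ B : Finset (Projectivization k (Fin (n + 1) → k)), ↑B ⊆ Γ → B.card = n →
      ∀ G ∈ gradedVanishing k n (Γ \ ↑B) m, f (lf (cB B) * G) = 0 := by
    intro B h1 h2 G hG
    have hfin' : (Γ \ ↑B).Finite := hfin.diff
    have hcard' : (Γ \ ↑B).ncard = m * n := by
      rw [Set.ncard_diff h1, hcard, Set.ncard_coe_finset, h2, hmul1, Nat.add_sub_cancel]
    have hlgp' : LinGenPos k n (Γ \ ↑B) := fun s hs hc => hlgp s (hs.trans Set.diff_subset) hc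
    rw [← IH _ hfin' hcard' hlgp'] at hG
    have hle : Submodule.span k (Phi k n (Γ \ ↑B) m) ≤
        LinearMap.ker (f ∘ₗ LinearMap.mulLeft k (lf (cB B))) := by
      rw [Submodule.span_le]
      intro D hD
      simp only [SetLike.mem_coe, LinearMap.mem_ker, LinearMap.coe_comp, Function.comp_apply,
        LinearMap.mulLeft_apply]
      exact hf _ (mul_mem_Phi h1 (hcB B ⟨h1, h2⟩).1 (hdot0 B h1 h2) hD)
    have := hle hG
    simpa using this
  have hBpts : ∀ B : Finset (Projectivization k (Fin (n + 1) → k)), ↑B ⊆ Γ → B ⊆ pts := by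
    intro B h1
    rw [← Finset.coe_subset, hptsΓ]
    exact h1
  -- K1 : value of λ_B on arbitrary homogeneous G of degree m
  have hK1 : ∀ B : Finset (Projectivization k (Fin (n + 1) → k)), ↑B ⊆ Γ → B.card = n →
      ∀ G : MvPolynomial (Fin (n + 1)) k, G.IsHomogeneous m →
      f (lf (cB B) * G) = ∑ w ∈ pts \ B, cc B w * eval (Projectivization.rep w) G := by
    intro B h1 h2 G hG
    set Δ := pts \ B with hΔdef
    have hΔΓ : ↑Δ ⊆ Γ := by
      intro x hx
      rw [← hptsΓ]
      exact_mod_cast Finset.sdiff_subset (by exact_mod_cast hx)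
    have hΔcard : Δ.card ≤ m * n + 1 := by
      rw [hΔdef, Finset.card_sdiff_of_subset (hBpts B h1), hptscard, h2]
      omega
    have hprops := fun w hw => hsep m Δ w ⟨hΔΓ, hΔcard, hw⟩
    set G' := G - ∑ w ∈ Δ, (eval (Projectivization.rep w) G /
      eval (Projectivization.rep w) (sep m Δ w)) • sep m Δ w with hG'def
    have hG'mem : G' ∈ gradedVanishing k n (Γ \ ↑B) m := by
      refine ⟨?_, ?_⟩
      · show G' ∈ homogeneousSubmodule (Fin (n + 1)) k m
        rw [mem_homogeneousSubmodule, hG'def]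
        refine hG.sub (IsHomogeneous.sum _ _ _ fun w hw => ?_)
        rw [smul_eq_C_mul]
        exact ((hprops w hw).1).C_mul _
      · intro P hP
        have hPΔ : P ∈ Δ := by
          rw [hΔdef, Finset.mem_sdiff]
          refine ⟨(hmemΓ P).mpr hP.1, ?_⟩
          simpa using hP.2
        rw [hG'def, map_sub, map_sum, Finset.sum_eq_single_of_mem P hPΔ]
        · rw [smul_eval, div_mul_cancel₀ _ (hprops P hPΔ).2.2]
          exact sub_self _
        · intro w hw hne
          rw [smul_eval, (hprops w hw).2.1 P hPΔ (Ne.symm hne), mul_zero]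
    have h0 := hkill B h1 h2 G' hG'mem
    rw [hG'def, mul_sub, Finset.mul_sum, map_sub, map_sum] at h0
    have hterm : ∀ w ∈ Δ, f (lf (cB B) * ((eval (Projectivization.rep w) G /
        eval (Projectivization.rep w) (sep m Δ w)) • sep m Δ w))
        = cc B w * eval (Projectivization.rep w) G := by
      intro w hw
      rw [mul_smul_comm, map_smul, smul_eq_mul, hccdef]
      ring
    rw [Finset.sum_congr rfl hterm] at h0
    exact sub_eq_zero.mp h0
  -- K2 : pair relation for nearly-disjoint blocks
  have hK2 : ∀ B B' : Finset (Projectivization k (Fin (n + 1) → k)),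
      ↑B ⊆ Γ → B.card = n → ↑B' ⊆ Γ → B'.card = n → (B ∩ B').card ≤ 1 →
      ∀ w ∈ pts, w ∉ B → w ∉ B' →
      cc B w * dotp (cB B') (Projectivization.rep w)
        = cc B' w * dotp (cB B) (Projectivization.rep w) := by
    intro B B' hB1 hB2 hB'1 hB'2 hint w hwpts hwB hwB'
    set Δ := pts \ (B ∪ B') with hΔdef
    have hwΔ : w ∈ Δ := Finset.mem_sdiff.mpr ⟨hwpts, by simp [hwB, hwB']⟩
    have hΔΓ : ↑Δ ⊆ Γ := by
      intro x hx
      rw [← hptsΓ]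
      exact_mod_cast Finset.sdiff_subset (by exact_mod_cast hx)
    have hcardΔ : Δ.card ≤ (m - 1) * n + 1 := by
      have h3 := Finset.card_union_add_card_inter B B'
      have h4 : Δ.card = pts.card - (B ∪ B').card :=
        Finset.card_sdiff_of_subset (Finset.union_subset (hBpts B hB1) (hBpts B' hB'1))
      have h5 : (m + 1) * n = (m - 1) * n + 2 * n := by
        have hmm : m + 1 = (m - 1) + 2 := by omega
        rw [hmm]; ring
      omega
    obtain ⟨hSh, hSv, hSw⟩ := hsep (m - 1) Δ w ⟨hΔΓ, hcardΔ, hwΔ⟩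
    set S := sep (m - 1) Δ w with hSdef
    have h1m : (1 : ℕ) + (m - 1) = m := by omega
    have key : ∀ Ba Bb : Finset (Projectivization k (Fin (n + 1) → k)),
        Ba ∪ Bb = B ∪ B' →
        ↑Ba ⊆ Γ → Ba.card = n → ↑Bb ⊆ Γ → Bb.card = n → w ∉ Ba →
        f (lf (cB Ba) * (lf (cB Bb) * S)) = cc Ba w *
          (dotp (cB Bb) (Projectivization.rep w) * eval (Projectivization.rep w) S) := by
      intro Ba Bb hU ha1 ha2 hb1 hb2 hwa
      rw [hK1 Ba ha1 ha2 _ (by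
        have := (lf_isHomogeneous (cB Bb)).mul hSh
        rwa [h1m] at this)]
      rw [Finset.sum_eq_single_of_mem w (Finset.mem_sdiff.mpr ⟨hwpts, hwa⟩)]
      · rw [map_mul, eval_lf]
      · intro u hu hne
        obtain ⟨hupts, huBa⟩ := Finset.mem_sdiff.mp hu
        rw [map_mul, eval_lf]
        by_cases huBb : u ∈ Bb
        · rw [hdot0 Bb hb1 hb2 u huBb, zero_mul, mul_zero]
        · have huΔ : u ∈ Δ := by
            rw [hΔdef, Finset.mem_sdiff, ← hU, Finset.mem_union]
            exact ⟨hupts, by tauto⟩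
          rw [hSv u huΔ hne, mul_zero, mul_zero]
    have e1 := key B B' rfl hB1 hB2 hB'1 hB'2 hwB
    have e2 := key B' B (Finset.union_comm B' B) hB'1 hB'2 hB1 hB2 hwB'
    have e3 : lf (cB B) * (lf (cB B') * S) = lf (cB B') * (lf (cB B) * S) := by ring
    rw [e3, e2] at e1
    have e4 : cc B' w * dotp (cB B) (Projectivization.rep w) * eval (Projectivization.rep w) S
        = cc B w * dotp (cB B') (Projectivization.rep w) * eval (Projectivization.rep w) S := by
      rw [mul_assoc, mul_assoc]
      exact e1
    exact (mul_right_cancel₀ hSw e4).symm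
  -- K3 : relation for all pairs of blocks, by a chain of swaps
  have hK3 : ∀ N : ℕ, ∀ w ∈ pts, ∀ B B' : Finset (Projectivization k (Fin (n + 1) → k)),
      (B \ B').card ≤ N → ↑B ⊆ Γ → B.card = n → ↑B' ⊆ Γ → B'.card = n → w ∉ B → w ∉ B' →
      cc B w * dotp (cB B') (Projectivization.rep w)
        = cc B' w * dotp (cB B) (Projectivization.rep w) := by
    intro N
    induction N with
    | zero =>
      intro w hw B B' hd hB1 hB2 hB'1 hB'2 hwB hwB'
      have hBB' : B = B' := by
        apply Finset.eq_of_subset_of_card_le _ (by omega)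
        intro x hx
        by_contra hx'
        have hmem : x ∈ B \ B' := Finset.mem_sdiff.mpr ⟨hx, hx'⟩
        have : B \ B' = ∅ := Finset.card_eq_zero.mp (Nat.le_zero.mp hd)
        rw [this] at hmem
        exact absurd hmem (Finset.notMem_empty x)
      rw [hBB']
    | succ N ihN =>
      intro w hw B B' hd hB1 hB2 hB'1 hB'2 hwB hwB'
      by_cases hBB' : B = B'
      · rw [hBB']
      by_cases hint : (B ∩ B').card ≤ 1
      · exact hK2 B B' hB1 hB2 hB'1 hB'2 hint w hw hwB hwB'
      push_neg at hint
      have hn2 : 2 ≤ n := le_trans hint (le_trans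
        (Finset.card_le_card (Finset.inter_subset_left)) (le_of_eq hB2))
      have hwΓ : w ∈ Γ := (hmemΓ w).mp hw
      -- pick exchange elements
      have hBne : (B \ B').Nonempty := by
        rw [Finset.sdiff_nonempty]
        intro hsub
        exact hBB' (Finset.eq_of_subset_of_card_le hsub (by omega))
      have hB'ne : (B' \ B).Nonempty := by
        rw [Finset.sdiff_nonempty]
        intro hsub
        exact hBB' (Finset.eq_of_subset_of_card_le hsub (by omega)).symm
      obtain ⟨x, hx⟩ := hBne
      obtain ⟨y, hy⟩ := hB'ne
      obtain ⟨hxB, hxB'⟩ := Finset.mem_sdiff.mp hx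
      obtain ⟨hyB', hyB⟩ := Finset.mem_sdiff.mp hy
      have hxΓ : x ∈ Γ := hB1 hxB
      have hyΓ : y ∈ Γ := hB'1 hyB'
      have hywne : y ≠ w := fun h => hwB' (h ▸ hyB')
      have hxwne : x ≠ w := fun h => hwB (h ▸ hxB)
      -- the auxiliary sets
      have hyE : y ∈ (pts \ B).erase w := by
        rw [Finset.mem_erase, Finset.mem_sdiff]
        exact ⟨hywne, (hmemΓ y).mpr hyΓ, hyB⟩
      have hEcard : n - 2 ≤ (((pts \ B).erase w).erase y).card := by
        rw [Finset.card_erase_of_mem hyE, Finset.card_erase_of_mem (by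
          rw [Finset.mem_sdiff]; exact ⟨hw, hwB⟩), Finset.card_sdiff_of_subset (hBpts B hB1),
          hptscard, hB2]
        omega
      obtain ⟨C0, hC0sub, hC0card⟩ := Finset.exists_subset_card_eq hEcard
      set C : Finset (Projectivization k (Fin (n + 1) → k)) := insert y C0 with hCdef
      have hCsub : C ⊆ (pts \ B).erase w := by
        rw [hCdef]
        exact Finset.insert_subset hyE (hC0sub.trans (Finset.erase_subset _ _))
      have hCcard : C.card = n - 1 := by
        rw [hCdef, Finset.card_insert_of_notMem (fun h => Finset.notMem_erase y _ (hC0sub h)),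
          hC0card]
        omega
      have hCnB : ∀ z ∈ C, z ∉ B := by
        intro z hz
        have := hCsub hz
        rw [Finset.mem_erase, Finset.mem_sdiff] at this
        exact this.2.2
      have hCpts : ∀ z ∈ C, z ∈ pts := by
        intro z hz
        have := hCsub hz
        rw [Finset.mem_erase, Finset.mem_sdiff] at this
        exact this.2.1
      have hCw : w ∉ C := fun h => (Finset.mem_erase.mp (hCsub h)).1 rfl
      have hxC : x ∉ C := fun h => hCnB x h hxB
      set Z : Finset (Projectivization k (Fin (n + 1) → k)) := insert x C with hZdef
      have hZcard : Z.card = n := by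
        rw [hZdef, Finset.card_insert_of_notMem hxC, hCcard]
        omega
      have hZΓ : ↑Z ⊆ Γ := by
        rw [hZdef]
        intro z hz
        simp only [Finset.coe_insert, Set.mem_insert_iff] at hz
        rcases hz with rfl | hz
        · exact hxΓ
        · exact (hmemΓ z).mp (hCpts z (by exact_mod_cast hz))
      have hwZ : w ∉ Z := by
        rw [hZdef, Finset.mem_insert]
        push_neg
        exact ⟨Ne.symm hxwne, hCw⟩
      set T : Finset (Projectivization k (Fin (n + 1) → k)) := insert y (B.erase x) with hTdef
      have hyBex : y ∉ B.erase x := fun h => hyB (Finset.erase_subset _ _ h)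
      have hTcard : T.card = n := by
        rw [hTdef, Finset.card_insert_of_notMem hyBex, Finset.card_erase_of_mem hxB, hB2]
        omega
      have hTΓ : ↑T ⊆ Γ := by
        rw [hTdef]
        intro z hz
        simp only [Finset.coe_insert, Set.mem_insert_iff] at hz
        rcases hz with rfl | hz
        · exact hyΓ
        · exact hB1 (Finset.erase_subset _ _ (by exact_mod_cast hz))
      have hwT : w ∉ T := by
        rw [hTdef, Finset.mem_insert]
        push_neg
        exact ⟨Ne.symm hywne, fun h => hwB (Finset.erase_subset _ _ h)⟩
      -- intersection bounds
      have hBZ : (B ∩ Z).card ≤ 1 := by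
        refine le_trans (Finset.card_le_card (fun z hz => ?_)) (le_of_eq (Finset.card_singleton x))
        obtain ⟨hz1, hz2⟩ := Finset.mem_inter.mp hz
        rw [hZdef, Finset.mem_insert] at hz2
        rcases hz2 with rfl | hz2
        · exact Finset.mem_singleton_self _
        · exact absurd hz1 (hCnB z hz2)
      have hZT : (Z ∩ T).card ≤ 1 := by
        refine le_trans (Finset.card_le_card (fun z hz => ?_)) (le_of_eq (Finset.card_singleton y))
        obtain ⟨hz1, hz2⟩ := Finset.mem_inter.mp hz
        rw [hZdef, Finset.mem_insert] at hz1
        rw [hTdef, Finset.mem_insert] at hz2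
        rcases hz2 with rfl | hz2
        · exact Finset.mem_singleton_self _
        · rcases hz1 with rfl | hz1
          · exact absurd hz2 (Finset.notMem_erase _ _)
          · exact absurd (Finset.erase_subset _ _ hz2) (hCnB z hz1)
      have hTB' : (T \ B').card ≤ N := by
        have hsub : T \ B' ⊆ (B \ B').erase x := by
          intro z hz
          obtain ⟨hz1, hz2⟩ := Finset.mem_sdiff.mp hz
          rw [hTdef, Finset.mem_insert] at hz1
          rcases hz1 with rfl | hz1
          · exact absurd hyB' hz2
          · rw [Finset.mem_erase] at hz1 ⊢
            exact ⟨hz1.1, Finset.mem_sdiff.mpr ⟨hz1.2, hz2⟩⟩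
        have hcx : x ∈ B \ B' := Finset.mem_sdiff.mpr ⟨hxB, hxB'⟩
        have := Finset.card_le_card hsub
        rw [Finset.card_erase_of_mem hcx] at this
        omega
      -- the three relations
      have r1 := hK2 B Z hB1 hB2 hZΓ hZcard hBZ w hw hwB hwZ
      have r2 := hK2 Z T hZΓ hZcard hTΓ hTcard hZT w hw hwZ hwT
      have r3 := ihN w hw T B' hTB' hTΓ hTcard hB'1 hB'2 hwT hwB'
      have hdZ := hdotne Z hZΓ hZcard w hwΓ hwZ
      have hdT := hdotne T hTΓ hTcard w hwΓ hwT
      apply mul_right_cancel₀ (mul_ne_zero hdZ hdT)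
      linear_combination (dotp (cB B') (Projectivization.rep w) *
          dotp (cB T) (Projectivization.rep w)) * r1 +
        (dotp (cB B) (Projectivization.rep w) *
          dotp (cB B') (Projectivization.rep w)) * r2 +
        (dotp (cB Z) (Projectivization.rep w) *
          dotp (cB B) (Projectivization.rep w)) * r3
  -- the coefficients d
  have hBwE : ∀ w : Projectivization k (Fin (n + 1) → k),
      ∃ B : Finset (Projectivization k (Fin (n + 1) → k)),
        w ∈ pts → (↑B ⊆ Γ ∧ B.card = n ∧ w ∉ B) := by
    intro w
    by_cases hw : w ∈ pts
    · obtain ⟨B, hBsub, hBcard⟩ := Finset.exists_subset_card_eq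
        (show n ≤ (pts.erase w).card by
          rw [Finset.card_erase_of_mem hw, hptscard]; omega)
      refine ⟨B, fun _ => ⟨?_, hBcard, fun hwB => Finset.notMem_erase w pts (hBsub hwB)⟩⟩
      rw [← hptsΓ]
      exact_mod_cast fun x hx => (Finset.erase_subset _ _) (hBsub hx)
    · exact ⟨∅, fun h => absurd h hw⟩
  choose Bw hBw using hBwE
  set d : Projectivization k (Fin (n + 1) → k) → k := fun w =>
    cc (Bw w) w / dotp (cB (Bw w)) (Projectivization.rep w) with hddef
  have hK5 : ∀ B : Finset (Projectivization k (Fin (n + 1) → k)), ↑B ⊆ Γ → B.card = n →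
      ∀ w ∈ pts, w ∉ B →
      cc B w = d w * dotp (cB B) (Projectivization.rep w) := by
    intro B hB1 hB2 w hw hwB
    obtain ⟨hw1, hw2, hw3⟩ := hBw w hw
    have h := hK3 ((B \ Bw w).card) w hw B (Bw w) le_rfl hB1 hB2 hw1 hw2 hwB hw3
    have hne := hdotne (Bw w) hw1 hw2 w ((hmemΓ w).mp hw) hw3
    rw [hddef]
    field_simp
    linear_combination h
  -- K6
  have hK6 : ∀ B : Finset (Projectivization k (Fin (n + 1) → k)), ↑B ⊆ Γ → B.card = n →
      ∀ G : MvPolynomial (Fin (n + 1)) k, G.IsHomogeneous m →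
      f (lf (cB B) * G) = ∑ w ∈ pts,
        d w * dotp (cB B) (Projectivization.rep w) * eval (Projectivization.rep w) G := by
    intro B hB1 hB2 G hG
    rw [hK1 B hB1 hB2 G hG,
      Finset.sum_congr rfl (fun w hw => by
        rw [hK5 B hB1 hB2 w (Finset.mem_sdiff.mp hw).1 (Finset.mem_sdiff.mp hw).2])]
    refine Finset.sum_subset Finset.sdiff_subset (fun w hwp hwn => ?_)
    have hwB : w ∈ B := by
      by_contra hc
      exact hwn (Finset.mem_sdiff.mpr ⟨hwp, hc⟩)
    rw [hdot0 B hB1 hB2 w hwB, mul_zero, zero_mul]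
  -- the simplex of n+1 points and the resulting span of block forms
  have hXi : ∀ i : Fin (n + 1), ∀ G : MvPolynomial (Fin (n + 1)) k, G.IsHomogeneous m →
      f (X i * G) = ∑ w ∈ pts,
        d w * (Projectivization.rep w i) * eval (Projectivization.rep w) G := by
    have hscard' : n + 1 ≤ pts.card := by rw [hptscard]; omega
    obtain ⟨s, hspts, hscard⟩ := Finset.exists_subset_card_eq hscard'
    have hsΓ : ↑s ⊆ Γ := by
      rw [← hptsΓ]
      exact_mod_cast hspts
    have hsli := hlgp s hsΓ hscard.le
    haveI : Nonempty ↥s := Finset.nonempty_coe_sort.mpr (Finset.card_pos.mp (by omega))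
    have hstop : Submodule.span k (Projectivization.rep ''
        (s : Set (Projectivization k (Fin (n + 1) → k)))) = ⊤ := by
      rw [← range_eq_image s]
      apply LinearIndependent.span_eq_top_of_card_eq_finrank hsli
      rw [Fintype.card_coe, hscard, Module.finrank_fin_fun]
    have hBj : ∀ j ∈ s, ↑(s.erase j) ⊆ Γ ∧ (s.erase j).card = n := by
      intro j hj
      refine ⟨fun z hz => hsΓ (by exact_mod_cast Finset.erase_subset _ _ (by exact_mod_cast hz)), ?_⟩
      rw [Finset.card_erase_of_mem hj, hscard]
      omega
    have hdenne : ∀ j ∈ s, dotp (cB (s.erase j)) (Projectivization.rep j) ≠ 0 := fun j hj =>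
      hdotne _ (hBj j hj).1 (hBj j hj).2 j (hsΓ hj) (Finset.notMem_erase j s)
    have hexp : ∀ i0 : Fin (n + 1), (Pi.single i0 1 : Fin (n + 1) → k)
        = ∑ j ∈ s, (Projectivization.rep j i0 /
            dotp (cB (s.erase j)) (Projectivization.rep j)) • cB (s.erase j) := by
      intro i0
      set u : Fin (n + 1) → k := (Pi.single i0 1 : Fin (n + 1) → k) -
        ∑ j ∈ s, (Projectivization.rep j i0 /
          dotp (cB (s.erase j)) (Projectivization.rep j)) • cB (s.erase j) with hudef
      have hu0 : ∀ j0 ∈ s, dotp u (Projectivization.rep j0) = 0 := by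
        intro j0 hj0
        rw [hudef, dotp_sub, dotp_single_left, dotp_finsum, Finset.sum_eq_single_of_mem j0 hj0]
        · rw [dotp_smul_left, div_mul_cancel₀ _ (hdenne j0 hj0)]
          exact sub_self _
        · intro j hj hne
          rw [dotp_smul_left, hdot0 (s.erase j) (hBj j hj).1 (hBj j hj).2 j0
            (Finset.mem_erase.mpr ⟨Ne.symm hne, hj0⟩), mul_zero]
      have huall : ∀ y, dotp u y = 0 := by
        intro y
        have hy : y ∈ Submodule.span k (Projectivization.rep ''
            (s : Set (Projectivization k (Fin (n + 1) → k)))) := by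
          rw [hstop]; exact Submodule.mem_top
        refine Submodule.span_induction ?_ ?_ ?_ ?_ hy
        · rintro z ⟨q, hq, rfl⟩
          exact hu0 q hq
        · exact dotp_zero_right u
        · intro a b _ _ ha hb
          rw [dotp_add_right, ha, hb, add_zero]
        · intro t a _ ha
          rw [dotp_smul_right, ha, mul_zero]
      have hu : u = 0 := funext fun i' => by
        rw [show u i' = dotp u (Pi.single i' 1) from (dotp_single u i').symm]
        exact huall _
      rw [hudef] at hu
      exact sub_eq_zero.mp hu
    intro i G hG
    have hXlf : (X i : MvPolynomial (Fin (n + 1)) k)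
        = ∑ j ∈ s, (Projectivization.rep j i /
            dotp (cB (s.erase j)) (Projectivization.rep j)) • lf (cB (s.erase j)) := by
      rw [← lf_single i, hexp i, lf_sum]
      exact Finset.sum_congr rfl fun j _ => lf_smul _ _
    rw [hXlf, Finset.sum_mul, map_sum]
    have hterm : ∀ j ∈ s, f ((Projectivization.rep j i /
          dotp (cB (s.erase j)) (Projectivization.rep j)) • lf (cB (s.erase j)) * G)
        = ∑ w ∈ pts, d w * ((Projectivization.rep j i /
            dotp (cB (s.erase j)) (Projectivization.rep j)) *
            dotp (cB (s.erase j)) (Projectivization.rep w)) * eval (Projectivization.rep w) G := by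
      intro j hj
      rw [smul_mul_assoc, map_smul, smul_eq_mul, hK6 _ (hBj j hj).1 (hBj j hj).2 G hG,
        Finset.mul_sum]
      exact Finset.sum_congr rfl fun w _ => by ring
    rw [Finset.sum_congr rfl hterm, Finset.sum_comm]
    refine Finset.sum_congr rfl fun w hw => ?_
    have hsum : ∑ j ∈ s, (Projectivization.rep j i /
          dotp (cB (s.erase j)) (Projectivization.rep j)) *
          dotp (cB (s.erase j)) (Projectivization.rep w)
        = Projectivization.rep w i := by
      rw [show Projectivization.rep w i = dotp (Pi.single i 1) (Projectivization.rep w) from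
        (dotp_single_left i (Projectivization.rep w)).symm, hexp i, dotp_finsum]
      exact Finset.sum_congr rfl fun j _ => (dotp_smul_left _ _ _).symm
    rw [← hsum, Finset.mul_sum, Finset.sum_mul]
  -- extension to all homogeneous polynomials of degree m+1
  have hK8 : ∀ F' : MvPolynomial (Fin (n + 1)) k, F'.IsHomogeneous (m + 1) →
      f F' = ∑ w ∈ pts, d w * eval (Projectivization.rep w) F' := by
    intro F' hF'
    have hmono : ∀ dd ∈ F'.support, f (monomial dd (coeff dd F'))
        = ∑ w ∈ pts, d w * eval (Projectivization.rep w) (monomial dd (coeff dd F')) := by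
      intro dd hdd
      have hdeg : dd.degree = m + 1 := by
        by_contra hne
        exact (mem_support_iff.mp hdd) (hF'.coeff_eq_zero hne)
      have hex : ∃ i, dd i ≠ 0 := by
        by_contra h
        push_neg at h
        have : dd.degree = 0 := by
          rw [degree_fintype]
          exact Finset.sum_eq_zero fun i _ => h i
        omega
      obtain ⟨i, hi⟩ := hex
      set ee := dd - Finsupp.single i 1 with heedef
      have hee : ee + Finsupp.single i 1 = dd := by
        ext j
        rw [heedef]
        simp only [Finsupp.add_apply, Finsupp.tsub_apply, Finsupp.single_apply]
        by_cases hji : i = j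
        · subst hji
          rw [if_pos rfl]
          omega
        · rw [if_neg hji]
          omega
      have hmon : monomial dd (coeff dd F') = X i * monomial ee (coeff dd F') := by
        rw [X, monomial_mul, one_mul, add_comm (Finsupp.single i 1) ee, hee]
      have heedeg : ee.degree = m := by
        have h1 : dd.degree = ee.degree + 1 := by
          rw [← hee, degree_fintype, degree_fintype]
          simp only [Finsupp.add_apply]
          rw [Finset.sum_add_distrib]
          congr 1
          simp [Finsupp.single_apply]
        omega
      rw [hmon, hXi i _ (isHomogeneous_monomial _ heedeg)]
      refine Finset.sum_congr rfl fun w hw => ?_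
      rw [map_mul, eval_X]
      ring
    calc f F' = ∑ dd ∈ F'.support, f (monomial dd (coeff dd F')) := by
          rw [← map_sum, support_sum_monomial_coeff F']
      _ = ∑ dd ∈ F'.support, ∑ w ∈ pts, d w *
            eval (Projectivization.rep w) (monomial dd (coeff dd F')) :=
          Finset.sum_congr rfl hmono
      _ = ∑ w ∈ pts, ∑ dd ∈ F'.support, d w *
            eval (Projectivization.rep w) (monomial dd (coeff dd F')) := Finset.sum_comm
      _ = ∑ w ∈ pts, d w * eval (Projectivization.rep w) F' := by
          refine Finset.sum_congr rfl fun w hw => ?_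
          rw [← Finset.mul_sum, ← map_sum, support_sum_monomial_coeff F']
  -- conclusion
  intro F hF
  have hFh : F.IsHomogeneous (m + 1) := hF.1
  rw [hK8 F hFh]
  refine Finset.sum_eq_zero (fun w hw => ?_)
  rw [hF.2 w ((hmemΓ w).mp hw), mul_zero]


lemma span_phi_le {Γ : Set (Projectivization k (Fin (n + 1) → k))} {ℓ : ℕ} :
    Submodule.span k (Phi k n Γ ℓ) ≤ gradedVanishing k n Γ ℓ :=
  Submodule.span_le.mpr fun _ hF => hF.1

lemma phi_span_eq (hn : 1 ≤ n) : ∀ m : ℕ, 1 ≤ m →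
    ∀ Γ : Set (Projectivization k (Fin (n + 1) → k)), Γ.Finite → Γ.ncard = m * n →
    LinGenPos k n Γ → Submodule.span k (Phi k n Γ m) = gradedVanishing k n Γ m := by
  intro m
  induction m with
  | zero => omega
  | succ m ihm =>
    intro _ Γ hfin hcard hlgp
    refine le_antisymm span_phi_le ?_
    rcases Nat.eq_zero_or_pos m with rfl | hm
    · intro F hF
      by_cases hF0 : F = 0
      · rw [hF0]
        exact Submodule.zero_mem _
      · refine Submodule.subset_span ⟨hF, fun _ => F, fun _ => ⟨hF0, hF.1⟩, ?_⟩
        rw [Fin.prod_univ_one]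
    · intro F hF
      by_contra hFW
      obtain ⟨f, hfF, hfmap⟩ := Submodule.exists_dual_map_eq_bot_of_notMem hFW
        inferInstance
      have hfPhi : ∀ G ∈ Phi k n Γ (m + 1), f G = 0 := by
        intro G hG
        have hmem : f G ∈ (Submodule.span k (Phi k n Γ (m + 1))).map f :=
          ⟨G, Submodule.subset_span hG, rfl⟩
        rw [hfmap] at hmem
        simpa using hmem
      exact hfF (key_step hn hm (fun Γ' a b c => ihm hm Γ' a b c) hfin hcard hlgp f hfPhi F hF)


end Aux

/-- If `Γ ⊆ ℙⁿ` is a finite set of exactly `d = mn` points in linearly general position,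
`m ≥ 2`, then `Φ(Γ)_m` generates `I(Γ)_m` as a `k`-vector space. -/
theorem phi_spans_d_eq_mn (k : Type*) [Field k] [IsAlgClosed k] (n m : ℕ) (hn : 1 ≤ n)
    (hm : 2 ≤ m) (Γ : Set (Projectivization k (Fin (n + 1) → k)))
    (hfin : Γ.Finite) (hcard : Γ.ncard = m * n) (hlgp : LinGenPos k n Γ) :
    Submodule.span k (Phi k n Γ m) = gradedVanishing k n Γ m :=
  phi_span_eq hn m (by omega) Γ hfin hcard hlgp
end
end

section
/- Let Γ ⊆ Pⁿ be a finite set of d points in linearly general position and let ℓ be an integer with ℓ ≥ ⌈d/n⌉ (equivalently d ≤ ℓn). Then Φ(Γ)_ℓ generates I(Γ)_ℓ as a k-vector space. -/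
open MvPolynomial

noncomputable section

namespace PhiSpanAux

variable {k : Type*} [Field k]

/-- The linear form with coefficient vector `c`. -/
def linOfVec {m : ℕ} (c : Fin m → k) : MvPolynomial (Fin m) k :=
  ∑ i, MvPolynomial.C (c i) * MvPolynomial.X i

lemma eval_linOfVec {m : ℕ} (c v : Fin m → k) :
    eval v (linOfVec c) = ∑ i, c i * v i := by
  simp [linOfVec]

lemma linOfVec_isHomogeneous {m : ℕ} (c : Fin m → k) :
    (linOfVec c).IsHomogeneous 1 := by
  apply IsHomogeneous.sum
  intro i _
  simpa using (isHomogeneous_C (Fin m) (c i)).mul (isHomogeneous_X k i)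

lemma degree_one_eq_single {σ : Type*} [DecidableEq σ] (d : σ →₀ ℕ) (h : d.degree = 1) :
    ∃ i, d = Finsupp.single i 1 := by
  have h2 : Multiset.card d.toMultiset = 1 := by
    rw [Finsupp.card_toMultiset]; simpa [Finsupp.degree_apply, Finsupp.sum] using h
  obtain ⟨a, ha⟩ := Multiset.card_eq_one.mp h2
  refine ⟨a, ?_⟩
  rw [← Finsupp.toMultiset_toFinsupp d, ha, Multiset.toFinsupp_singleton]

/-- Any homogeneous polynomial of degree 1 is a linear form. -/
lemma isHomogeneous_one_repr {m : ℕ} {h : MvPolynomial (Fin m) k}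
    (hh : h.IsHomogeneous 1) :
    h = linOfVec (fun i => h.coeff (Finsupp.single i 1)) := by
  apply MvPolynomial.ext
  intro d
  rw [linOfVec, coeff_sum]
  by_cases hd : d.degree = 1
  · obtain ⟨i, rfl⟩ := degree_one_eq_single d hd
    rw [Finset.sum_eq_single i]
    · simp [coeff_C_mul, coeff_X']
    · intro j _ hj
      rw [coeff_C_mul, coeff_X', if_neg, mul_zero]
      intro hji
      exact hj ((Finsupp.single_left_inj (one_ne_zero : (1:ℕ) ≠ 0)).mp hji)
    · intro hi; exact absurd (Finset.mem_univ i) hi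
  · rw [hh.coeff_eq_zero hd]
    symm
    apply Finset.sum_eq_zero
    intro j _
    rw [coeff_C_mul, coeff_X', if_neg, mul_zero]
    intro hj
    apply hd
    rw [← hj]
    simp [Finsupp.degree_apply, Finsupp.support_single_ne_zero]

end PhiSpanAux

namespace PhiSpanAux

variable {k : Type*} [Field k]

lemma linOfVec_zero {m : ℕ} : linOfVec (0 : Fin m → k) = 0 := by
  simp [linOfVec]

/-- A homogeneous degree-1 polynomial is given by a linear functional. -/
lemma exists_functional {m : ℕ} {h : MvPolynomial (Fin m) k} (hh : h.IsHomogeneous 1) :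
    ∃ φ : (Fin m → k) →ₗ[k] k, (∀ v, eval v h = φ v) ∧ (h ≠ 0 → φ ≠ 0) := by
  set c : Fin m → k := fun i => h.coeff (Finsupp.single i 1) with hc
  refine ⟨∑ i, c i • (LinearMap.proj i : (Fin m → k) →ₗ[k] k), ?_, ?_⟩
  · intro v
    rw [isHomogeneous_one_repr hh, eval_linOfVec]
    simp [smul_eq_mul, hc]
  · intro hne hphi
    apply hne
    rw [isHomogeneous_one_repr hh]
    have hz : ∀ i, c i = 0 := by
      intro i
      have := congrArg (fun ψ : (Fin m → k) →ₗ[k] k => ψ (Pi.single i 1)) hphi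
      simpa [smul_eq_mul, Pi.single_apply, Finset.sum_ite_eq'] using this
    have : (fun i => h.coeff (Finsupp.single i 1)) = (0 : Fin m → k) := funext hz
    rw [this, linOfVec_zero]

/-- A functional from a coefficient description. -/
lemma eval_linOfVec_functional {m : ℕ} (φ : (Fin m → k) →ₗ[k] k) (v : Fin m → k) :
    eval v (linOfVec (fun i => φ (fun j => if i = j then (1:k) else 0))) = φ v := by
  rw [eval_linOfVec, LinearMap.pi_apply_eq_sum_univ φ v]
  exact Finset.sum_congr rfl fun i _ => by rw [smul_eq_mul, mul_comm]

end PhiSpanAux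

namespace PhiSpanAux

variable {k : Type*} [Field k] {n : ℕ}

/-- A nonzero linear form vanishes on at most `n` points of `Γ`. -/
lemma card_vanishing_le {Γ : Set (Projectivization k (Fin (n + 1) → k))}
    (hlgp : LinGenPos k n Γ) {h : MvPolynomial (Fin (n + 1)) k} (hne : h ≠ 0)
    (hh : h.IsHomogeneous 1) (s : Finset (Projectivization k (Fin (n + 1) → k)))
    (hs : ↑s ⊆ Γ) (hv : ∀ q ∈ s, eval (Projectivization.rep q) h = 0) :
    s.card ≤ n := by
  by_contra hlt
  push_neg at hlt
  obtain ⟨t, hts, htc⟩ := Finset.exists_subset_card_eq (Nat.succ_le_of_lt hlt)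
  obtain ⟨φ, hev, hphi⟩ := exists_functional hh
  have hphi0 := hphi hne
  have hind : LinearIndependent k
      (fun q : t => Projectivization.rep (q : Projectivization k (Fin (n+1) → k))) :=
    hlgp t (le_trans (Finset.coe_subset.mpr hts) hs) (le_of_eq htc)
  -- the reps lie in the kernel of φ
  have hker : ∀ q : t, Projectivization.rep (q : Projectivization k (Fin (n+1) → k))
      ∈ LinearMap.ker φ := by
    intro q
    rw [LinearMap.mem_ker, ← hev]
    exact hv q (hts q.2)
  set K := LinearMap.ker φ
  have hK : Module.finrank k K ≤ n := by
    have h1 : Module.finrank k (LinearMap.range φ) + Module.finrank k K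
        = Module.finrank k (Fin (n+1) → k) := LinearMap.finrank_range_add_finrank_ker φ
    have h2 : Module.finrank k (Fin (n+1) → k) = n + 1 := by
      rw [Module.finrank_pi]; simp
    have h3 : 1 ≤ Module.finrank k (LinearMap.range φ) := by
      by_contra h4
      push_neg at h4
      have h5 : Module.finrank k (LinearMap.range φ) = 0 := by omega
      rw [Submodule.finrank_eq_zero] at h5
      exact hphi0 (LinearMap.range_eq_bot.mp h5)
    omega
  have hindK : LinearIndependent k (fun q : t =>
      (⟨Projectivization.rep (q : Projectivization k (Fin (n+1) → k)), hker q⟩ : K)) := by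
    rw [← LinearMap.linearIndependent_iff (K.subtype) (Submodule.ker_subtype K)]
    exact hind
  have := hindK.fintype_card_le_finrank
  rw [Fintype.card_coe, htc] at this
  omega

/-- A linear form through `≤ n` points of `Γ`, normalized at another point `p`. -/
lemma exists_linear_form {Γ : Set (Projectivization k (Fin (n + 1) → k))}
    (hlgp : LinGenPos k n Γ) (A : Finset (Projectivization k (Fin (n + 1) → k)))
    (hA : ↑A ⊆ Γ) (hcard : A.card ≤ n)
    {p : Projectivization k (Fin (n + 1) → k)} (hp : p ∈ Γ) (hpA : p ∉ A) :
    ∃ l : MvPolynomial (Fin (n + 1)) k, l.IsHomogeneous 1 ∧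
      eval (Projectivization.rep p) l = 1 ∧
      ∀ q ∈ A, eval (Projectivization.rep q) l = 0 := by
  classical
  set s : Finset (Projectivization k (Fin (n + 1) → k)) := insert p A with hsdef
  have hsub : ↑s ⊆ Γ := by
    rw [hsdef]; push_cast [Finset.coe_insert]
    exact Set.insert_subset hp hA
  have hscard : s.card ≤ n + 1 := by
    rw [hsdef]
    calc (insert p A).card ≤ A.card + 1 := Finset.card_insert_le p A
    _ ≤ n + 1 := by omega
  have hind := hlgp s hsub hscard
  have hps : p ∈ s := Finset.mem_insert_self p A
  -- rep p is not in the span of reps of A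
  have hnm : Projectivization.rep p ∉
      Submodule.span k (Projectivization.rep '' (↑A : Set (Projectivization k (Fin (n+1) → k)))) := by
    have himg : (fun x : s => Projectivization.rep (x : Projectivization k (Fin (n+1) → k))) ''
        {x : s | (x : Projectivization k (Fin (n+1) → k)) ∈ A}
        = Projectivization.rep '' (↑A : Set (Projectivization k (Fin (n+1) → k))) := by
      ext y
      constructor
      · rintro ⟨q, hq, rfl⟩
        exact ⟨↑q, hq, rfl⟩
      · rintro ⟨q, hq, rfl⟩
        exact ⟨⟨q, Finset.mem_insert_of_mem hq⟩, hq, rfl⟩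
    have := hind.notMem_span_image (s := {x : s | (x : Projectivization k (Fin (n+1) → k)) ∈ A})
      (x := ⟨p, hps⟩) (by simp [hpA])
    rw [himg] at this
    exact this
  -- construct a functional vanishing on the span, nonzero at rep p
  set W := Submodule.span k (Projectivization.rep '' (↑A : Set (Projectivization k (Fin (n+1) → k)))) with hW
  have hq0 : W.mkQ (Projectivization.rep p) ≠ 0 := by
    rw [Submodule.mkQ_apply, Ne, Submodule.Quotient.mk_eq_zero]
    exact hnm
  obtain ⟨ψ, hψ⟩ : ∃ ψ : Module.Dual k ((Fin (n+1) → k) ⧸ W),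
      ψ (W.mkQ (Projectivization.rep p)) ≠ 0 := by
    by_contra hcon
    push_neg at hcon
    exact hq0 ((Module.forall_dual_apply_eq_zero_iff k _).mp hcon)
  set c : k := ψ (W.mkQ (Projectivization.rep p)) with hcdef
  set φ : (Fin (n+1) → k) →ₗ[k] k := c⁻¹ • (ψ ∘ₗ W.mkQ) with hφ
  refine ⟨linOfVec (fun i => φ (fun j => if i = j then (1:k) else 0)),
    linOfVec_isHomogeneous _, ?_, ?_⟩
  · rw [eval_linOfVec_functional]
    simp only [hφ, LinearMap.smul_apply, LinearMap.coe_comp, Function.comp_apply, smul_eq_mul]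
    rw [show ψ (W.mkQ (Projectivization.rep p)) = c from rfl]
    exact inv_mul_cancel₀ hψ
  · intro q hq
    rw [eval_linOfVec_functional]
    have : Projectivization.rep q ∈ W :=
      Submodule.subset_span ⟨q, hq, rfl⟩
    simp [hφ, (Submodule.Quotient.mk_eq_zero W).mpr this, Submodule.mkQ_apply]

end PhiSpanAux

namespace PhiSpanAux

variable {k : Type*} [Field k] {n ℓ : ℕ}
  {Γ : Set (Projectivization k (Fin (n + 1) → k))}

lemma ne_zero_of_eval_ne_zero {m : ℕ} {h : MvPolynomial (Fin m) k} {v : Fin m → k}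
    (hv : eval v h ≠ 0) : h ≠ 0 := by
  rintro rfl; simp at hv

lemma span_le_graded :
    Submodule.span k (Phi k n Γ ℓ) ≤ gradedVanishing k n Γ ℓ :=
  Submodule.span_le.mpr fun _ hF => hF.1

lemma prod_mem_Phi (u : Fin ℓ → MvPolynomial (Fin (n + 1)) k)
    (hu : ∀ i, u i ≠ 0 ∧ (u i).IsHomogeneous 1)
    (hvan : ∀ P ∈ Γ, eval (Projectivization.rep P) (∏ i, u i) = 0) :
    (∏ i, u i) ∈ Phi k n Γ ℓ := by
  refine ⟨Submodule.mem_inf.mpr ⟨?_, hvan⟩, u, hu, rfl⟩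
  rw [mem_homogeneousSubmodule]
  have := MvPolynomial.IsHomogeneous.prod Finset.univ u (fun _ => 1)
    (fun i _ => (hu i).2)
  simpa using this

/-- The key exchange lemma: changing one factor of a decomposable form vanishing on
`Γ \ {p}`, keeping the value at `p` the same, changes it by an element of the span
of `Phi Γ ℓ`. -/
lemma one_step {p : Projectivization k (Fin (n + 1) → k)} (hp : p ∈ Γ)
    (u v : Fin ℓ → MvPolynomial (Fin (n + 1)) k) (j : Fin ℓ)
    (huv : ∀ i, i ≠ j → u i = v i)
    (hu : ∀ i, u i ≠ 0 ∧ (u i).IsHomogeneous 1)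
    (hv : ∀ i, v i ≠ 0 ∧ (v i).IsHomogeneous 1)
    (hvanu : ∀ q ∈ Γ \ {p}, eval (Projectivization.rep q) (∏ i, u i) = 0)
    (hvanv : ∀ q ∈ Γ \ {p}, eval (Projectivization.rep q) (∏ i, v i) = 0)
    (hpj : eval (Projectivization.rep p) (u j) = eval (Projectivization.rep p) (v j)) :
    (∏ i, u i) - (∏ i, v i) ∈ Submodule.span k (Phi k n Γ ℓ) := by
  classical
  by_cases heq : u j = v j
  · have huveq : u = v := by
      funext i
      by_cases hij : i = j
      · rw [hij]; exact heq
      · exact huv i hij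
    rw [huveq, sub_self]
    exact Submodule.zero_mem _
  · have hrest : ∏ i ∈ Finset.univ.erase j, u i = ∏ i ∈ Finset.univ.erase j, v i :=
      Finset.prod_congr rfl fun i hi => huv i (Finset.ne_of_mem_erase hi)
    set w : Fin ℓ → MvPolynomial (Fin (n + 1)) k :=
      fun i => if i = j then u j - v j else v i with hwdef
    have hwprod : ∏ i, w i = (∏ i, u i) - (∏ i, v i) := by
      rw [← Finset.mul_prod_erase Finset.univ u (Finset.mem_univ j),
        ← Finset.mul_prod_erase Finset.univ v (Finset.mem_univ j),
        ← Finset.mul_prod_erase Finset.univ w (Finset.mem_univ j)]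
      have h1 : ∏ i ∈ Finset.univ.erase j, w i = ∏ i ∈ Finset.univ.erase j, v i :=
        Finset.prod_congr rfl fun i hi => if_neg (Finset.ne_of_mem_erase hi)
      rw [h1, hrest, show w j = u j - v j from if_pos rfl, sub_mul]
    have hwphi : (∏ i, w i) ∈ Phi k n Γ ℓ := by
      apply prod_mem_Phi
      · intro i
        by_cases hij : i = j
        · subst hij
          refine ⟨by simpa [hwdef] using sub_ne_zero.mpr heq, ?_⟩
          simpa [hwdef] using (hu i).2.sub (hv i).2
        · exact ⟨by simpa [hwdef, hij] using (hv i).1,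
            by simpa [hwdef, hij] using (hv i).2⟩
      · intro q hq
        rw [hwprod, map_sub]
        by_cases hqp : q = p
        · subst hqp
          rw [← Finset.mul_prod_erase Finset.univ u (Finset.mem_univ j),
            ← Finset.mul_prod_erase Finset.univ v (Finset.mem_univ j),
            map_mul, map_mul, hrest, hpj, sub_self]
        · rw [hvanu q ⟨hq, hqp⟩, hvanv q ⟨hq, hqp⟩, sub_self]
    rw [← hwprod]
    exact Submodule.subset_span hwphi

end PhiSpanAux

namespace PhiSpanAux

variable {k : Type*} [Field k]

section Tokens

variable {α : Type*} [DecidableEq α] {ℓ nn : ℕ}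

lemma filter_update (S : Finset α) (g : α → Fin ℓ) {x : α} (hx : x ∈ S) (b i : Fin ℓ) :
    S.filter (fun y => Function.update g x b y = i) =
      if b = i then insert x ((S.filter fun y => g y = i).erase x)
      else (S.filter fun y => g y = i).erase x := by
  ext y
  by_cases hyx : y = x
  · subst hyx
    by_cases hbi : b = i <;> simp [Function.update_self, hbi, hx]
  · by_cases hbi : b = i <;>
      simp [Function.update_of_ne hyx, hbi, hyx]

lemma card_filter_update_le (S : Finset α) (g : α → Fin ℓ) {x : α} (hx : x ∈ S)
    {b : Fin ℓ} (hval : ∀ i, (S.filter fun y => g y = i).card ≤ nn)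
    (hb : (S.filter fun y => g y = b).card < nn ∨ g x = b) :
    ∀ i, (S.filter fun y => Function.update g x b y = i).card ≤ nn := by
  intro i
  rw [filter_update S g hx b i]
  by_cases hbi : b = i
  · rw [if_pos hbi]
    by_cases hgx : g x = i
    · have hxf : x ∈ S.filter fun y => g y = i := Finset.mem_filter.mpr ⟨hx, hgx⟩
      rw [Finset.insert_erase hxf]
      exact hval i
    · rw [Finset.erase_eq_of_notMem (by simp [hgx])]
      have hcard := Finset.card_insert_le x (S.filter fun y => g y = i)
      rcases hb with hb | hb
      · subst hbi; omega
      · exact absurd (hb.trans hbi) hgx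
  · rw [if_neg hbi]
    exact le_trans (Finset.card_le_card (Finset.erase_subset _ _)) (hval i)

end Tokens

end PhiSpanAux

namespace PhiSpanAux

variable {k : Type*} [Field k]

section Tokens

variable {α : Type*} [DecidableEq α] {ℓ nn : ℕ}

omit [DecidableEq α] in
lemma fiber_sum (S : Finset α) (g : α → Fin ℓ) :
    ∑ i : Fin ℓ, (S.filter fun y => g y = i).card = S.card :=
  (Finset.card_eq_sum_card_fiberwise (fun x _ => Finset.mem_univ (g x))).symm

/-- Token-shuffling connectivity: if single-token moves change `P` by elements of `V`,
then any two assignments with fibers of size `≤ nn` that agree off `S` are connected. -/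
lemma token_connect {M : Type*} [AddCommGroup M] [Module k M] (V : Submodule k M)
    (S : Finset α) (hS : S.card + 1 ≤ ℓ * nn)
    (P : (α → Fin ℓ) → M)
    (hmove : ∀ (g : α → Fin ℓ) (x : α) (b : Fin ℓ), x ∈ S →
      (∀ i, (S.filter fun y => g y = i).card ≤ nn) →
      (∀ i, (S.filter fun y => Function.update g x b y = i).card ≤ nn) →
      P g - P (Function.update g x b) ∈ V) :
    ∀ (g₁ g₂ : α → Fin ℓ), (∀ i, (S.filter fun y => g₁ y = i).card ≤ nn) →
      (∀ i, (S.filter fun y => g₂ y = i).card ≤ nn) →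
      (∀ x, x ∉ S → g₁ x = g₂ x) → P g₁ - P g₂ ∈ V := by
  intro g₁ g₂ hval₁ hval₂ hoff
  set μ := (S.filter fun x => g₁ x ≠ g₂ x).card with hμ
  clear_value μ
  induction μ using Nat.strong_induction_on generalizing g₁ with
  | _ μ IH =>
  rcases Nat.eq_zero_or_pos μ with hμ0 | hμpos
  · -- no disagreement: g₁ = g₂
    have : g₁ = g₂ := by
      funext x
      by_cases hxS : x ∈ S
      · by_contra hne
        have hxf : x ∈ S.filter fun x => g₁ x ≠ g₂ x := Finset.mem_filter.mpr ⟨hxS, hne⟩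
        rw [hμ0] at hμ
        exact absurd hμ.symm (Finset.card_ne_zero_of_mem hxf)
      · exact hoff x hxS
    rw [this, sub_self]
    exact Submodule.zero_mem _
  · -- pick a misplaced token x
    have hne : (S.filter fun x => g₁ x ≠ g₂ x).Nonempty := by
      rw [← Finset.card_pos, ← hμ]; exact hμpos
    obtain ⟨x, hxmem⟩ := hne
    obtain ⟨hxS, hxne⟩ := Finset.mem_filter.mp hxmem
    set b := g₂ x with hbdef
    by_cases hfull : (S.filter fun y => g₁ y = b).card < nn
    · -- room in the target box: move x directly
      set g' := Function.update g₁ x b with hg'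
      have hval' : ∀ i, (S.filter fun y => g' y = i).card ≤ nn :=
        card_filter_update_le S g₁ hxS hval₁ (Or.inl hfull)
      have hdiff : (S.filter fun y => g' y ≠ g₂ y) = (S.filter fun y => g₁ y ≠ g₂ y).erase x := by
        ext y
        by_cases hyx : y = x
        · subst hyx
          simp [hg', Function.update_self, hbdef]
        · simp [hg', Function.update_of_ne hyx, hyx]
      have hμ' : (S.filter fun y => g' y ≠ g₂ y).card < μ := by
        rw [hdiff, hμ]
        exact Finset.card_erase_lt_of_mem hxmem
      have hoff' : ∀ y, y ∉ S → g' y = g₂ y := by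
        intro y hy
        have hyx' : y ≠ x := fun h => hy (by rw [h]; exact hxS)
        rw [hg', Function.update_of_ne hyx', hoff y hy]
      have h1 : P g₁ - P g' ∈ V := hmove g₁ x b hxS hval₁ hval'
      have h2 : P g' - P g₂ ∈ V := IH _ hμ' g' hval' hoff' rfl
      have := V.add_mem h1 h2
      simpa using this
    · -- target box full: first evacuate some token y out of it
      push_neg at hfull
      have hfull' : (S.filter fun y => g₁ y = b).card = nn :=
        le_antisymm (hval₁ b) hfull
      -- find y in box b with g₂ y ≠ b
      have hy : ∃ y ∈ S, g₁ y = b ∧ g₂ y ≠ b := by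
        by_contra hcon
        push_neg at hcon
        have hsub : insert x (S.filter fun y => g₁ y = b) ⊆ S.filter fun y => g₂ y = b := by
          intro z hz
          rcases Finset.mem_insert.mp hz with rfl | hz
          · exact Finset.mem_filter.mpr ⟨hxS, hbdef.symm⟩
          · obtain ⟨hzS, hzb⟩ := Finset.mem_filter.mp hz
            exact Finset.mem_filter.mpr ⟨hzS, hcon z hzS hzb⟩
        have hxnot : x ∉ S.filter fun y => g₁ y = b := by
          simp only [Finset.mem_filter, not_and]
          intro _
          exact fun h => hxne (h.trans hbdef)
        have := Finset.card_le_card hsub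
        rw [Finset.card_insert_of_notMem hxnot, hfull'] at this
        have := hval₂ b
        omega
      obtain ⟨y, hyS, hyb, hyb2⟩ := hy
      -- find a box b' with room
      have hb' : ∃ b' : Fin ℓ, (S.filter fun z => g₁ z = b').card < nn := by
        by_contra hcon
        push_neg at hcon
        have hsum := fiber_sum S g₁
        have : ∑ i : Fin ℓ, (S.filter fun z => g₁ z = i).card ≥ ∑ _i : Fin ℓ, nn :=
          Finset.sum_le_sum fun i _ => hcon i
        rw [hsum, Finset.sum_const, Finset.card_univ, Fintype.card_fin, smul_eq_mul] at this
        omega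
      obtain ⟨b', hb'room⟩ := hb'
      have hb'ne : b' ≠ b := by
        rintro rfl
        omega
      have hyx : y ≠ x := by
        rintro rfl
        exact hxne (hyb.trans hbdef)
      -- first move: y to b'
      set m1 := Function.update g₁ y b' with hm1
      have hvalm1 : ∀ i, (S.filter fun z => m1 z = i).card ≤ nn :=
        card_filter_update_le S g₁ hyS hval₁ (Or.inl hb'room)
      have hmove1 : P g₁ - P m1 ∈ V := hmove g₁ y b' hyS hval₁ hvalm1
      -- second move: x to b
      have hm1b : (S.filter fun z => m1 z = b).card < nn := by
        rw [hm1, filter_update S g₁ hyS b' b, if_neg hb'ne]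
        have hymem : y ∈ S.filter fun z => g₁ z = b := Finset.mem_filter.mpr ⟨hyS, hyb⟩
        rw [Finset.card_erase_of_mem hymem, hfull']
        have hnn0 : 0 < nn := by
          rcases Nat.eq_zero_or_pos nn with rfl | h
          · rw [Nat.mul_zero] at hS; omega
          · exact h
        omega
      set g' := Function.update m1 x b with hg'
      have hval' : ∀ i, (S.filter fun z => g' z = i).card ≤ nn :=
        card_filter_update_le S m1 hxS hvalm1 (Or.inl hm1b)
      have hmove2 : P m1 - P g' ∈ V := hmove m1 x b hxS hvalm1 hval'
      -- μ decreases
      have hdiffsub : (S.filter fun z => g' z ≠ g₂ z) ⊆ (S.filter fun z => g₁ z ≠ g₂ z).erase x := by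
        intro z hz
        obtain ⟨hzS, hzne⟩ := Finset.mem_filter.mp hz
        by_cases hzx : z = x
        · subst hzx
          exact absurd (by rw [hg', Function.update_self]) hzne
        · rw [Finset.mem_erase]
          refine ⟨hzx, Finset.mem_filter.mpr ⟨hzS, ?_⟩⟩
          by_cases hzy : z = y
          · subst hzy
            rw [hyb]
            exact fun h => hyb2 h.symm
          · rw [hg', Function.update_of_ne hzx, hm1, Function.update_of_ne hzy] at hzne
            exact hzne
      have hμ' : (S.filter fun z => g' z ≠ g₂ z).card < μ := by
        calc (S.filter fun z => g' z ≠ g₂ z).card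
            ≤ ((S.filter fun z => g₁ z ≠ g₂ z).erase x).card := Finset.card_le_card hdiffsub
          _ < μ := by rw [hμ]; exact Finset.card_erase_lt_of_mem hxmem
      have hoff' : ∀ z, z ∉ S → g' z = g₂ z := by
        intro z hz
        have hzx' : z ≠ x := fun h => hz (by rw [h]; exact hxS)
        have hzy' : z ≠ y := fun h => hz (by rw [h]; exact hyS)
        rw [hg', Function.update_of_ne hzx', hm1, Function.update_of_ne hzy', hoff z hz]
      have h3 : P g' - P g₂ ∈ V := IH _ hμ' g' hval' hoff' rfl
      have := V.add_mem (V.add_mem hmove1 hmove2) h3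
      simpa using this

end Tokens

end PhiSpanAux

namespace PhiSpanAux

section Assign

variable {α : Type*} [DecidableEq α]

/-- A balanced assignment of the elements of `S` into `ℓ` boxes of capacity `nn`. -/
lemma exists_assignment (S : Finset α) {ℓ nn : ℕ} (hnn : 0 < nn) (hℓ : 0 < ℓ)
    (hS : S.card ≤ ℓ * nn) :
    ∃ g : α → Fin ℓ, ∀ i, (S.filter fun y => g y = i).card ≤ nn := by
  classical
  set e := S.equivFin with he
  have hidx : ∀ (x : α) (hx : x ∈ S), ((e ⟨x, hx⟩ : ℕ) / nn) < ℓ := by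
    intro x hx
    have : (e ⟨x, hx⟩ : ℕ) < S.card := (e ⟨x, hx⟩).2
    rw [Nat.div_lt_iff_lt_mul hnn]
    exact lt_of_lt_of_le this hS
  refine ⟨fun x => if hx : x ∈ S then ⟨(e ⟨x, hx⟩ : ℕ) / nn, hidx x hx⟩ else ⟨0, hℓ⟩, ?_⟩
  intro i
  have hcr : (Finset.range nn).card = nn := Finset.card_range nn
  refine le_trans (Finset.card_le_card_of_injOn
    (fun x => (if hx : x ∈ S then (e ⟨x, hx⟩ : ℕ) else 0) % nn) ?_ ?_) (le_of_eq hcr)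
  · intro x hx
    exact Finset.mem_range.mpr (Nat.mod_lt _ hnn)
  · intro x hx y hy hxy
    obtain ⟨hxS, hxi⟩ := Finset.mem_filter.mp hx
    obtain ⟨hyS, hyi⟩ := Finset.mem_filter.mp hy
    simp only [dif_pos hxS, dif_pos hyS] at hxi hyi hxy
    have hdiv : (e ⟨x, hxS⟩ : ℕ) / nn = (e ⟨y, hyS⟩ : ℕ) / nn := by
      have := congrArg (fun j : Fin ℓ => (j : ℕ)) (hxi.trans hyi.symm)
      simpa using this
    have : (e ⟨x, hxS⟩ : ℕ) = (e ⟨y, hyS⟩ : ℕ) := by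
      rw [← Nat.div_add_mod (e ⟨x, hxS⟩ : ℕ) nn, ← Nat.div_add_mod (e ⟨y, hyS⟩ : ℕ) nn,
        hdiv, hxy]
    have h := e.injective (Fin.val_injective this)
    exact congrArg Subtype.val h

end Assign

end PhiSpanAux

namespace PhiSpanAux

variable {k : Type*} [Field k]

lemma multiset_X_prod {m : ℕ} (f : Fin m →₀ ℕ) :
    ((f.toMultiset.map (X : Fin m → MvPolynomial (Fin m) k)).prod) = monomial f 1 := by
  induction f using Finsupp.induction with
  | zero => simp
  | single_add a b f _ _ ih =>
    rw [Finsupp.toMultiset_add, Multiset.map_add, Multiset.prod_add, ih,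
      Finsupp.toMultiset_single, Multiset.nsmul_singleton, Multiset.map_replicate,
      Multiset.prod_replicate, X_pow_eq_monomial, monomial_mul, one_mul]

lemma exists_prod_of_multiset {M : Type*} [CommMonoid M] [DecidableEq M] :
    ∀ (ℓ : ℕ) (s : Multiset M), Multiset.card s = ℓ →
      ∃ h : Fin ℓ → M, (∀ i, h i ∈ s) ∧ ∏ i, h i = s.prod := by
  intro ℓ
  induction ℓ with
  | zero =>
    intro s hs
    rw [Multiset.card_eq_zero] at hs
    subst hs
    exact ⟨fun i => i.elim0, fun i => i.elim0, by simp⟩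
  | succ m ih =>
    intro s hs
    obtain ⟨a, ha⟩ : ∃ a, a ∈ s := Multiset.exists_mem_of_ne_zero (by
      intro h0; rw [h0] at hs; simp at hs)
    have hcons : a ::ₘ s.erase a = s := Multiset.cons_erase ha
    have hcard : Multiset.card (s.erase a) = m := by
      have := congrArg Multiset.card hcons
      rw [Multiset.card_cons] at this
      omega
    obtain ⟨h', hmem', hprod'⟩ := ih (s.erase a) hcard
    refine ⟨Fin.cons a h', ?_, ?_⟩
    · intro i
      refine Fin.cases ?_ ?_ i
      · rw [Fin.cons_zero]; exact ha
      · intro j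
        rw [Fin.cons_succ]
        exact Multiset.mem_of_mem_erase (hmem' j)
    · rw [Fin.prod_univ_succ, Fin.cons_zero, ← hcons, Multiset.prod_cons]
      congr 1

/-- Base case: every homogeneous polynomial of degree `ℓ` lies in the span of `Phi` of the
empty set. -/
lemma base_case {n ℓ : ℕ} {F : MvPolynomial (Fin (n + 1)) k} (hF : F.IsHomogeneous ℓ) :
    F ∈ Submodule.span k (Phi k n (∅ : Set (Projectivization k (Fin (n + 1) → k))) ℓ) := by
  classical
  rw [← support_sum_monomial_coeff F]
  apply Submodule.sum_mem
  intro f hf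
  have hdeg : f.degree = ℓ := by
    by_contra hne
    exact (mem_support_iff.mp hf) (hF.coeff_eq_zero hne)
  have hmono : (monomial f (1:k)) ∈ Phi k n (∅ : Set (Projectivization k (Fin (n + 1) → k))) ℓ := by
    have hcard : Multiset.card (f.toMultiset.map (X : Fin (n+1) → MvPolynomial (Fin (n+1)) k)) = ℓ := by
      rw [Multiset.card_map, Finsupp.card_toMultiset]
      simpa [Finsupp.degree_apply, Finsupp.sum] using hdeg
    obtain ⟨h, hmem, hprod⟩ := exists_prod_of_multiset ℓ _ hcard
    have hX : ∀ i, ∃ j, h i = X j := by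
      intro i
      obtain ⟨j, _, hj⟩ := Multiset.mem_map.mp (hmem i)
      exact ⟨j, hj.symm⟩
    refine ⟨Submodule.mem_inf.mpr ⟨?_, fun P hP => absurd hP (Set.notMem_empty P)⟩,
      h, ?_, ?_⟩
    · rw [mem_homogeneousSubmodule]
      exact isHomogeneous_monomial (1:k) hdeg
    · intro i
      obtain ⟨j, hj⟩ := hX i
      exact ⟨hj ▸ X_ne_zero j, hj ▸ isHomogeneous_X k j⟩
    · rw [hprod, multiset_X_prod]
  have hsm : F.coeff f • (monomial f (1:k)) = monomial f (F.coeff f) := by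
    rw [smul_monomial, smul_eq_mul, mul_one]
  rw [← hsm]
  exact Submodule.smul_mem _ _ (Submodule.subset_span hmono)

end PhiSpanAux

namespace PhiSpanAux

variable {k : Type*} [Field k]

lemma main_span {n : ℕ} (hn : 1 ≤ n) (ℓ : ℕ) :
    ∀ (d : ℕ) (Γ : Set (Projectivization k (Fin (n + 1) → k))), Γ.Finite → Γ.ncard = d →
      LinGenPos k n Γ → d ≤ ℓ * n →
      Submodule.span k (Phi k n Γ ℓ) = gradedVanishing k n Γ ℓ := by
  intro d
  induction d with
  | zero =>
    intro Γ hfin hcard hlgp _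
    have hΓ : Γ = ∅ := (Set.ncard_eq_zero hfin).mp hcard
    subst hΓ
    apply le_antisymm span_le_graded
    intro F hF
    apply base_case (F := F)
    have := (Submodule.mem_inf.mp hF).1
    rwa [mem_homogeneousSubmodule] at this
  | succ d IH =>
    intro Γ hfin hcard hlgp hd
    classical
    apply le_antisymm span_le_graded
    have hℓ : 0 < ℓ := by
      rcases Nat.eq_zero_or_pos ℓ with rfl | h
      · rw [Nat.zero_mul] at hd; omega
      · exact h
    obtain ⟨p, hp⟩ : Γ.Nonempty := Set.nonempty_of_ncard_ne_zero (by omega)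
    set Γ' : Set (Projectivization k (Fin (n + 1) → k)) := Γ \ {p} with hΓ'
    have hfin' : Γ'.Finite := hfin.diff
    have hcard' : Γ'.ncard = d := by
      rw [hΓ', Set.ncard_diff_singleton_of_mem hp, hcard]
      omega
    have hsub : Γ' ⊆ Γ := Set.diff_subset
    have hlgp' : LinGenPos k n Γ' := fun s hs hc => hlgp s (fun x hx => hsub (hs hx)) hc
    have hIH := IH Γ' hfin' hcard' hlgp' (by omega)
    have hp' : p ∉ Γ' := by simp [hΓ']
    set S : Finset (Projectivization k (Fin (n + 1) → k)) := hfin'.toFinset with hSdef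
    have hSΓ' : ↑S = Γ' := hfin'.coe_toFinset
    have hScard : S.card = d := by
      rw [← Set.ncard_coe_finset, hSΓ', hcard']
    -- chosen linear forms through small subsets of Γ', normalized at p
    have hechoice : ∀ A : Finset (Projectivization k (Fin (n + 1) → k)),
        ∃ l : MvPolynomial (Fin (n + 1)) k, ↑A ⊆ Γ' → A.card ≤ n →
          l.IsHomogeneous 1 ∧ eval (Projectivization.rep p) l = 1 ∧
            ∀ q ∈ A, eval (Projectivization.rep q) l = 0 := by
      intro A
      by_cases hA : ↑A ⊆ Γ' ∧ A.card ≤ n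
      · obtain ⟨l, h1, h2, h3⟩ := exists_linear_form hlgp A (fun x hx => hsub (hA.1 hx)) hA.2
          hp (fun hmem => hp' (hA.1 hmem))
        exact ⟨l, fun _ _ => ⟨h1, h2, h3⟩⟩
      · exact ⟨1, fun h1 h2 => absurd ⟨h1, h2⟩ hA⟩
    choose e he using hechoice
    have heH : ∀ A : Finset _, ↑A ⊆ Γ' → A.card ≤ n → (e A).IsHomogeneous 1 :=
      fun A h1 h2 => (he A h1 h2).1
    have hep : ∀ A : Finset _, ↑A ⊆ Γ' → A.card ≤ n →
        eval (Projectivization.rep p) (e A) = 1 := fun A h1 h2 => (he A h1 h2).2.1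
    have heq0 : ∀ A : Finset _, ↑A ⊆ Γ' → A.card ≤ n →
        ∀ q ∈ A, eval (Projectivization.rep q) (e A) = 0 := fun A h1 h2 => (he A h1 h2).2.2
    have hene : ∀ A : Finset _, ↑A ⊆ Γ' → A.card ≤ n → e A ≠ 0 := by
      intro A h1 h2
      apply ne_zero_of_eval_ne_zero (v := Projectivization.rep p)
      rw [hep A h1 h2]
      exact one_ne_zero
    -- the canonical decomposable form attached to an assignment
    set Pg : (Projectivization k (Fin (n + 1) → k) → Fin ℓ) → MvPolynomial (Fin (n + 1)) k :=
      fun g => ∏ i, e (S.filter fun y => g y = i) with hPgdef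
    have hfibsub : ∀ (g : Projectivization k (Fin (n + 1) → k) → Fin ℓ) (i : Fin ℓ),
        ↑(S.filter fun y => g y = i) ⊆ Γ' := by
      intro g i x hx
      rw [← hSΓ']
      exact_mod_cast Finset.filter_subset _ S (by exact_mod_cast hx)
    -- vanishing and normalization of canonical forms
    have hPgvan : ∀ (g : _ → Fin ℓ), (∀ i, (S.filter fun y => g y = i).card ≤ n) →
        ∀ q ∈ Γ', eval (Projectivization.rep q) (Pg g) = 0 := by
      intro g hval q hq
      rw [hPgdef, eval_prod]
      apply Finset.prod_eq_zero (Finset.mem_univ (g q))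
      have hqS : q ∈ S := by rw [← hSΓ'] at hq; exact_mod_cast hq
      exact heq0 _ (hfibsub g (g q)) (hval (g q)) q (Finset.mem_filter.mpr ⟨hqS, rfl⟩)
    have hPg1 : ∀ (g : _ → Fin ℓ), (∀ i, (S.filter fun y => g y = i).card ≤ n) →
        eval (Projectivization.rep p) (Pg g) = 1 := by
      intro g hval
      rw [hPgdef, eval_prod]
      apply Finset.prod_eq_one
      intro i _
      exact hep _ (hfibsub g i) (hval i)
    have hPg_mem : ∀ (g : _ → Fin ℓ), (∀ i, (S.filter fun y => g y = i).card ≤ n) →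
        ∀ i, (e (S.filter fun y => g y = i)) ≠ 0 ∧ (e (S.filter fun y => g y = i)).IsHomogeneous 1 := by
      intro g hval i
      exact ⟨hene _ (hfibsub g i) (hval i), heH _ (hfibsub g i) (hval i)⟩
    set VΓ := Submodule.span k (Phi k n Γ ℓ) with hVΓ
    -- single token moves
    have hmove : ∀ (g : _ → Fin ℓ) (x) (b : Fin ℓ), x ∈ S →
        (∀ i, (S.filter fun y => g y = i).card ≤ n) →
        (∀ i, (S.filter fun y => Function.update g x b y = i).card ≤ n) →
        Pg g - Pg (Function.update g x b) ∈ VΓ := by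
      intro g x b hxS hval hval'
      by_cases hgxb : g x = b
      · rw [show Function.update g x b = g from by rw [← hgxb]; exact Function.update_eq_self x g,
          sub_self]
        exact Submodule.zero_mem _
      · have hxnotb : x ∉ S.filter fun y => g y = b := by simp [hgxb]
        have hinsert : S.filter (fun y => Function.update g x b y = b)
            = insert x (S.filter fun y => g y = b) := by
          rw [filter_update S g hxS b b, if_pos rfl, Finset.erase_eq_of_notMem hxnotb]
        have hinsert_sub : ↑(insert x (S.filter fun y => g y = b)) ⊆ Γ' := by
          rw [← hinsert]; exact hfibsub _ b
        have hinsert_card : (insert x (S.filter fun y => g y = b)).card ≤ n := by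
          rw [← hinsert]; exact hval' b
        set u : Fin ℓ → MvPolynomial (Fin (n + 1)) k :=
          fun i => e (S.filter fun y => g y = i) with hu
        set v : Fin ℓ → MvPolynomial (Fin (n + 1)) k :=
          fun i => e (S.filter fun y => Function.update g x b y = i) with hv
        set w : Fin ℓ → MvPolynomial (Fin (n + 1)) k :=
          fun i => if i = b then e (insert x (S.filter fun y => g y = b)) else u i with hw
        have hwprops : ∀ i, w i ≠ 0 ∧ (w i).IsHomogeneous 1 := by
          intro i
          by_cases hib : i = b
          · subst hib
            rw [hw]
            simp only [if_pos rfl]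
            exact ⟨hene _ hinsert_sub hinsert_card, heH _ hinsert_sub hinsert_card⟩
          · rw [hw]
            simp only [if_neg hib]
            exact hPg_mem g hval i
        have hwvan : ∀ q ∈ Γ', eval (Projectivization.rep q) (∏ i, w i) = 0 := by
          intro q hq
          have hqS : q ∈ S := by rw [← hSΓ'] at hq; exact_mod_cast hq
          rw [eval_prod]
          apply Finset.prod_eq_zero (Finset.mem_univ (g q))
          by_cases hgq : g q = b
          · rw [hw]
            simp only [if_pos hgq]
            apply heq0 _ hinsert_sub hinsert_card
            exact Finset.mem_insert_of_mem (Finset.mem_filter.mpr ⟨hqS, hgq⟩)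
          · rw [hw]
            simp only [if_neg hgq]
            exact heq0 _ (hfibsub g (g q)) (hval (g q)) q (Finset.mem_filter.mpr ⟨hqS, rfl⟩)
        have hΓdiff : Γ \ {p} = Γ' := rfl
        have step1 : Pg g - ∏ i, w i ∈ VΓ := by
          apply one_step hp u w b
          · intro i hib
            rw [hw]; simp only [if_neg hib]
          · exact hPg_mem g hval
          · exact hwprops
          · intro q hq; rw [hΓdiff] at hq; exact hPgvan g hval q hq
          · intro q hq; rw [hΓdiff] at hq; exact hwvan q hq
          · simp only [hw, hu, if_pos rfl]
            rw [hep _ (hfibsub g b) (hval b), hep _ hinsert_sub hinsert_card]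
        have step2 : (∏ i, w i) - Pg (Function.update g x b) ∈ VΓ := by
          apply one_step hp w v (g x)
          · intro i higx
            by_cases hib : i = b
            · subst hib
              simp only [hw, hv, if_pos rfl, hinsert]
            · have hfe : S.filter (fun y => Function.update g x b y = i)
                  = S.filter fun y => g y = i := by
                rw [filter_update S g hxS b i, if_neg (fun h => hib h.symm)]
                apply Finset.erase_eq_of_notMem
                simp only [Finset.mem_filter, not_and]
                intro _ hcontra
                exact higx hcontra.symm
              simp only [hw, hv, if_neg hib, hu, hfe]
          · exact hwprops
          · exact hPg_mem _ hval'
          · intro q hq; rw [hΓdiff] at hq; exact hwvan q hq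
          · intro q hq; rw [hΓdiff] at hq; exact hPgvan _ hval' q hq
          · have hgx_ne_b : ¬ g x = b := hgxb
            simp only [hw, hv, hu, if_neg hgx_ne_b]
            rw [hep _ (hfibsub g (g x)) (hval (g x)),
              hep _ (hfibsub _ (g x)) (hval' (g x))]
        have := VΓ.add_mem step1 step2
        simpa using this
    -- connectivity of canonical forms
    have hconn : ∀ (g₁ g₂ : _ → Fin ℓ), (∀ i, (S.filter fun y => g₁ y = i).card ≤ n) →
        (∀ i, (S.filter fun y => g₂ y = i).card ≤ n) →
        (∀ x, x ∉ S → g₁ x = g₂ x) → Pg g₁ - Pg g₂ ∈ VΓ :=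
      token_connect VΓ S (by omega) Pg hmove
    -- a fixed canonical form, nonvanishing at p
    obtain ⟨g₀, hg₀⟩ := exists_assignment S (lt_of_lt_of_le one_pos hn) hℓ (by omega)
    set H₀ := Pg g₀ with hH₀
    -- every element of `Phi Γ' ℓ` lies in `VΓ ⊔ span {H₀}`
    have hkey : Phi k n Γ' ℓ ⊆ ↑(VΓ ⊔ Submodule.span k {H₀}) := by
      rintro G ⟨hGmem, u, hu, rfl⟩
      have hGvan : ∀ q ∈ Γ', eval (Projectivization.rep q) (∏ i, u i) = 0 :=
        (Submodule.mem_inf.mp hGmem).2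
      by_cases hc : eval (Projectivization.rep p) (∏ i, u i) = 0
      · -- already vanishes at p, so it is in Phi Γ ℓ
        apply Submodule.mem_sup_left
        apply Submodule.subset_span
        apply prod_mem_Phi u hu
        intro P hP
        by_cases hPp : P = p
        · rw [hPp]; exact hc
        · exact hGvan P ⟨hP, hPp⟩
      · -- normalize the factors at p
        set c : k := eval (Projectivization.rep p) (∏ i, u i) with hcdef
        have hci : ∀ i, eval (Projectivization.rep p) (u i) ≠ 0 := by
          intro i hzero
          apply hc
          rw [hcdef, eval_prod]
          exact Finset.prod_eq_zero (Finset.mem_univ i) hzero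
        set u' : Fin ℓ → MvPolynomial (Fin (n + 1)) k :=
          fun i => C ((eval (Projectivization.rep p) (u i))⁻¹) * u i with hu'
        have hu'p : ∀ i, eval (Projectivization.rep p) (u' i) = 1 := by
          intro i
          rw [hu']
          simp only [map_mul, eval_C]
          exact inv_mul_cancel₀ (hci i)
        have hu'props : ∀ i, u' i ≠ 0 ∧ (u' i).IsHomogeneous 1 := by
          intro i
          constructor
          · rw [hu']
            exact mul_ne_zero (by simp [inv_ne_zero (hci i)]) (hu i).1
          · rw [hu']
            simpa using (isHomogeneous_C (Fin (n+1)) ((eval (Projectivization.rep p) (u i))⁻¹)).mul (hu i).2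
        have hu'van : ∀ q ∈ Γ', eval (Projectivization.rep q) (∏ i, u' i) = 0 := by
          intro q hq
          rw [hu']
          simp only [Finset.prod_mul_distrib]
          rw [map_mul, hGvan q hq, mul_zero]
        set G' := ∏ i, u' i with hG'
        have hGG' : ∏ i, u i = C c * G' := by
          have hG'eq : G' = C c⁻¹ * ∏ i, u i := by
            rw [hG']
            calc ∏ i, u' i
                = ∏ i, (C ((eval (Projectivization.rep p) (u i))⁻¹) * u i) := rfl
              _ = (∏ i, C ((eval (Projectivization.rep p) (u i))⁻¹)) * ∏ i, u i :=
                  Finset.prod_mul_distrib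
              _ = C ((∏ i, eval (Projectivization.rep p) (u i))⁻¹) * ∏ i, u i := by
                  rw [← map_prod, Finset.prod_inv_distrib]
              _ = C c⁻¹ * ∏ i, u i := by rw [← eval_prod, ← hcdef]
          rw [hG'eq, ← mul_assoc, ← map_mul, mul_inv_cancel₀ hc, map_one, one_mul]
        -- the assignment attached to G'
        have hfex : ∀ q ∈ S, ∃ i, eval (Projectivization.rep q) (u' i) = 0 := by
          intro q hq
          have hqΓ' : q ∈ Γ' := by rw [← hSΓ']; exact_mod_cast hq
          have := hu'van q hqΓ'
          rw [eval_prod] at this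
          obtain ⟨i, _, hi⟩ := Finset.prod_eq_zero_iff.mp this
          exact ⟨i, hi⟩
        choose fi hfi using hfex
        set f : Projectivization k (Fin (n + 1) → k) → Fin ℓ :=
          fun q => if hq : q ∈ S then fi q hq else g₀ q with hf
        have hf_off : ∀ x, x ∉ S → f x = g₀ x := by
          intro x hx
          rw [hf]
          exact dif_neg hx
        have hf_zero : ∀ q ∈ S, eval (Projectivization.rep q) (u' (f q)) = 0 := by
          intro q hq
          rw [hf]
          simp only [dif_pos hq]
          exact hfi q hq
        have hf_val : ∀ i, (S.filter fun y => f y = i).card ≤ n := by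
          intro i
          apply card_vanishing_le hlgp (hu'props i).1 (hu'props i).2
          · intro x hx
            have := Finset.filter_subset (fun y => f y = i) S hx
            apply hsub
            rw [← hSΓ']
            exact_mod_cast this
          · intro q hq
            obtain ⟨hqS, hqi⟩ := Finset.mem_filter.mp hq
            rw [← hqi]
            exact hf_zero q hqS
        -- chain from G' to the canonical form of f
        have hchain : ∀ t : ℕ, t ≤ ℓ →
            G' - (∏ i : Fin ℓ, if (i : ℕ) < t then e (S.filter fun y => f y = i) else u' i)
              ∈ VΓ := by
          intro t
          induction t with
          | zero =>
            intro _
            have : (∏ i : Fin ℓ, if (i : ℕ) < 0 then e (S.filter fun y => f y = i) else u' i)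
                = G' := by
              rw [hG']
              exact Finset.prod_congr rfl fun i _ => by rw [if_neg (Nat.not_lt_zero _)]
            rw [this, sub_self]
            exact Submodule.zero_mem _
          | succ t iht =>
            intro ht1
            have ht : t < ℓ := ht1
            set j : Fin ℓ := ⟨t, ht⟩ with hj
            set ut : Fin ℓ → MvPolynomial (Fin (n + 1)) k :=
              fun i => if (i : ℕ) < t then e (S.filter fun y => f y = i) else u' i with hut
            set vt : Fin ℓ → MvPolynomial (Fin (n + 1)) k :=
              fun i => if (i : ℕ) < t + 1 then e (S.filter fun y => f y = i) else u' i with hvt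
            have hfact : ∀ (w : Fin ℓ → MvPolynomial (Fin (n + 1)) k) (tt : ℕ),
                (∀ i : Fin ℓ, w i = if (i : ℕ) < tt then e (S.filter fun y => f y = i) else u' i) →
                (∀ i, w i ≠ 0 ∧ (w i).IsHomogeneous 1) ∧
                  (∀ q ∈ Γ \ {p}, eval (Projectivization.rep q) (∏ i, w i) = 0) := by
              intro w tt hwdef
              constructor
              · intro i
                rw [hwdef i]
                by_cases hit : (i : ℕ) < tt
                · rw [if_pos hit]
                  exact ⟨hene _ (hfibsub f i) (hf_val i), heH _ (hfibsub f i) (hf_val i)⟩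
                · rw [if_neg hit]
                  exact hu'props i
              · intro q hq
                have hqΓ' : q ∈ Γ' := hq
                have hqS : q ∈ S := by rw [← hSΓ'] at hqΓ'; exact_mod_cast hqΓ'
                rw [eval_prod]
                apply Finset.prod_eq_zero (Finset.mem_univ (f q))
                rw [hwdef (f q)]
                by_cases hit : ((f q : Fin ℓ) : ℕ) < tt
                · rw [if_pos hit]
                  exact heq0 _ (hfibsub f (f q)) (hf_val (f q)) q (Finset.mem_filter.mpr ⟨hqS, rfl⟩)
                · rw [if_neg hit]
                  exact hf_zero q hqS
            obtain ⟨hutprops, hutvan⟩ := hfact ut t (fun i => rfl)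
            obtain ⟨hvtprops, hvtvan⟩ := hfact vt (t + 1) (fun i => rfl)
            have hstep : (∏ i, ut i) - (∏ i, vt i) ∈ VΓ := by
              apply one_step hp ut vt j
              · intro i hij
                have hne : (i : ℕ) ≠ t := fun h => hij (Fin.ext h)
                by_cases hit : (i : ℕ) < t
                · rw [hut, hvt]
                  simp only []
                  rw [if_pos hit, if_pos (Nat.lt_succ_of_lt hit)]
                · rw [hut, hvt]
                  simp only []
                  rw [if_neg hit, if_neg (by omega)]
              · exact hutprops
              · exact hvtprops
              · exact hutvan
              · exact hvtvan
              · rw [hut, hvt]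
                simp only []
                rw [if_neg (by simp [hj]), if_pos (by simp [hj])]
                rw [hu'p j, hep _ (hfibsub f j) (hf_val j)]
            have := VΓ.add_mem (iht (le_of_lt ht)) hstep
            simpa using this
        have hchainℓ := hchain ℓ (le_refl ℓ)
        have hPf : (∏ i : Fin ℓ, if (i : ℕ) < ℓ then e (S.filter fun y => f y = i) else u' i)
            = Pg f := by
          rw [hPgdef]
          exact Finset.prod_congr rfl fun i _ => by rw [if_pos i.2]
        rw [hPf] at hchainℓ
        -- connect to H₀
        have hPfH₀ : Pg f - H₀ ∈ VΓ := hconn f g₀ hf_val hg₀ hf_off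
        have hG'H₀ : G' - H₀ ∈ VΓ := by
          have := VΓ.add_mem hchainℓ hPfH₀
          simpa using this
        -- conclude
        rw [hGG']
        have h1 : C c * (G' - H₀) ∈ VΓ := by
          rw [← smul_eq_C_mul]
          exact VΓ.smul_mem c hG'H₀
        have h2 : C c * H₀ ∈ Submodule.span k {H₀} := by
          rw [← smul_eq_C_mul]
          exact Submodule.smul_mem _ c (Submodule.mem_span_singleton_self H₀)
        have : C c * G' = C c * (G' - H₀) + C c * H₀ := by ring
        rw [this]
        exact Submodule.add_mem _ (Submodule.mem_sup_left h1) (Submodule.mem_sup_right h2)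
    -- finish: take F in the graded vanishing ideal of Γ
    intro F hF
    have hFmem' : F ∈ gradedVanishing k n Γ' ℓ := by
      obtain ⟨h1, h2⟩ := Submodule.mem_inf.mp hF
      exact Submodule.mem_inf.mpr ⟨h1, fun P hP => h2 P (hsub hP)⟩
    rw [← hIH] at hFmem'
    have hFsup : F ∈ VΓ ⊔ Submodule.span k {H₀} := by
      have hle : Submodule.span k (Phi k n Γ' ℓ) ≤ VΓ ⊔ Submodule.span k {H₀} :=
        Submodule.span_le.mpr hkey
      exact hle hFmem'
    obtain ⟨y, hy, z, hz, hyz⟩ := Submodule.mem_sup.mp hFsup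
    obtain ⟨a, rfl⟩ := Submodule.mem_span_singleton.mp hz
    have hyval : eval (Projectivization.rep p) y = 0 := by
      have hymem : y ∈ gradedVanishing k n Γ ℓ := span_le_graded hy
      exact (Submodule.mem_inf.mp hymem).2 p hp
    have hFval : eval (Projectivization.rep p) F = 0 := (Submodule.mem_inf.mp hF).2 p hp
    have hH₀val : eval (Projectivization.rep p) H₀ = 1 := hPg1 g₀ hg₀
    have ha : a = 0 := by
      have := congrArg (eval (Projectivization.rep p)) hyz
      rw [map_add, hyval, smul_eval, hH₀val, mul_one, zero_add] at this
      rw [this, hFval]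
    rw [ha, zero_smul, add_zero] at hyz
    rw [← hyz]
    exact hy

end PhiSpanAux

/-- If `Γ ⊆ ℙⁿ` is a finite set of `d` points in linearly general position and
`ℓ ≥ ⌈d/n⌉`, then `Φ(Γ)_ℓ` generates `I(Γ)_ℓ` as a `k`-vector space. -/
theorem phi_spans_above_ceil (k : Type*) [Field k] [IsAlgClosed k] (n d ℓ : ℕ)
    (hn : 1 ≤ n) (Γ : Set (Projectivization k (Fin (n + 1) → k)))
    (hfin : Γ.Finite) (hcard : Γ.ncard = d) (hlgp : LinGenPos k n Γ)
    (hge : ⌈(d : ℚ) / (n : ℚ)⌉ ≤ (ℓ : ℤ)) :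
    Submodule.span k (Phi k n Γ ℓ) = gradedVanishing k n Γ ℓ := by
  have hd : d ≤ ℓ * n := by
    have h1 : (d : ℚ) / (n : ℚ) ≤ ((ℓ : ℤ) : ℚ) := Int.ceil_le.mp hge
    have hn0 : (0 : ℚ) < (n : ℚ) := by exact_mod_cast Nat.lt_of_lt_of_le Nat.zero_lt_one hn
    rw [div_le_iff₀ hn0] at h1
    have h2 : (d : ℚ) ≤ ((ℓ * n : ℕ) : ℚ) := by push_cast; push_cast at h1; linarith
    exact_mod_cast h2
  exact PhiSpanAux.main_span hn ℓ d Γ hfin hcard hlgp hd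
end
end

section
/- Let Γ₀ ⊆ Pⁿ be a finite set of d+2 points in linearly general position, let x and y be two distinct points of Γ₀, and set Γ₁ = Γ₀ − {x}, Γ₂ = Γ₀ − {y}, Γ = Γ₀ − {x,y}. If ℓ ≥ ⌈(d+1)/n⌉, then I(Γ)_ℓ = I(Γ₁)_ℓ + I(Γ₂)_ℓ as subspaces of S_ℓ. -/
open MvPolynomial

noncomputable section

theorem dual_fun (k : Type*) [Field k] (V : Type*) [AddCommGroup V] [Module k V]
    (S : Set V) (hS : LinearIndependent k ((↑) : S → V)) (w : V) (hw : w ∈ S) :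
    ∃ φ : V →ₗ[k] k, φ w = 1 ∧ ∀ v ∈ S, v ≠ w → φ v = 0 := by
  replace hS : LinearIndepOn k id S := hS
  let b := Module.Basis.extend hS
  set iw : hS.extend (Set.subset_univ S) := ⟨w, hS.subset_extend _ hw⟩ with hiw
  refine ⟨b.coord iw, ?_, ?_⟩
  · have h1 : w = b iw := (Module.Basis.extend_apply_self hS iw).symm
    rw [h1, Module.Basis.coord_apply, Module.Basis.repr_self, Finsupp.single_eq_same]
  · intro v hv hne
    set iv : hS.extend (Set.subset_univ S) := ⟨v, hS.subset_extend _ hv⟩ with hiv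
    have h1 : v = b iv := (Module.Basis.extend_apply_self hS iv).symm
    rw [h1, Module.Basis.coord_apply, Module.Basis.repr_self, Finsupp.single_eq_of_ne]
    intro h
    apply hne
    have := congrArg Subtype.val h
    rw [hiw, hiv] at this
    exact this.symm

theorem linpoly (k : Type*) [Field k] (n : ℕ) (φ : (Fin (n+1) → k) →ₗ[k] k) :
    ∃ h : MvPolynomial (Fin (n+1)) k, h.IsHomogeneous 1 ∧ ∀ v, eval v h = φ v := by
  refine ⟨∑ i, C (φ (Pi.single i 1)) * X i, ?_, ?_⟩
  · apply IsHomogeneous.sum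
    intro i _
    simpa using (isHomogeneous_C _ (φ (Pi.single i 1))).mul (isHomogeneous_X k i)
  · intro v
    have hv : v = ∑ i, v i • (Pi.single i (1:k) : Fin (n+1) → k) := by
      ext j
      simp [Finset.sum_apply, Pi.single_apply]
    conv_rhs => rw [hv]
    rw [map_sum]
    simp [map_smul, mul_comm, smul_eq_mul]

theorem rep_inj (k : Type*) [Field k] (V : Type*) [AddCommGroup V] [Module k V]
    [Nontrivial V] : Function.Injective
      (Projectivization.rep : Projectivization k V → V) := by
  intro P Q h
  rw [← Projectivization.mk_rep P, ← Projectivization.mk_rep Q]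
  congr 1

theorem exists_avoid (k : Type*) [Field k] (n : ℕ)
    (Γ₀ : Set (Projectivization k (Fin (n + 1) → k))) (hlgp : LinGenPos k n Γ₀)
    (y : Projectivization k (Fin (n + 1) → k)) (hy : y ∈ Γ₀) (ℓ : ℕ) :
    ∀ A : Finset (Projectivization k (Fin (n + 1) → k)),
      ↑A ⊆ Γ₀ → y ∉ A → A.card ≤ ℓ * n →
      ∃ G : MvPolynomial (Fin (n+1)) k, G.IsHomogeneous ℓ ∧
        (∀ P ∈ A, eval P.rep G = 0) ∧ eval y.rep G ≠ 0 := by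
  induction ℓ with
  | zero =>
    intro A hA hyA hcard
    have hAe : A = ∅ := Finset.card_eq_zero.mp (Nat.le_zero.mp (by simpa using hcard))
    exact ⟨1, isHomogeneous_one _ _, by simp [hAe], by simp⟩
  | succ ℓ ih =>
    classical
    intro A hA hyA hcard
    obtain ⟨B, hBA, hBcard⟩ := Finset.exists_subset_card_eq (min_le_left A.card n)
    -- linear form vanishing on B, nonzero at y
    set s : Finset (Projectivization k (Fin (n + 1) → k)) := insert y B with hs
    have hsΓ : ↑s ⊆ Γ₀ := by
      rw [hs]
      intro p hp
      rcases Finset.mem_insert.mp hp with h | h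
      · exact h ▸ hy
      · exact hA (hBA h)
    have hscard : s.card ≤ n + 1 := by
      have h1 : s.card ≤ B.card + 1 := Finset.card_insert_le y B
      have h2 : min A.card n ≤ n := min_le_right A.card n
      omega
    have hli := hlgp s hsΓ hscard
    have hliS : LinearIndependent k
        ((↑) : Set.range (fun p : s => Projectivization.rep (p : Projectivization k (Fin (n+1) → k))) → (Fin (n+1) → k)) :=
      hli.linearIndepOn_id
    have hymem : Projectivization.rep y ∈
        Set.range (fun p : s => Projectivization.rep (p : Projectivization k (Fin (n+1) → k))) :=
      ⟨⟨y, Finset.mem_insert_self y B⟩, rfl⟩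
    obtain ⟨φ, hφy, hφ0⟩ := dual_fun k _ _ hliS _ hymem
    obtain ⟨h, hhom, heval⟩ := linpoly k n φ
    -- G' for A \ B
    have hcard' : (A \ B).card ≤ ℓ * n := by
      rw [Finset.card_sdiff_of_subset hBA]
      have h1 : (ℓ + 1) * n = ℓ * n + n := by ring
      omega
    obtain ⟨G', hG'hom, hG'van, hG'y⟩ := ih (A \ B)
      (fun p hp => hA (Finset.mem_sdiff.mp hp).1)
      (fun hyp => hyA (Finset.mem_sdiff.mp hyp).1) hcard'
    refine ⟨h * G', by simpa [add_comm] using hhom.mul hG'hom, ?_, ?_⟩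
    · intro P hP
      rw [eval_mul]
      by_cases hPB : P ∈ B
      · have hrepmem : Projectivization.rep P ∈
            Set.range (fun p : s => Projectivization.rep (p : Projectivization k (Fin (n+1) → k))) :=
          ⟨⟨P, Finset.mem_insert_of_mem hPB⟩, rfl⟩
        have hne : Projectivization.rep P ≠ Projectivization.rep y := by
          intro hc
          exact hyA (rep_inj k _ hc ▸ hP)
        rw [heval, hφ0 _ hrepmem hne, zero_mul]
      · rw [hG'van P (Finset.mem_sdiff.mpr ⟨hP, hPB⟩), mul_zero]
    · rw [eval_mul, heval, hφy, one_mul]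
      exact hG'y


theorem mem_gV {k : Type*} [Field k] {n : ℕ}
    {Γ : Set (Projectivization k (Fin (n + 1) → k))} {ℓ : ℕ}
    {F : MvPolynomial (Fin (n + 1)) k} :
    F ∈ gradedVanishing k n Γ ℓ ↔
      F.IsHomogeneous ℓ ∧ ∀ P ∈ Γ, eval (Projectivization.rep P) F = 0 := by
  rw [gradedVanishing, Submodule.mem_inf, mem_homogeneousSubmodule]
  rfl

/-- Lemma: for `Γ₀` a set of `d+2` points in linearly general position, distinct points
`x, y ∈ Γ₀`, and `ℓ ≥ ⌈(d+1)/n⌉`, one has `I(Γ₀-{x,y})_ℓ = I(Γ₀-{x})_ℓ + I(Γ₀-{y})_ℓ`. -/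
theorem graded_piece_sum (k : Type*) [Field k] [IsAlgClosed k] (n d ℓ : ℕ) (hn : 1 ≤ n)
    (Γ₀ : Set (Projectivization k (Fin (n + 1) → k)))
    (hfin : Γ₀.Finite) (hcard : Γ₀.ncard = d + 2) (hlgp : LinGenPos k n Γ₀)
    (x y : Projectivization k (Fin (n + 1) → k)) (hx : x ∈ Γ₀) (hy : y ∈ Γ₀)
    (hxy : x ≠ y) (hge : ⌈((d : ℚ) + 1) / (n : ℚ)⌉ ≤ (ℓ : ℤ)) :
    gradedVanishing k n (Γ₀ \ {x, y}) ℓ =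
      gradedVanishing k n (Γ₀ \ {x}) ℓ ⊔ gradedVanishing k n (Γ₀ \ {y}) ℓ := by
  classical
  have hn0 : (0:ℚ) < n := by exact_mod_cast hn
  have hdn' : d + 1 ≤ ℓ * n := by
    have h1 := Int.ceil_le.mp hge
    rw [div_le_iff₀ hn0] at h1
    exact_mod_cast h1
  have hfin2 : (Γ₀ \ {y}).Finite := hfin.diff
  have hncard : (Γ₀ \ {y}).ncard = d + 1 := by
    rw [Set.ncard_diff_singleton_of_mem hy, hcard]
    omega
  have hAcard : hfin2.toFinset.card = d + 1 := by
    rw [← Set.ncard_coe_finset, Set.Finite.coe_toFinset, hncard]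
  obtain ⟨G, hGhom, hGvan, hGy⟩ := exists_avoid k n Γ₀ hlgp y hy ℓ hfin2.toFinset
    (by rw [Set.Finite.coe_toFinset]; exact Set.diff_subset)
    (by simp [Set.Finite.mem_toFinset])
    (by rw [hAcard]; exact hdn')
  have hGmem : G ∈ gradedVanishing k n (Γ₀ \ {y}) ℓ :=
    mem_gV.mpr ⟨hGhom, fun P hP => hGvan P (hfin2.mem_toFinset.mpr hP)⟩
  apply le_antisymm
  · intro F hF
    rw [mem_gV] at hF
    set c := eval (Projectivization.rep y) F / eval (Projectivization.rep y) G with hc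
    refine Submodule.mem_sup.mpr ⟨F - c • G, ?_, c • G, ?_, sub_add_cancel F (c • G)⟩
    · rw [mem_gV]
      constructor
      · have h2 := hGhom.C_mul c
        rw [← smul_eq_C_mul] at h2
        exact hF.1.sub h2
      · intro P hP
        rw [map_sub, smul_eval]
        by_cases hPy : P = y
        · subst hPy
          rw [hc, div_mul_cancel₀ _ hGy, sub_self]
        · have hPΓ : P ∈ Γ₀ \ {x, y} := by
            simp only [Set.mem_diff, Set.mem_insert_iff, Set.mem_singleton_iff] at hP ⊢
            tauto
          have hPy' : P ∈ Γ₀ \ {y} := ⟨hP.1, hPy⟩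
          rw [hF.2 P hPΓ, hGvan P (hfin2.mem_toFinset.mpr hPy'), mul_zero, sub_zero]
    · exact Submodule.smul_mem _ c hGmem
  · have mono : ∀ Γ Γ' : Set (Projectivization k (Fin (n + 1) → k)), Γ ⊆ Γ' →
        gradedVanishing k n Γ' ℓ ≤ gradedVanishing k n Γ ℓ := fun Γ Γ' hsub F hF =>
      mem_gV.mpr ⟨(mem_gV.mp hF).1, fun P hP => (mem_gV.mp hF).2 P (hsub hP)⟩
    refine sup_le (mono _ _ (Set.diff_subset_diff_right ?_))
      (mono _ _ (Set.diff_subset_diff_right ?_)) <;> simp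
end
end

section
/- Let Γ ⊆ Pⁿ be a finite set of exactly mn points in linearly general position for some integer m ≥ 3, and let F = h₁⋯h_{m+1} ∈ Φ(Γ)_{m+1} be a product of m+1 nonzero linear forms vanishing on Γ such that μ_Γ(F) = mn−1, i.e. for some i the product of the m factors other than h_i vanishes at exactly mn−1 points of Γ. Then F lies in the k-linear span of S₁Φ(Γ)_m = { hG : h ∈ S₁ \ {0}, G ∈ Φ(Γ)_m }. -/
open MvPolynomial

noncomputable section

namespace MuAux
variable {k : Type*} [Field k] {n : ℕ}

/-- the linear polynomial with coefficient vector `w` -/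
def lin (w : Fin (n+1) → k) : MvPolynomial (Fin (n+1)) k := ∑ i, C (w i) * X i

lemma lin_isHomogeneous (w : Fin (n+1) → k) : (lin w).IsHomogeneous 1 :=
  IsHomogeneous.sum _ _ _ (fun i _ => isHomogeneous_C_mul_X (w i) i)

/-- the dot-product linear map -/
def dotL (w : Fin (n+1) → k) : (Fin (n+1) → k) →ₗ[k] k :=
  ∑ i, w i • LinearMap.proj i

lemma dotL_apply (w v : Fin (n+1) → k) : dotL w v = ∑ i, w i * v i := by
  simp [dotL, LinearMap.sum_apply]

lemma eval_lin (w v : Fin (n+1) → k) : eval v (lin w) = dotL w v := by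
  simp [lin, dotL_apply]

lemma lin_smul (c : k) (w : Fin (n+1) → k) : lin (c • w) = c • lin w := by
  simp only [lin, Finset.smul_sum]
  refine Finset.sum_congr rfl fun i _ => ?_
  rw [smul_eq_C_mul, Pi.smul_apply, smul_eq_mul, ← mul_assoc, ← C_mul]

lemma lin_sum {ι : Type*} (s : Finset ι) (w : ι → Fin (n+1) → k) :
    lin (∑ j ∈ s, w j) = ∑ j ∈ s, lin (w j) := by
  simp only [lin]
  rw [Finset.sum_comm]
  refine Finset.sum_congr rfl fun i _ => ?_
  rw [Finset.sum_apply, map_sum, Finset.sum_mul]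

lemma Finsupp.eq_single_of_degree_one {m : Fin (n+1) →₀ ℕ}
    (hm : Finsupp.degree m = 1) : ∃ i, m = Finsupp.single i 1 := by
  classical
  have hne : m.support.Nonempty := by
    rcases Finset.eq_empty_or_nonempty m.support with h | h
    · exfalso
      have : m = 0 := by simpa [Finsupp.support_eq_empty] using h
      rw [this] at hm
      simp [Finsupp.degree] at hm
    · exact h
  obtain ⟨i, hi⟩ := hne
  have hmi : 1 ≤ m i := Nat.one_le_iff_ne_zero.2 (Finsupp.mem_support_iff.1 hi)
  have hsum : ∑ j ∈ m.support.erase i, m j + m i = 1 := by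
    rw [Finset.sum_erase_add _ _ hi]; exact hm
  have h0 : ∑ j ∈ m.support.erase i, m j = 0 := by omega
  have hmi1 : m i = 1 := by omega
  refine ⟨i, Finsupp.ext fun j => ?_⟩
  by_cases hji : j = i
  · subst hji; simp [hmi1]
  · rw [Finsupp.single_apply, if_neg (Ne.symm hji)]
    by_cases hjs : j ∈ m.support
    · have := Finset.sum_eq_zero_iff.1 h0 j (Finset.mem_erase.2 ⟨hji, hjs⟩)
      exact this
    · simpa using (Finsupp.notMem_support_iff.1 hjs)

/-- Every homogeneous polynomial of degree 1 equals `lin` of its coefficient vector. -/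
lemma eq_lin_of_isHomogeneous_one {p : MvPolynomial (Fin (n+1)) k}
    (hp : p.IsHomogeneous 1) :
    p = lin (fun i => coeff (Finsupp.single i 1) p) := by
  classical
  apply MvPolynomial.ext
  intro m
  have hcl : coeff m (lin (fun i => coeff (Finsupp.single i 1) p))
      = ∑ i, coeff (Finsupp.single i 1) p * coeff m (X i : MvPolynomial (Fin (n+1)) k) := by
    simp [lin, coeff_sum, coeff_C_mul]
  by_cases hd : Finsupp.degree m = 1
  · obtain ⟨i, rfl⟩ := Finsupp.eq_single_of_degree_one hd
    rw [hcl, Finset.sum_eq_single i]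
    · simp [coeff_X']
    · intro j _ hji
      rw [coeff_X', if_neg, mul_zero]
      intro hc
      exact hji (Finsupp.single_left_injective (one_ne_zero (α := ℕ)) hc)
    · intro hc; exact absurd (Finset.mem_univ i) hc
  · rw [hp.coeff_eq_zero hd, hcl, Finset.sum_eq_zero]
    intro j _
    rw [coeff_X', if_neg, mul_zero]
    intro hc
    exact hd (by rw [← hc]; exact Finsupp.degree_single _ _)

lemma dotL_single (w : Fin (n+1) → k) (i : Fin (n+1)) :
    dotL w (Pi.single i 1) = w i := by
  rw [dotL_apply, Finset.sum_eq_single i] <;>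
    simp +contextual [Pi.single_apply]

lemma eval_lin_coord (φ : (Fin (n+1) → k) →ₗ[k] k)
    (v : Fin (n+1) → k) :
    eval v (lin (fun i => φ (Pi.single i 1))) = φ v := by
  rw [eval_lin, dotL_apply, LinearMap.pi_apply_eq_sum_univ φ v]
  refine Finset.sum_congr rfl fun i _ => ?_
  rw [smul_eq_mul, mul_comm]
  congr 1
  exact congrArg φ (by funext j; rw [Pi.single_apply]; exact if_congr eq_comm rfl rfl)

/-- decomposition of a degree-1 homogeneous polynomial along a basis -/
lemma homog1_decomp {ι : Type*} [Fintype ι] (B : Module.Basis ι k (Fin (n+1) → k))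
    {e : MvPolynomial (Fin (n+1)) k} (he : e.IsHomogeneous 1) :
    e = ∑ j, (eval (B j) e) • lin (fun i => B.coord j (Pi.single i 1)) := by
  classical
  set w : Fin (n+1) → k := fun i => coeff (Finsupp.single i 1) e with hw
  have hlin : e = lin w := eq_lin_of_isHomogeneous_one he
  have key : ∀ x : Fin (n+1) → k, dotL w x = ∑ j, (B.coord j x) * dotL w (B j) := by
    intro x
    conv_lhs => rw [← B.sum_repr x]
    rw [map_sum]
    exact Finset.sum_congr rfl fun j _ => by
      rw [map_smul, smul_eq_mul, Module.Basis.coord_apply]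
  have hvec : w = ∑ j, (eval (B j) e) • (fun i => B.coord j (Pi.single i 1)) := by
    funext i
    have hkey := key (Pi.single i 1)
    rw [dotL_single] at hkey
    rw [hkey, Finset.sum_apply]
    refine Finset.sum_congr rfl fun j _ => ?_
    rw [Pi.smul_apply, smul_eq_mul, hlin, eval_lin, mul_comm]
  conv_lhs => rw [hlin, hvec]
  rw [lin_sum]
  exact Finset.sum_congr rfl fun j _ => lin_smul _ _

/-- Workhorse 1: a dual linear form for a finite independent family. -/
lemma exists_dual_lin {ι : Type*} [Fintype ι] [DecidableEq ι] {v : ι → (Fin (n+1) → k)}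
    (li : LinearIndependent k v) (i₀ : ι) :
    ∃ w : Fin (n+1) → k,
      ∀ j, eval (v j) (lin w) = if j = i₀ then 1 else 0 := by
  classical
  have li' : LinearIndepOn k id (Set.range v) :=
    (linearIndepOn_id_range_iff li.injective).2 li
  let B := Module.Basis.extend li'
  have hmem : v i₀ ∈ li'.extend (Set.subset_univ _) :=
    li'.subset_extend _ ⟨i₀, rfl⟩
  refine ⟨fun i => B.coord ⟨v i₀, hmem⟩ (Pi.single i 1), fun j => ?_⟩
  rw [eval_lin_coord]
  have hjm : v j ∈ li'.extend (Set.subset_univ _) := li'.subset_extend _ ⟨j, rfl⟩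
  have hBj : v j = B ⟨v j, hjm⟩ := (Module.Basis.extend_apply_self li' ⟨v j, hjm⟩).symm
  rw [hBj, Module.Basis.coord_apply, Module.Basis.repr_self]
  by_cases hj : j = i₀
  · subst hj; simp
  · rw [Finsupp.single_apply, if_neg, if_neg hj]
    intro hc
    exact hj (li.injective (by simpa using congrArg Subtype.val hc))

/-- Workhorse 2: decomposition of a degree-1 form vanishing at `v i₀` into
"dual-like" forms, each vanishing at `v i₀` and at all but one other member. -/
lemma homog1_mem_span_dual {ι : Type*} [Fintype ι] [DecidableEq ι]
    {v : ι → (Fin (n+1) → k)} (li : LinearIndependent k v) (i₀ R₀ : ι)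
    (hR₀ : R₀ ≠ i₀) {e : MvPolynomial (Fin (n+1)) k} (he : e.IsHomogeneous 1)
    (he0 : eval (v i₀) e = 0) :
    e ∈ Submodule.span k {u : MvPolynomial (Fin (n+1)) k |
      u ≠ 0 ∧ u.IsHomogeneous 1 ∧ eval (v i₀) u = 0 ∧
      ∃ R, R ≠ i₀ ∧ ∀ j, j ≠ i₀ → j ≠ R → eval (v j) u = 0} := by
  classical
  have li' : LinearIndepOn k id (Set.range v) :=
    (linearIndepOn_id_range_iff li.injective).2 li
  let B := Module.Basis.extend li'
  haveI : Fintype ↥(li'.extend (Set.subset_univ _)) :=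
    FiniteDimensional.fintypeBasisIndex B
  rw [homog1_decomp B he]
  refine Submodule.sum_mem _ fun j _ => ?_
  -- the coordinate form for index j
  set u : MvPolynomial (Fin (n+1)) k := lin (fun i => B.coord j (Pi.single i 1)) with hu
  have hevalu : ∀ x, eval x u = B.coord j x := fun x => eval_lin_coord _ x
  have hmem : ∀ i : ι, v i ∈ li'.extend (Set.subset_univ _) :=
    fun i => li'.subset_extend _ ⟨i, rfl⟩
  have hevalv : ∀ i : ι, eval (v i) u = if (⟨v i, hmem i⟩ : _) = j then 1 else 0 := by
    intro i
    rw [hevalu]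
    have hBi : v i = B ⟨v i, hmem i⟩ := (Module.Basis.extend_apply_self li' ⟨v i, hmem i⟩).symm
    rw [show (B.coord j) (v i) = (B.coord j) (B ⟨v i, hmem i⟩) from congrArg _ hBi,
      Module.Basis.coord_apply, Module.Basis.repr_self, Finsupp.single_apply]
  by_cases hj0 : (⟨v i₀, hmem i₀⟩ : _) = j
  · -- the coefficient vanishes
    have hBj : B j = v i₀ := by
      rw [← hj0]
      exact Module.Basis.extend_apply_self li' ⟨v i₀, hmem i₀⟩
    rw [hBj, he0, zero_smul]
    exact Submodule.zero_mem _
  · refine Submodule.smul_mem _ _ (Submodule.subset_span ?_)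
    have hune : u ≠ 0 := by
      intro hc
      have h1 : eval (B j) u = 1 := by
        rw [hevalu, Module.Basis.coord_apply, Module.Basis.repr_self, Finsupp.single_apply, if_pos rfl]
      rw [hc] at h1; simp at h1
    refine ⟨hune, lin_isHomogeneous _, ?_, ?_⟩
    · rw [hevalv i₀, if_neg hj0]
    · by_cases hrange : ∃ R : ι, v R = (j : Fin (n+1) → k)
      · obtain ⟨R, hR⟩ := hrange
        have hRne : R ≠ i₀ := by
          intro hc; subst hc
          exact hj0 (Subtype.ext hR)
        refine ⟨R, hRne, fun y hy hyR => ?_⟩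
        rw [hevalv y, if_neg]
        intro hc
        exact hyR (li.injective (by rw [hR]; exact congrArg Subtype.val hc))
      · refine ⟨R₀, hR₀, fun y _ _ => ?_⟩
        rw [hevalv y, if_neg]
        intro hc
        exact hrange ⟨y, congrArg Subtype.val hc⟩

/-- Phi-membership via a list of nonzero linear factors whose product vanishes on `Γ`. -/
lemma prod_mem_Phi_of_list {Γ : Set (Projectivization k (Fin (n+1) → k))} {ℓ : ℕ}
    (L : List (MvPolynomial (Fin (n+1)) k)) (hlen : L.length = ℓ)
    (h1 : ∀ p ∈ L, p ≠ 0 ∧ p.IsHomogeneous 1)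
    (hvan : ∀ P ∈ Γ, eval (Projectivization.rep P) L.prod = 0) :
    L.prod ∈ Phi k n Γ ℓ := by
  subst hlen
  have hprod : L.prod = ∏ i, L.get i := by
    conv_lhs => rw [← List.ofFn_get L]
    exact List.prod_ofFn
  refine ⟨⟨?_, hvan⟩, L.get, fun i => h1 _ (L.get_mem ..), hprod⟩
  rw [SetLike.mem_coe, mem_homogeneousSubmodule] at *
  rw [hprod]
  have := IsHomogeneous.prod Finset.univ L.get (fun _ => 1)
    (fun i _ => (h1 _ (L.get_mem ..)).2)
  simpa using this

/-- A nonzero degree-1 form cannot vanish on `n+1` linearly independent vectors. -/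
lemma eq_zero_of_vanish_indep {ι : Type*} [Fintype ι] {v : ι → (Fin (n+1) → k)}
    (li : LinearIndependent k v) (hcard : Fintype.card ι = n + 1)
    {p : MvPolynomial (Fin (n+1)) k} (hp : p.IsHomogeneous 1)
    (hv : ∀ i, eval (v i) p = 0) : p = 0 := by
  classical
  haveI : Nonempty ι := Fintype.card_pos_iff.1 (by omega)
  have hfr : Fintype.card ι = Module.finrank k (Fin (n+1) → k) := by
    rw [Module.finrank_pi, Fintype.card_fin, hcard]
  let B := basisOfLinearIndependentOfCardEqFinrank li hfr
  have hB : ⇑B = v := coe_basisOfLinearIndependentOfCardEqFinrank li hfr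
  set w : Fin (n+1) → k := fun i => coeff (Finsupp.single i 1) p with hw
  have hlin : p = lin w := eq_lin_of_isHomogeneous_one hp
  have hw0 : w = 0 := by
    funext i
    have h1 : dotL w (Pi.single i 1) = w i := dotL_single w i
    rw [← h1, ← B.sum_repr (Pi.single i 1), map_sum]
    rw [Finset.sum_eq_zero, Pi.zero_apply]
    intro j _
    rw [map_smul, smul_eq_mul]
    have : dotL w (B j) = 0 := by
      rw [← eval_lin, ← hlin, hB]
      exact hv j
    rw [this, mul_zero]
  rw [hlin, hw0]
  simp [lin]

end MuAux

open MuAux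

/-- Lemma: let `Γ ⊆ ℙⁿ` consist of `mn` points in linearly general position, `m ≥ 3`,
and let `F = h₁⋯h_{m+1} ∈ Φ(Γ)_{m+1}` with `μ_Γ(F) = mn-1`.  Then `F` lies in the
`k`-linear span of `S₁Φ(Γ)_m`. -/
theorem mu_eq_d_sub_one_case (k : Type*) [Field k] [IsAlgClosed k] (n m : ℕ) (hn : 1 ≤ n)
    (hm : 3 ≤ m) (Γ : Set (Projectivization k (Fin (n + 1) → k)))
    (hfin : Γ.Finite) (hcard : Γ.ncard = m * n) (hlgp : LinGenPos k n Γ)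
    (h : Fin (m + 1) → MvPolynomial (Fin (n + 1)) k)
    (hh : ∀ i, h i ≠ 0 ∧ (h i).IsHomogeneous 1)
    (hF : (∏ i, h i) ∈ gradedVanishing k n Γ (m + 1))
    (hmu : (Finset.univ.sup fun i =>
        lambdaGamma k n Γ (∏ j ∈ Finset.univ.erase i, h j)) = m * n - 1) :
    (∏ i, h i) ∈ Submodule.span k (S1Phi k n Γ m) := by
  classical
  obtain ⟨i₀, -, hsup⟩ := Finset.exists_mem_eq_sup (Finset.univ : Finset (Fin (m+1)))
    ⟨0, Finset.mem_univ 0⟩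
    (fun i => lambdaGamma k n Γ (∏ j ∈ Finset.univ.erase i, h j))
  rw [hsup] at hmu
  set G₀ := ∏ j ∈ Finset.univ.erase i₀, h j with hG₀def
  have h3n : 3 * n ≤ m * n := Nat.mul_le_mul_right n hm
  have hmn3 : 3 ≤ m * n := by omega
  -- find the special point P
  set Sv := {x ∈ Γ | eval (Projectivization.rep x) G₀ = 0} with hSvdef
  have hSnc : Sv.ncard = m * n - 1 := hmu
  have hSvΓ : Sv ⊆ Γ := fun x hx => hx.1
  obtain ⟨P, hPΓ, hPS⟩ : ∃ P ∈ Γ, P ∉ Sv := by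
    by_contra hc
    push_neg at hc
    have : Sv = Γ := Set.Subset.antisymm hSvΓ hc
    rw [this, hcard] at hSnc
    omega
  have hSv : Sv = Γ \ {P} := by
    apply Set.eq_of_subset_of_ncard_le
    · intro x hx
      exact ⟨hx.1, fun hc => hPS (by rwa [Set.mem_singleton_iff.1 hc] at hx)⟩
    · rw [Set.ncard_diff_singleton_of_mem hPΓ, hcard, hSnc]
    · exact hfin.diff
  have hvan : ∀ x ∈ Γ, x ≠ P → eval (Projectivization.rep x) G₀ = 0 := by
    intro x hx hxP
    have : x ∈ Sv := by rw [hSv]; exact ⟨hx, hxP⟩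
    exact this.2
  have hG₀P : eval (Projectivization.rep P) G₀ ≠ 0 := fun hc => hPS ⟨hPΓ, hc⟩
  have hFP : eval (Projectivization.rep P) (∏ i, h i) = 0 := (Submodule.mem_inf.1 hF).2 P hPΓ
  have hsplit0 : (∏ i, h i) = h i₀ * G₀ :=
    (Finset.mul_prod_erase _ _ (Finset.mem_univ i₀)).symm
  have he0 : eval (Projectivization.rep P) (h i₀) = 0 := by
    rw [hsplit0, map_mul] at hFP
    rcases mul_eq_zero.1 hFP with hc | hc
    · exact hc
    · exact absurd hc hG₀P
  have hzero : ∀ x ∈ Γ, x ≠ P → ∃ j, j ≠ i₀ ∧ eval (Projectivization.rep x) (h j) = 0 := by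
    intro x hx hxP
    have hx0 := hvan x hx hxP
    rw [hG₀def, map_prod] at hx0
    obtain ⟨j, hjmem, hj0⟩ := Finset.prod_eq_zero_iff.1 hx0
    exact ⟨j, (Finset.mem_erase.1 hjmem).1, hj0⟩
  -- finset versions
  set Γfin := hfin.toFinset with hΓfindef
  have hmemΓfin : ∀ x, x ∈ Γfin ↔ x ∈ Γ := fun x => hfin.mem_toFinset
  have hΓfincard : Γfin.card = m * n := by
    rw [hΓfindef, ← Set.ncard_eq_toFinset_card _ hfin]
    exact hcard
  have hPfin : P ∈ Γfin := (hmemΓfin P).2 hPΓ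
  -- exclusive sets and pigeonhole
  set E : Fin (m+1) → Finset (Projectivization k (Fin (n + 1) → k)) := fun i =>
    Γfin.filter (fun x => x ≠ P ∧ ∀ j, j ≠ i₀ → j ≠ i → eval (Projectivization.rep x) (h j) ≠ 0)
    with hEdef
  obtain ⟨i₁, hi₁0, hE₁card⟩ : ∃ i₁, i₁ ≠ i₀ ∧ (E i₁).card + 1 ≤ n := by
    by_contra hc
    push_neg at hc
    have hEdisj : ∀ i ∈ Finset.univ.erase i₀, ∀ i' ∈ Finset.univ.erase i₀,
        i ≠ i' → Disjoint (E i) (E i') := by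
      intro i hi i' hi' hne'
      rw [Finset.disjoint_left]
      intro x hxi hxi'
      rw [hEdef, Finset.mem_filter] at hxi hxi'
      obtain ⟨j, hj0, hj⟩ := hzero x ((hmemΓfin x).1 hxi.1) hxi.2.1
      rcases eq_or_ne j i with rfl | hji
      · exact hxi'.2.2 j hj0 hne' hj
      · exact hxi.2.2 j hj0 hji hj
    have hEsub : ∀ i ∈ Finset.univ.erase i₀, E i ⊆ Γfin.erase P := by
      intro i _ x hx
      rw [hEdef, Finset.mem_filter] at hx
      exact Finset.mem_erase.2 ⟨hx.2.1, hx.1⟩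
    have hsum : ∑ i ∈ Finset.univ.erase i₀, (E i).card ≤ (Γfin.erase P).card := by
      rw [← Finset.card_biUnion hEdisj]
      exact Finset.card_le_card (Finset.biUnion_subset.2 hEsub)
    have hcard' : (Γfin.erase P).card = m * n - 1 := by
      rw [Finset.card_erase_of_mem hPfin, hΓfincard]
    have hlow : (Finset.univ.erase i₀).card * n ≤ ∑ i ∈ Finset.univ.erase i₀, (E i).card := by
      calc (Finset.univ.erase i₀).card * n
          = ∑ _i ∈ Finset.univ.erase i₀, n := by rw [Finset.sum_const, smul_eq_mul]
        _ ≤ ∑ i ∈ Finset.univ.erase i₀, (E i).card :=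
            Finset.sum_le_sum (fun i hi => by
              have := hc i (Finset.mem_erase.1 hi).1; omega)
    have hm' : (Finset.univ.erase i₀).card = m := by
      rw [Finset.card_erase_of_mem (Finset.mem_univ i₀), Finset.card_univ, Fintype.card_fin]
      omega
    rw [hm'] at hlow
    omega
  have hi₁mem : i₁ ∈ Finset.univ.erase i₀ := Finset.mem_erase.2 ⟨hi₁0, Finset.mem_univ i₁⟩
  set J := (Finset.univ.erase i₀).erase i₁ with hJdef
  have hJcard : J.card = m - 1 := by
    rw [hJdef, Finset.card_erase_of_mem hi₁mem, Finset.card_erase_of_mem (Finset.mem_univ i₀),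
      Finset.card_univ, Fintype.card_fin]
    omega
  have hmemJ : ∀ j, j ∈ J ↔ (j ≠ i₁ ∧ j ≠ i₀) := by
    intro j
    rw [hJdef, Finset.mem_erase, Finset.mem_erase]
    simp [Finset.mem_univ]
  set G₂ := ∏ j ∈ J, h j with hG₂def
  have hsplit : (∏ i, h i) = h i₀ * (h i₁ * G₂) := by
    rw [hsplit0, hG₀def, ← Finset.mul_prod_erase _ _ hi₁mem]
  -- basic facts about E i₁
  have hE₁i₁ : ∀ x ∈ E i₁, eval (Projectivization.rep x) (h i₁) = 0 := by
    intro x hx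
    rw [hEdef, Finset.mem_filter] at hx
    obtain ⟨j, hj0, hj⟩ := hzero x ((hmemΓfin x).1 hx.1) hx.2.1
    rcases eq_or_ne j i₁ with rfl | hji
    · exact hj
    · exact absurd hj (hx.2.2 j hj0 hji)
  have hnotE : ∀ x ∈ Γ, x ≠ P → x ∉ E i₁ →
      ∃ j ∈ J, eval (Projectivization.rep x) (h j) = 0 := by
    intro x hxΓ hxP hxE
    by_contra hc
    push_neg at hc
    apply hxE
    rw [hEdef, Finset.mem_filter]
    refine ⟨(hmemΓfin x).2 hxΓ, hxP, fun j hj0 hj1 => ?_⟩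
    exact hc j ((hmemJ j).2 ⟨hj1, hj0⟩)
  have hE₁Γ : ∀ x ∈ E i₁, x ∈ Γ := by
    intro x hx
    rw [hEdef, Finset.mem_filter] at hx
    exact (hmemΓfin x).1 hx.1
  have hE₁P : ∀ x ∈ E i₁, x ≠ P := by
    intro x hx
    rw [hEdef, Finset.mem_filter] at hx
    exact hx.2.1
  -- find j₂ and a point of Z(j₂)
  obtain ⟨j₂, hj₂J, R₀, hR₀e, hR₀0⟩ :
      ∃ j₂ ∈ J, ∃ R₀ ∈ Γfin.erase P, eval (Projectivization.rep R₀) (h j₂) = 0 := by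
    by_contra hc
    push_neg at hc
    have hsub : Γfin.erase P ⊆ E i₁ := by
      intro x hx
      rw [hEdef, Finset.mem_filter]
      refine ⟨(Finset.mem_erase.1 hx).2, (Finset.mem_erase.1 hx).1, fun j hj0 hj1 => ?_⟩
      exact hc j ((hmemJ j).2 ⟨hj1, hj0⟩) x hx
    have hle := Finset.card_le_card hsub
    rw [Finset.card_erase_of_mem hPfin, hΓfincard] at hle
    omega
  set Zfin := (Γfin.erase P).filter
    (fun x => eval (Projectivization.rep x) (h j₂) = 0) with hZdef
  have hR₀Z : R₀ ∈ Zfin := by rw [hZdef, Finset.mem_filter]; exact ⟨hR₀e, hR₀0⟩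
  have hZprop : ∀ R ∈ Zfin, R ∈ Γ ∧ R ≠ P ∧ eval (Projectivization.rep R) (h j₂) = 0 := by
    intro R hR
    rw [hZdef, Finset.mem_filter, Finset.mem_erase] at hR
    exact ⟨(hmemΓfin R).1 hR.1.2, hR.1.1, hR.2⟩
  have hZmem : ∀ x ∈ Γ, x ≠ P → eval (Projectivization.rep x) (h j₂) = 0 → x ∈ Zfin := by
    intro x hx hxP hx0
    rw [hZdef, Finset.mem_filter, Finset.mem_erase]
    exact ⟨⟨hxP, (hmemΓfin x).2 hx⟩, hx0⟩
  have hZcard : Zfin.card ≤ n := by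
    by_contra hc
    push_neg at hc
    obtain ⟨Tf, hTsub, hTcard⟩ := Finset.exists_subset_card_eq (show n + 1 ≤ Zfin.card from hc)
    have hTΓ : ↑Tf ⊆ Γ := fun x hx => (hZprop x (hTsub hx)).1
    have li := hlgp Tf hTΓ (le_of_eq hTcard)
    apply (hh j₂).1
    apply eq_zero_of_vanish_indep li (by rw [Fintype.card_coe, hTcard]) (hh j₂).2
    intro i
    exact (hZprop _ (hTsub i.2)).2.2
  -- the Φ-element builder
  have hPhiden : ∀ ℓ : MvPolynomial (Fin (n+1)) k, ℓ ≠ 0 → ℓ.IsHomogeneous 1 →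
      eval (Projectivization.rep P) ℓ = 0 →
      (∀ x ∈ E i₁, eval (Projectivization.rep x) ℓ = 0) →
      ℓ * G₂ ∈ Phi k n Γ m := by
    intro ℓ hℓ0 hℓh hℓP hℓE
    have hprodeq : (ℓ :: J.toList.map h).prod = ℓ * G₂ := by
      rw [List.prod_cons, Finset.prod_map_toList]
    rw [← hprodeq]
    apply prod_mem_Phi_of_list
    · simp only [List.length_cons, List.length_map, Finset.length_toList, hJcard]
      omega
    · intro p hp
      rcases List.mem_cons.1 hp with rfl | hp'
      · exact ⟨hℓ0, hℓh⟩
      · obtain ⟨j, hjJ, rfl⟩ := List.mem_map.1 hp'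
        exact hh j
    · intro Q hQ
      rw [hprodeq, map_mul]
      by_cases hQP : Q = P
      · subst hQP; rw [hℓP, zero_mul]
      by_cases hQE : Q ∈ E i₁
      · rw [hℓE Q hQE, zero_mul]
      · obtain ⟨j, hjJ, hj0⟩ := hnotE Q hQ hQP hQE
        have hzero2 : eval (Projectivization.rep Q) G₂ = 0 := by
          rw [hG₂def, map_prod]
          exact Finset.prod_eq_zero hjJ hj0
        rw [hzero2, mul_zero]
  -- key per-term lemma
  have hkey : ∀ u : MvPolynomial (Fin (n+1)) k, u ≠ 0 → u.IsHomogeneous 1 →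
      eval (Projectivization.rep P) u = 0 →
      (∃ R ∈ Zfin, ∀ y ∈ Zfin, y ≠ R → eval (Projectivization.rep y) u = 0) →
      u * (h i₁ * G₂) ∈ Submodule.span k (S1Phi k n Γ m) := by
    rintro u hu0 huh huP ⟨R, hRZ, huZ⟩
    obtain ⟨hRΓ, hRP, hRj₂⟩ := hZprop R hRZ
    set s2 : Finset _ := insert R (insert P (E i₁)) with hs2
    have hs2Γ : ↑s2 ⊆ Γ := by
      intro x hx
      simp only [hs2, Finset.coe_insert, Set.mem_insert_iff, Finset.mem_coe] at hx
      rcases hx with rfl | rfl | hx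
      · exact hRΓ
      · exact hPΓ
      · exact hE₁Γ x hx
    have hs2card : s2.card ≤ n + 1 := by
      rw [hs2]
      have h1 := Finset.card_insert_le R (insert P (E i₁))
      have h2 := Finset.card_insert_le P (E i₁)
      omega
    have li2 := hlgp s2 hs2Γ hs2card
    have hRs2 : R ∈ s2 := Finset.mem_insert_self _ _
    obtain ⟨w, hw⟩ := exists_dual_lin li2 ⟨R, hRs2⟩
    set ℓ := lin w with hℓdef
    have hℓR : eval (Projectivization.rep R) ℓ = 1 := by
      have := hw ⟨R, hRs2⟩
      rwa [if_pos rfl] at this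
    have hℓs2 : ∀ y, ∀ hy : y ∈ s2, y ≠ R → eval (Projectivization.rep y) ℓ = 0 := by
      intro y hy hyR
      have := hw ⟨y, hy⟩
      rwa [if_neg (fun hc => hyR (congrArg Subtype.val hc))] at this
    have hℓ0 : ℓ ≠ 0 := fun hc => by rw [hc] at hℓR; simp at hℓR
    have hℓP : eval (Projectivization.rep P) ℓ = 0 :=
      hℓs2 P (Finset.mem_insert_of_mem (Finset.mem_insert_self _ _)) (Ne.symm hRP)
    have hℓE : ∀ x ∈ E i₁, eval (Projectivization.rep x) ℓ = 0 := by
      intro x hx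
      refine hℓs2 x (Finset.mem_insert_of_mem (Finset.mem_insert_of_mem hx)) ?_
      intro hc
      subst hc
      rw [hEdef, Finset.mem_filter] at hx
      exact hx.2.2 j₂ ((hmemJ j₂).1 hj₂J).2 ((hmemJ j₂).1 hj₂J).1 hRj₂
    set β := eval (Projectivization.rep R) (h i₁) with hβdef
    set c := h i₁ - C β * ℓ with hcdef
    have hceval : ∀ v, eval v c = eval v (h i₁) - β * eval v ℓ := by
      intro v; rw [hcdef]; simp
    have hΦℓ : ℓ * G₂ ∈ Phi k n Γ m := hPhiden ℓ hℓ0 (lin_isHomogeneous w) hℓP hℓE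
    have hterm1 : u * (ℓ * G₂) ∈ S1Phi k n Γ m := ⟨u, ℓ * G₂, hu0, huh, hΦℓ, rfl⟩
    have hky : h i₁ = C β * ℓ + c := by rw [hcdef]; ring
    rcases eq_or_ne c 0 with hc0 | hc0
    · have heq : u * (h i₁ * G₂) = β • (u * (ℓ * G₂)) := by
        rw [hky, hc0, add_zero, smul_eq_C_mul]; ring
      rw [heq]
      exact Submodule.smul_mem _ _ (Submodule.subset_span hterm1)
    · have hsplitu : u * (h i₁ * G₂) = β • (u * (ℓ * G₂)) + u * (c * G₂) := by
        rw [hky, smul_eq_C_mul]; ring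
      rw [hsplitu]
      refine Submodule.add_mem _
        (Submodule.smul_mem _ _ (Submodule.subset_span hterm1)) ?_
      have hGsplit : G₂ = h j₂ * ∏ j ∈ J.erase j₂, h j :=
        (Finset.mul_prod_erase _ _ hj₂J).symm
      have hchom : c.IsHomogeneous 1 := by
        rw [hcdef]
        exact (hh i₁).2.sub ((lin_isHomogeneous w).C_mul β)
      have hD : (u :: c :: (J.erase j₂).toList.map h).prod ∈ Phi k n Γ m := by
        apply prod_mem_Phi_of_list
        · simp only [List.length_cons, List.length_map, Finset.length_toList,
            Finset.card_erase_of_mem hj₂J, hJcard]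
          omega
        · intro p hp
          rcases List.mem_cons.1 hp with rfl | hp'
          · exact ⟨hu0, huh⟩
          rcases List.mem_cons.1 hp' with rfl | hp''
          · exact ⟨hc0, hchom⟩
          · obtain ⟨j, hjJ, rfl⟩ := List.mem_map.1 hp''
            exact hh j
        · intro Q hQΓ
          rw [List.prod_cons, List.prod_cons, Finset.prod_map_toList, map_mul, map_mul]
          by_cases hQP : Q = P
          · subst hQP; rw [huP, zero_mul]
          by_cases hQE : Q ∈ E i₁
          · have hcQ : eval (Projectivization.rep Q) c = 0 := by
              rw [hceval, hE₁i₁ Q hQE, hℓE Q hQE, mul_zero, sub_zero]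
            rw [hcQ, zero_mul, mul_zero]
          by_cases hQR : Q = R
          · subst hQR
            have hcR : eval (Projectivization.rep Q) c = 0 := by
              rw [hceval, hℓR, mul_one, hβdef, sub_self]
            rw [hcR, zero_mul, mul_zero]
          · obtain ⟨j, hjJ, hj0⟩ := hnotE Q hQΓ hQP hQE
            by_cases hjj₂ : j = j₂
            · subst hjj₂
              have hQZ : Q ∈ Zfin := hZmem Q hQΓ hQP hj0
              rw [huZ Q hQZ hQR, zero_mul]
            · have hzero2 : eval (Projectivization.rep Q)
                  (∏ j ∈ J.erase j₂, h j) = 0 := by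
                rw [map_prod]
                exact Finset.prod_eq_zero (Finset.mem_erase.2 ⟨hjj₂, hjJ⟩) hj0
              rw [hzero2, mul_zero, mul_zero]
      refine Submodule.subset_span ⟨h j₂, _, (hh j₂).1, (hh j₂).2, hD, ?_⟩
      rw [List.prod_cons, List.prod_cons, Finset.prod_map_toList, hGsplit]
      ring
  -- decompose h i₀ and conclude
  set sfin : Finset _ := insert P Zfin with hsfindef
  have hsfinΓ : ↑sfin ⊆ Γ := by
    intro x hx
    simp only [hsfindef, Finset.coe_insert, Set.mem_insert_iff, Finset.mem_coe] at hx
    rcases hx with rfl | hx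
    · exact hPΓ
    · exact (hZprop x hx).1
  have hsfincard : sfin.card ≤ n + 1 := by
    rw [hsfindef]
    have := Finset.card_insert_le P Zfin
    omega
  have lis := hlgp sfin hsfinΓ hsfincard
  have hPmem : P ∈ sfin := Finset.mem_insert_self _ _
  have hR₀mem : R₀ ∈ sfin := Finset.mem_insert_of_mem hR₀Z
  have hR₀P : R₀ ≠ P := (hZprop R₀ hR₀Z).2.1
  have hspan := homog1_mem_span_dual lis ⟨P, hPmem⟩ ⟨R₀, hR₀mem⟩
    (fun hc => hR₀P (congrArg Subtype.val hc)) (hh i₀).2 he0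
  rw [hsplit]
  refine Submodule.span_induction
    (p := fun e _ => e * (h i₁ * G₂) ∈ Submodule.span k (S1Phi k n Γ m))
    ?_ ?_ ?_ ?_ hspan
  · intro u hu
    obtain ⟨hu0, huh, huP, Ridx, hRne, hvanu⟩ := hu
    have hRZ : (Ridx : Projectivization k (Fin (n + 1) → k)) ∈ Zfin := by
      rcases Finset.mem_insert.1 Ridx.2 with hc | hc
      · exact absurd (Subtype.ext hc) hRne
      · exact hc
    refine hkey u hu0 huh huP ⟨Ridx, hRZ, fun y hy hyR => ?_⟩
    have hymem : y ∈ sfin := Finset.mem_insert_of_mem hy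
    have hyP : y ≠ P := (hZprop y hy).2.1
    exact hvanu ⟨y, hymem⟩ (fun hc => hyP (congrArg Subtype.val hc))
      (fun hc => hyR (congrArg Subtype.val hc))
  · show (0 : MvPolynomial (Fin (n+1)) k) * (h i₁ * G₂) ∈ _
    rw [zero_mul]; exact Submodule.zero_mem _
  · intro a b _ _ iha ihb
    show (a + b) * (h i₁ * G₂) ∈ _
    rw [add_mul]; exact Submodule.add_mem _ iha ihb
  · intro r a _ iha
    show (r • a) * (h i₁ * G₂) ∈ _
    rw [smul_mul_assoc]; exact Submodule.smul_mem _ _ iha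
end
end
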